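/- arXiv:1307.4155 — 5 statements merged into one kernel-verified Lean document; each statement's English description precedes it below -/
import Mathlib

section
/- For all integers n ≥ 0, the number of overpartitions of 4n+3 is congruent to 0 modulo 8. -/
open PowerSeries Finset

/-- `Σ_{i ∣ m, m > 0} X^m` -/
noncomputable def cgeom (R : Type*) [CommRing R] (i : ℕ) : PowerSeries R :=
  PowerSeries.mk fun m => if 0 < m ∧ i ∣ m then 1 else 0

lemma cgeom_eq {R : Type*} [CommRing R] {i : ℕ} (hi : 0 < i) :
    cgeom R i = X ^ i + X ^ i * cgeom R i := by
  ext m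
  rw [map_add, coeff_X_pow_mul']
  simp only [cgeom, coeff_mk, coeff_X_pow]
  rcases Nat.lt_trichotomy m i with h | h | h
  · have h1 : ¬ (0 < m ∧ i ∣ m) := by
      rintro ⟨h2, h3⟩; exact absurd (Nat.le_of_dvd h2 h3) (by omega)
    rw [if_neg h1, if_neg (by omega), if_neg (by omega), add_zero]
  · subst h
    rw [if_pos ⟨hi, dvd_refl m⟩, if_pos rfl, if_pos le_rfl, if_neg (by omega), add_zero]
  · rw [if_neg (by omega : ¬ m = i), if_pos (by omega : i ≤ m), zero_add]
    by_cases hd : i ∣ m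
    · rw [if_pos ⟨by omega, hd⟩, if_pos ⟨by omega, (Nat.dvd_sub hd (dvd_refl i))⟩]
    · rw [if_neg (by tauto), if_neg ?_]
      rintro ⟨-, h3⟩
      exact hd (by have := Nat.dvd_add h3 (dvd_refl i); rwa [Nat.sub_add_cancel (by omega)] at this)

lemma factor_eq {i : ℕ} (hi : 0 < i) :
    (1 + (X : PowerSeries ℚ) ^ i) * (1 - X ^ i)⁻¹ = 1 + 2 * cgeom ℚ i := by
  have hc : constantCoeff (R := ℚ) (1 - X ^ i) ≠ 0 := by
    rw [map_sub, map_one, map_pow, constantCoeff_X, zero_pow (by omega), sub_zero]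
    exact one_ne_zero
  have key : (1 - (X : PowerSeries ℚ) ^ i) * (1 + 2 * cgeom ℚ i) = 1 + X ^ i := by
    linear_combination (2 : PowerSeries ℚ) * (cgeom_eq (R := ℚ) hi)
  calc (1 + (X : PowerSeries ℚ) ^ i) * (1 - X ^ i)⁻¹
      = ((1 - (X : PowerSeries ℚ) ^ i) * (1 + 2 * cgeom ℚ i)) * (1 - X ^ i)⁻¹ := by rw [key]
    _ = (1 + 2 * cgeom ℚ i) * ((1 - X ^ i) * (1 - X ^ i)⁻¹) := by ring
    _ = 1 + 2 * cgeom ℚ i := by rw [PowerSeries.mul_inv_cancel _ hc, mul_one]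

lemma map_cgeom {R S : Type*} [CommRing R] [CommRing S] (f : R →+* S) (i : ℕ) :
    PowerSeries.map f (cgeom R i) = cgeom S i := by
  ext m
  simp only [coeff_map, cgeom, coeff_mk, apply_ite f, map_one, map_zero]

lemma eight_eq_zero : (8 : PowerSeries (ZMod 8)) = 0 := by
  have h : (8 : PowerSeries (ZMod 8)) = C (R := ZMod 8) (8 : ZMod 8) := (map_ofNat (C (R := ZMod 8)) 8).symm
  rw [h, show (8 : ZMod 8) = 0 from by decide, map_zero]

/-- expansion of `∏ (1 + 2 f k)` modulo 8 -/
lemma expand_mod8 (f : ℕ → PowerSeries (ZMod 8)) (s : Finset ℕ) :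
    ∏ k ∈ s, (1 + 2 * f k)
      = 1 + 2 * ∑ k ∈ s, f k
          + 4 * ∑ k ∈ s, ((∑ j ∈ s.filter (· < k), f j) * f k) := by
  induction s using Finset.induction_on_max with
  | empty => simp
  | insert a s ha ih =>
    have ha' : a ∉ s := fun h => absurd (ha a h) (lt_irrefl a)
    have hfa : (insert a s).filter (· < a) = s := by
      rw [filter_insert, if_neg (lt_irrefl a), filter_true_of_mem ha]
    have hfk : ∀ k ∈ s, (insert a s).filter (· < k) = s.filter (· < k) := by
      intro k hk
      rw [filter_insert, if_neg (by have := ha k hk; omega)]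
    have hW : ∑ k ∈ s, ((∑ j ∈ (insert a s).filter (· < k), f j) * f k)
        = ∑ k ∈ s, ((∑ j ∈ s.filter (· < k), f j) * f k) :=
      Finset.sum_congr rfl (fun k hk => by rw [hfk k hk])
    rw [prod_insert ha', ih, sum_insert ha', sum_insert ha', hfa, hW]
    have h8 := eight_eq_zero
    linear_combination (f a * (∑ k ∈ s, ((∑ j ∈ s.filter (· < k), f j) * f k))) * h8

/-- splitting a symmetric double sum -/
lemma sum_sq_split (r : ℕ → ℕ → ℕ) (hr : ∀ j k, r j k = r k j) (s : Finset ℕ) :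
    ∑ j ∈ s, ∑ k ∈ s, r j k
      = 2 * (∑ k ∈ s, ∑ j ∈ s.filter (· < k), r j k) + ∑ k ∈ s, r k k := by
  induction s using Finset.induction_on_max with
  | empty => simp
  | insert a s ha ih =>
    have ha' : a ∉ s := fun h => absurd (ha a h) (lt_irrefl a)
    have hfa : (insert a s).filter (· < a) = s := by
      rw [filter_insert, if_neg (lt_irrefl a), filter_true_of_mem ha]
    have hfk : ∀ k ∈ s, (insert a s).filter (· < k) = s.filter (· < k) := by
      intro k hk
      rw [filter_insert, if_neg (by have := ha k hk; omega)]
    have h2 : ∑ j ∈ s, ∑ k ∈ insert a s, r j k = ∑ j ∈ s, (r j a + ∑ k ∈ s, r j k) :=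
      Finset.sum_congr rfl (fun j _ => sum_insert ha')
    have h3 : ∑ k ∈ s, ∑ j ∈ (insert a s).filter (· < k), r j k
        = ∑ k ∈ s, ∑ j ∈ s.filter (· < k), r j k :=
      Finset.sum_congr rfl (fun k hk => by rw [hfk k hk])
    have hsym : ∑ j ∈ s, r j a = ∑ k ∈ s, r a k := Finset.sum_congr rfl (fun k _ => hr k a)
    rw [sum_insert ha', sum_insert ha', h2, sum_insert ha', sum_insert ha', hfa, h3,
      Finset.sum_add_distrib, ih, hsym]
    ring

def indic (i x : ℕ) : ℕ := if 0 < x ∧ i ∣ x then 1 else 0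

lemma not_isSquare_of_mod4 {m n : ℕ} (hm : m = 4 * n + 3) : ¬ IsSquare m := by
  rintro ⟨r, hr⟩
  have h1 : ((m : ℕ) : ZMod 4) = (r : ZMod 4) * (r : ZMod 4) := by rw [hr]; push_cast; ring
  have h2 : ((m : ℕ) : ZMod 4) = 3 := by
    subst hm; push_cast
    rw [show ((4 : ZMod 4)) = 0 from by decide]; ring
  have h3 : ∀ u : ZMod 4, u * u ≠ 3 := by decide
  exact h3 _ (h1 ▸ h2)

lemma even_card_divisors {x : ℕ} (hx : ¬ IsSquare x) : Even x.divisors.card := by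
  rcases Nat.eq_zero_or_pos x with rfl | hx0
  · simp
  suffices h : ∑ _k ∈ x.divisors, (1 : ZMod 2) = 0 by
    rw [Finset.sum_const, nsmul_eq_mul, mul_one, ZMod.natCast_eq_zero_iff] at h
    obtain ⟨c, hc⟩ := h
    exact ⟨c, by omega⟩
  apply Finset.sum_involution (fun k _ => x / k)
  · intro a _; decide
  · intro a ha _ hcontra
    have had : a ∣ x := (Nat.mem_divisors.mp ha).1
    exact hx ⟨a, by rw [← Nat.mul_div_cancel' had, hcontra]⟩
  · intro a ha
    exact Nat.mem_divisors.mpr ⟨Nat.div_dvd_of_dvd (Nat.mem_divisors.mp ha).1, by omega⟩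
  · intro a ha
    exact Nat.div_div_self (Nat.mem_divisors.mp ha).1 (by omega)

lemma isSquare_of_odd_card_divisors {x : ℕ} (hx : ¬ Even x.divisors.card) : IsSquare x := by
  by_contra h
  exact hx (even_card_divisors h)

lemma four_dvd_sigma {m n : ℕ} (hm : m = 4 * n + 3) : 4 ∣ ∑ k ∈ m.divisors, k := by
  have hsq := not_isSquare_of_mod4 hm
  suffices h : ∑ k ∈ m.divisors, ((k : ℕ) : ZMod 4) = 0 by
    rwa [← Nat.cast_sum, ZMod.natCast_eq_zero_iff] at h
  apply Finset.sum_involution (fun k _ => m / k)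
  · intro a ha
    have had : a ∣ m := (Nat.mem_divisors.mp ha).1
    have h1 : a * (m / a) = m := Nat.mul_div_cancel' had
    have h2 : ((a : ℕ) : ZMod 4) * ((m / a : ℕ) : ZMod 4) = 3 := by
      rw [← Nat.cast_mul, h1, hm]; push_cast
      rw [show ((4 : ZMod 4)) = 0 from by decide]; ring
    have h3 : ∀ u v : ZMod 4, u * v = 3 → u + v = 0 := by decide
    exact h3 _ _ h2
  · intro a ha _ hcontra
    have had : a ∣ m := (Nat.mem_divisors.mp ha).1
    exact hsq ⟨a, by rw [← Nat.mul_div_cancel' had, hcontra]⟩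
  · intro a ha
    exact Nat.mem_divisors.mpr ⟨Nat.div_dvd_of_dvd (Nat.mem_divisors.mp ha).1, by omega⟩
  · intro a ha
    exact Nat.div_div_self (Nat.mem_divisors.mp ha).1 (by omega)

lemma four_dvd_Dfull {m n : ℕ} (hm : m = 4 * n + 3) :
    4 ∣ ∑ ab ∈ Finset.HasAntidiagonal.antidiagonal m, ab.1.divisors.card * ab.2.divisors.card := by
  suffices h : ∑ ab ∈ Finset.HasAntidiagonal.antidiagonal m,
      ((ab.1.divisors.card * ab.2.divisors.card : ℕ) : ZMod 4) = 0 by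
    rwa [← Nat.cast_sum, ZMod.natCast_eq_zero_iff] at h
  apply Finset.sum_involution (fun ab _ => ab.swap)
  · intro ab hab
    rw [Prod.fst_swap, Prod.snd_swap, ← Nat.cast_add, ZMod.natCast_eq_zero_iff]
    have heven : Even (ab.1.divisors.card * ab.2.divisors.card) := by
      by_contra hodd
      rw [Nat.even_mul, not_or] at hodd
      obtain ⟨r, hr⟩ := isSquare_of_odd_card_divisors hodd.1
      obtain ⟨s, hs⟩ := isSquare_of_odd_card_divisors hodd.2
      have habm : ab.1 + ab.2 = m := Finset.HasAntidiagonal.mem_antidiagonal.mp hab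
      have h1 : ((m : ℕ) : ZMod 4) = (r : ZMod 4) * r + (s : ZMod 4) * s := by
        rw [← habm, hr, hs]; push_cast; ring
      have h2 : ((m : ℕ) : ZMod 4) = 3 := by
        subst hm; push_cast
        rw [show ((4 : ZMod 4)) = 0 from by decide]; ring
      have h3 : ∀ u v : ZMod 4, u * u + v * v ≠ 3 := by decide
      exact h3 _ _ (h1 ▸ h2)
    obtain ⟨c, hc⟩ := heven
    have hcomm : ab.2.divisors.card * ab.1.divisors.card
        = ab.1.divisors.card * ab.2.divisors.card := mul_comm _ _
    omega
  · intro ab hab _ hcontra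
    have habm : ab.1 + ab.2 = m := Finset.HasAntidiagonal.mem_antidiagonal.mp hab
    have : ab.2 = ab.1 := congrArg Prod.fst hcontra
    omega
  · intro ab _
    exact Prod.swap_swap ab
  · intro ab hab
    exact Finset.HasAntidiagonal.swap_mem_antidiagonal.mpr hab

lemma sum_indic_eq_card {N x : ℕ} (hx : x ≤ N) :
    ∑ j ∈ range N, indic (j + 1) x = x.divisors.card := by
  rcases Nat.eq_zero_or_pos x with rfl | hx0
  · simp [indic]
  have h1 : ∑ j ∈ range N, indic (j + 1) x
      = ∑ j ∈ (range N).filter (fun j => (j + 1) ∣ x), 1 := by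
    rw [Finset.sum_filter]
    refine Finset.sum_congr rfl fun j _ => ?_
    simp [indic, hx0]
  rw [h1, ← Finset.card_eq_sum_ones]
  apply Finset.card_bij (fun j _ => j + 1)
  · intro a ha
    exact Nat.mem_divisors.mpr ⟨(Finset.mem_filter.mp ha).2, by omega⟩
  · intro a _ b _ hab; omega
  · intro d hd
    obtain ⟨hdvd, -⟩ := Nat.mem_divisors.mp hd
    have hd1 : 1 ≤ d := Nat.pos_of_mem_divisors hd
    have hdle : d ≤ x := Nat.le_of_dvd hx0 hdvd
    exact ⟨d - 1, Finset.mem_filter.mpr ⟨Finset.mem_range.mpr (by omega),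
      by rwa [Nat.sub_add_cancel hd1]⟩, by omega⟩

lemma indic_mul (i j a b : ℕ) :
    indic i a * indic j b = if (0 < a ∧ i ∣ a) ∧ (0 < b ∧ j ∣ b) then 1 else 0 := by
  unfold indic; split_ifs <;> simp_all

lemma Rdiag_eq {i m : ℕ} (hi : 0 < i) (hm0 : 0 < m) :
    ∑ ab ∈ Finset.HasAntidiagonal.antidiagonal m, indic i ab.1 * indic i ab.2
      = if i ∣ m then m / i - 1 else 0 := by
  rw [Finset.Nat.sum_antidiagonal_eq_sum_range_succ_mk]
  by_cases hd : i ∣ m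
  · rw [if_pos hd]
    have hit : i * (m / i) = m := Nat.mul_div_cancel' hd
    have ht1 : 1 ≤ m / i := Nat.div_pos (Nat.le_of_dvd hm0 hd) hi
    have h1 : ∑ a ∈ range (m + 1), indic i a * indic i (m - a)
        = ∑ a ∈ (range (m + 1)).filter
            (fun a => (0 < a ∧ i ∣ a) ∧ (0 < m - a ∧ i ∣ m - a)), 1 := by
      rw [Finset.sum_filter]
      exact Finset.sum_congr rfl fun a _ => indic_mul i i a (m - a)
    rw [h1, ← Finset.card_eq_sum_ones]
    have h2 : ((range (m + 1)).filter
          (fun a => (0 < a ∧ i ∣ a) ∧ (0 < m - a ∧ i ∣ m - a))).card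
        = (Finset.Ico 1 (m / i)).card := by
      apply Finset.card_bij (fun a _ => a / i)
      · intro a ha
        obtain ⟨-, ⟨ha0, hia⟩, hma0, -⟩ := Finset.mem_filter.mp ha
        refine Finset.mem_Ico.mpr ⟨?_, ?_⟩
        · exact Nat.div_pos (Nat.le_of_dvd ha0 hia) hi
        · exact Nat.div_lt_div_of_lt_of_dvd hd (by omega)
      · intro a1 h1' a2 h2' he
        obtain ⟨-, ⟨-, hia1⟩, -, -⟩ := Finset.mem_filter.mp h1'
        obtain ⟨-, ⟨-, hia2⟩, -, -⟩ := Finset.mem_filter.mp h2'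
        rw [← Nat.mul_div_cancel' hia1, ← Nat.mul_div_cancel' hia2, he]
      · intro s hs
        obtain ⟨hs1, hst⟩ := Finset.mem_Ico.mp hs
        have h3 : i * s + i ≤ i * (m / i) := by
          calc i * s + i = i * (s + 1) := by ring
            _ ≤ i * (m / i) := Nat.mul_le_mul_left i (by omega)
        refine ⟨i * s, Finset.mem_filter.mpr ⟨Finset.mem_range.mpr (by omega),
          ⟨Nat.mul_pos hi hs1, dvd_mul_right i s⟩, by omega,
          Nat.dvd_sub hd (dvd_mul_right i s)⟩, Nat.mul_div_cancel_left s hi⟩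
    rw [h2, Nat.card_Ico]
  · rw [if_neg hd]
    apply Finset.sum_eq_zero
    intro a har
    rw [indic_mul, if_neg]
    rintro ⟨⟨-, hia⟩, -, hima⟩
    have ham : a ≤ m := by have := Finset.mem_range.mp har; omega
    exact hd (by have := Nat.dvd_add hia hima; rwa [Nat.add_sub_cancel' ham] at this)

lemma sigma_diag {m N : ℕ} (hm0 : 0 < m) (hN : N = m + 1) :
    (∑ k ∈ range N, ∑ ab ∈ Finset.HasAntidiagonal.antidiagonal m, indic (k + 1) ab.1 * indic (k + 1) ab.2)
      + m.divisors.card = ∑ k ∈ m.divisors, k := by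
  have h1 : ∀ k ∈ range N, ∑ ab ∈ Finset.HasAntidiagonal.antidiagonal m, indic (k + 1) ab.1 * indic (k + 1) ab.2
      = if (k + 1) ∣ m then m / (k + 1) - 1 else 0 := fun k _ => Rdiag_eq (by omega) hm0
  rw [Finset.sum_congr rfl h1, ← Finset.sum_filter]
  have h2 : ∑ k ∈ (range N).filter (fun k => (k + 1) ∣ m), (m / (k + 1) - 1)
      = ∑ d ∈ m.divisors, (m / d - 1) := by
    apply Finset.sum_nbij' (fun k => k + 1) (fun d => d - 1)
    · intro k hk
      exact Nat.mem_divisors.mpr ⟨(Finset.mem_filter.mp hk).2, by omega⟩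
    · intro d hd
      have hd1 : 1 ≤ d := Nat.pos_of_mem_divisors hd
      have hdle : d ≤ m := Nat.le_of_dvd hm0 (Nat.mem_divisors.mp hd).1
      exact Finset.mem_filter.mpr ⟨Finset.mem_range.mpr (by omega),
        by rw [Nat.sub_add_cancel hd1]; exact (Nat.mem_divisors.mp hd).1⟩
    · intro k _; omega
    · intro d hd; have hd1 : 1 ≤ d := Nat.pos_of_mem_divisors hd; omega
    · intro k _; rfl
  rw [h2, Finset.card_eq_sum_ones m.divisors, ← Finset.sum_add_distrib]
  have h3 : ∀ d ∈ m.divisors, m / d - 1 + 1 = m / d := by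
    intro d hd
    have : 0 < m / d := Nat.div_pos (Nat.le_of_dvd hm0 (Nat.mem_divisors.mp hd).1)
      (Nat.pos_of_mem_divisors hd)
    omega
  rw [Finset.sum_congr rfl h3]
  exact Nat.sum_div_divisors m id

lemma rfun_symm (m i j : ℕ) :
    ∑ ab ∈ Finset.HasAntidiagonal.antidiagonal m, indic i ab.1 * indic j ab.2
      = ∑ ab ∈ Finset.HasAntidiagonal.antidiagonal m, indic j ab.1 * indic i ab.2 := by
  conv_lhs => rw [← Finset.HasAntidiagonal.map_swap_antidiagonal, Finset.sum_map]
  simp only [Function.Embedding.coeFn_mk, Prod.fst_swap, Prod.snd_swap]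
  exact Finset.sum_congr rfl fun ab _ => mul_comm _ _

lemma key_arith {m n N : ℕ} (hm : m = 4 * n + 3) (hN : N = m + 1) :
    (2 * m.divisors.card
      + 4 * ∑ k ∈ range N, ∑ ab ∈ Finset.HasAntidiagonal.antidiagonal m,
          (∑ j ∈ (range N).filter (· < k), indic (j + 1) ab.1) * indic (k + 1) ab.2) % 8
      = 0 := by
  set rfun : ℕ → ℕ → ℕ :=
    fun j k => ∑ ab ∈ Finset.HasAntidiagonal.antidiagonal m, indic (j + 1) ab.1 * indic (k + 1) ab.2 with hrfun
  have hW : ∀ k, ∑ ab ∈ Finset.HasAntidiagonal.antidiagonal m,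
      (∑ j ∈ (range N).filter (· < k), indic (j + 1) ab.1) * indic (k + 1) ab.2
      = ∑ j ∈ (range N).filter (· < k), rfun j k := by
    intro k
    rw [Finset.sum_comm]
    exact Finset.sum_congr rfl fun ab _ => Finset.sum_mul _ _ _
  have hsym : ∀ j k, rfun j k = rfun k j := fun j k => rfun_symm m (j + 1) (k + 1)
  have hsplit := sum_sq_split rfun hsym (range N)
  have hdiag := sigma_diag (m := m) (N := N) (by omega) hN
  have hDfull : ∑ j ∈ range N, ∑ k ∈ range N, rfun j k
      = ∑ ab ∈ Finset.HasAntidiagonal.antidiagonal m, ab.1.divisors.card * ab.2.divisors.card := by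
    have e1 : ∀ j, ∑ k ∈ range N, rfun j k
        = ∑ ab ∈ Finset.HasAntidiagonal.antidiagonal m, ∑ k ∈ range N, indic (j + 1) ab.1 * indic (k + 1) ab.2 :=
      fun j => Finset.sum_comm (s := range N) (t := Finset.HasAntidiagonal.antidiagonal m)
        (f := fun k ab => indic (j + 1) ab.1 * indic (k + 1) ab.2)
    rw [Finset.sum_congr rfl (fun j _ => e1 j), Finset.sum_comm]
    apply Finset.sum_congr rfl
    intro ab hab
    have habm : ab.1 + ab.2 = m := Finset.HasAntidiagonal.mem_antidiagonal.mp hab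
    rw [← sum_indic_eq_card (x := ab.1) (N := N) (by omega),
      ← sum_indic_eq_card (x := ab.2) (N := N) (by omega), Finset.sum_mul_sum]
  -- arithmetic facts
  have hdiag' : (∑ k ∈ range N, rfun k k) + m.divisors.card = ∑ k ∈ m.divisors, k := hdiag
  obtain ⟨s4, hs4⟩ := four_dvd_sigma hm
  obtain ⟨D4, hD4⟩ : 4 ∣ ∑ j ∈ range N, ∑ k ∈ range N, rfun j k := by
    rw [hDfull]; exact four_dvd_Dfull hm
  obtain ⟨c, hc⟩ : Even m.divisors.card := even_card_divisors (not_isSquare_of_mod4 hm)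
  rw [Finset.sum_congr rfl fun k _ => hW k]
  omega

/-- The generating function `∏_{k ≥ 1} (1 + q^k)/(1 - q^k)` for overpartitions,
realized coefficientwise via stabilized partial products. -/
noncomputable def overGF : PowerSeries ℚ :=
  PowerSeries.mk fun n => PowerSeries.coeff n
    (∏ k ∈ Finset.range (n + 1),
      ((1 + (PowerSeries.X : PowerSeries ℚ) ^ (k + 1)) *
        (1 - (PowerSeries.X : PowerSeries ℚ) ^ (k + 1))⁻¹))

/-- $\bar p(4n+3) \equiv 0 \pmod{8}$. -/
theorem overpartition_4n3_mod8
    (p : ℕ → ℕ)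
    (hp : PowerSeries.mk (fun n => (p n : ℚ)) = overGF)
    (n : ℕ) :
    p (4 * n + 3) % 8 = 0 := by
  set m := 4 * n + 3 with hm
  set N := m + 1 with hN
  -- step 1 : the ℚ-coefficient
  have hq : (p m : ℚ) = coeff m (∏ k ∈ range N, (1 + 2 * cgeom ℚ (k + 1))) := by
    have h0 : (p m : ℚ) = coeff m overGF := by rw [← hp, coeff_mk]
    rw [h0, overGF, coeff_mk]
    exact congrArg (coeff m)
      (Finset.prod_congr rfl fun k _ => factor_eq (i := k + 1) (by omega))
  -- step 2 : over ℤ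
  have hZQ : PowerSeries.map (Int.castRingHom ℚ) (∏ k ∈ range N, (1 + 2 * cgeom ℤ (k + 1)))
      = ∏ k ∈ range N, (1 + 2 * cgeom ℚ (k + 1)) := by
    rw [map_prod]
    exact Finset.prod_congr rfl fun k _ => by
      rw [map_add, map_mul, map_one, map_ofNat, map_cgeom]
  have hz : (p m : ℤ) = coeff m (∏ k ∈ range N, (1 + 2 * cgeom ℤ (k + 1))) := by
    have h1 := congrArg (coeff m) hZQ
    rw [coeff_map] at h1
    have h2 : (p m : ℚ)
        = ((coeff m (∏ k ∈ range N, (1 + 2 * cgeom ℤ (k + 1))) : ℤ) : ℚ) := by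
      rw [hq, ← h1]; rfl
    exact_mod_cast h2
  -- step 3 : over ZMod 8
  have hZ8 : PowerSeries.map (Int.castRingHom (ZMod 8))
        (∏ k ∈ range N, (1 + 2 * cgeom ℤ (k + 1)))
      = ∏ k ∈ range N, (1 + 2 * cgeom (ZMod 8) (k + 1)) := by
    rw [map_prod]
    exact Finset.prod_congr rfl fun k _ => by
      rw [map_add, map_mul, map_one, map_ofNat, map_cgeom]
  have hz8 : ((p m : ℕ) : ZMod 8)
      = coeff m (∏ k ∈ range N, (1 + 2 * cgeom (ZMod 8) (k + 1))) := by
    have h1 := congrArg (coeff m) hZ8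
    rw [coeff_map, ← hz] at h1
    rw [← h1]
    rfl
  -- step 4 : expand mod 8
  rw [expand_mod8 (fun k => cgeom (ZMod 8) (k + 1)) (range N)] at hz8
  have hm0 : ¬ m = 0 := by omega
  have h2C : (2 : PowerSeries (ZMod 8)) = C (R := ZMod 8) 2 := (map_ofNat (C (R := ZMod 8)) 2).symm
  have h4C : (4 : PowerSeries (ZMod 8)) = C (R := ZMod 8) 4 := (map_ofNat (C (R := ZMod 8)) 4).symm
  rw [map_add, map_add, coeff_one, if_neg hm0, h2C, h4C, coeff_C_mul, coeff_C_mul,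
    map_sum, map_sum] at hz8
  -- step 5 : identify the coefficients with natural counts
  have hcg : ∀ (i x : ℕ), coeff x (cgeom (ZMod 8) i) = ((indic i x : ℕ) : ZMod 8) := by
    intro i x
    rw [cgeom, coeff_mk, indic]
    split_ifs <;> simp
  have hS : ∑ k ∈ range N, coeff m (cgeom (ZMod 8) (k + 1))
      = ((m.divisors.card : ℕ) : ZMod 8) := by
    rw [Finset.sum_congr rfl fun k _ => hcg (k + 1) m, ← Nat.cast_sum,
      sum_indic_eq_card (by omega)]
  have hT : ∑ k ∈ range N, coeff m
        ((∑ j ∈ (range N).filter (· < k), cgeom (ZMod 8) (j + 1)) * cgeom (ZMod 8) (k + 1))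
      = ((∑ k ∈ range N, ∑ ab ∈ Finset.HasAntidiagonal.antidiagonal m,
          (∑ j ∈ (range N).filter (· < k), indic (j + 1) ab.1) * indic (k + 1) ab.2 : ℕ)
            : ZMod 8) := by
    rw [Nat.cast_sum]
    refine Finset.sum_congr rfl fun k _ => ?_
    rw [coeff_mul, Nat.cast_sum]
    refine Finset.sum_congr rfl fun ab _ => ?_
    rw [Nat.cast_mul, ← hcg (k + 1) ab.2, map_sum,
      Finset.sum_congr rfl fun j _ => hcg (j + 1) ab.1, ← Nat.cast_sum]
  rw [hS, hT] at hz8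
  -- step 6 : conclude
  have hkey := key_arith (m := m) (n := n) (N := N) hm hN
  have hfinal : ((p m : ℕ) : ZMod 8)
      = ((2 * m.divisors.card
          + 4 * ∑ k ∈ range N, ∑ ab ∈ Finset.HasAntidiagonal.antidiagonal m,
            (∑ j ∈ (range N).filter (· < k), indic (j + 1) ab.1) * indic (k + 1) ab.2 : ℕ)
              : ZMod 8) := by
    rw [hz8]; push_cast; ring
  rw [show (2 * m.divisors.card
      + 4 * ∑ k ∈ range N, ∑ ab ∈ Finset.HasAntidiagonal.antidiagonal m,
        (∑ j ∈ (range N).filter (· < k), indic (j + 1) ab.1) * indic (k + 1) ab.2 : ℕ)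
      = 8 * ((2 * m.divisors.card
      + 4 * ∑ k ∈ range N, ∑ ab ∈ Finset.HasAntidiagonal.antidiagonal m,
        (∑ j ∈ (range N).filter (· < k), indic (j + 1) ab.1) * indic (k + 1) ab.2 : ℕ) / 8)
      from by omega] at hfinal
  rw [Nat.cast_mul, show ((8 : ℕ) : ZMod 8) = 0 from by decide, zero_mul] at hfinal
  have : (8 : ℕ) ∣ p m := by
    rwa [← ZMod.natCast_eq_zero_iff]
  omega
end

section
/- The generating function identity ∑_{n≥0} p̄(8n+7) qⁿ = 64 f₂²² / f₁²³ holds as an identity of formal power series, where fₘ = ∏_{k≥1} (1 − q^{mk}). -/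
open PowerSeries

noncomputable def f (m : ℕ) : PowerSeries ℚ :=
  PowerSeries.mk fun n => PowerSeries.coeff (R := ℚ) n
    (∏ k ∈ Finset.range (n + 1), (1 - (PowerSeries.X : PowerSeries ℚ) ^ (m * (k + 1))))

namespace OP
open Finset

abbrev PS := PowerSeries ℚ

/-- coefficientwise stabilized convergence -/
def Tend (F : ℕ → PS) (G : PS) : Prop :=
  ∀ d N : ℕ, d < N → PowerSeries.coeff (R := ℚ) d (F N) = PowerSeries.coeff (R := ℚ) d G

lemma Tend.unique {F : ℕ → PS} {G G' : PS} (h : Tend F G) (h' : Tend F G') : G = G' :=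
  PowerSeries.ext fun d => ((h d (d+1) (Nat.lt_succ_self d)).symm).trans (h' d (d+1) (Nat.lt_succ_self d))

lemma Tend.mul {F F' : ℕ → PS} {G G' : PS} (hF : Tend F G) (hF' : Tend F' G') :
    Tend (fun N => F N * F' N) (G * G') := by
  intro d N hdN
  rw [PowerSeries.coeff_mul, PowerSeries.coeff_mul]
  refine Finset.sum_congr rfl fun p hp => ?_
  rw [Finset.HasAntidiagonal.mem_antidiagonal] at hp
  have h1 : p.1 ≤ d := le_of_add_le_left hp.le
  have h2 : p.2 ≤ d := le_of_add_le_right hp.le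
  rw [hF p.1 N (lt_of_le_of_lt h1 hdN), hF' p.2 N (lt_of_le_of_lt h2 hdN)]

lemma Tend.add {F F' : ℕ → PS} {G G' : PS} (hF : Tend F G) (hF' : Tend F' G') :
    Tend (fun N => F N + F' N) (G + G') := by
  intro d N hdN
  rw [map_add, map_add, hF d N hdN, hF' d N hdN]

lemma Tend.comp {F : ℕ → PS} {G : PS} (h : Tend F G) (m : ℕ → ℕ) (hm : ∀ N, N ≤ m N) :
    Tend (fun N => F (m N)) G := fun d N hdN => h d (m N) (lt_of_lt_of_le hdN (hm N))

lemma Tend.congr {F F' : ℕ → PS} {G : PS} (h : Tend F G) (he : ∀ N, F N = F' N) :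
    Tend F' G := fun d N hdN => (he N) ▸ h d N hdN

lemma Tend.X_mul {F : ℕ → PS} {G : PS} (h : Tend F G) :
    Tend (fun N => X * F N) (X * G) := by
  intro d N hdN
  cases d with
  | zero => simp [PowerSeries.coeff_zero_eq_constantCoeff]
  | succ d => rw [PowerSeries.coeff_succ_X_mul, PowerSeries.coeff_succ_X_mul,
      h d N (lt_trans (Nat.lt_succ_self d) hdN)]

lemma Tend.const_mul {F : ℕ → PS} {G : PS} (c : ℚ) (h : Tend F G) :
    Tend (fun N => C (R := ℚ) c * F N) (C (R := ℚ) c * G) := by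
  intro d N hdN
  rw [PowerSeries.coeff_C_mul, PowerSeries.coeff_C_mul, h d N hdN]

/-- generic partial products `∏_{k<N} (1 + a k * X^(e k))` -/
noncomputable def pp (a : ℕ → ℚ) (e : ℕ → ℕ) (N : ℕ) : PS :=
  ∏ k ∈ range N, (1 + C (R := ℚ) (a k) * X ^ (e k))

lemma coeff_pp_stable (a : ℕ → ℚ) (e : ℕ → ℕ) (he : ∀ k, k < e k) (d : ℕ) :
    ∀ N M : ℕ, d < N → N ≤ M →
      PowerSeries.coeff (R := ℚ) d (pp a e M) = PowerSeries.coeff (R := ℚ) d (pp a e N) := by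
  intro N M hdN hNM
  induction M with
  | zero => exact absurd hdN (by omega)
  | succ M ih =>
    rcases Nat.lt_or_ge N (M+1) with h | h
    · have hM : N ≤ M := Nat.lt_succ_iff.mp h
      rw [← ih hM]
      rw [pp, Finset.prod_range_succ, ← pp, mul_add, mul_one, map_add]
      have : (PowerSeries.coeff (R := ℚ) d) (pp a e M * (C (R := ℚ) (a M) * X ^ e M)) = 0 := by
        rw [show pp a e M * (C (R := ℚ) (a M) * X ^ e M) = C (R := ℚ) (a M) * (pp a e M * X ^ e M) by ring,
          PowerSeries.coeff_C_mul, PowerSeries.coeff_mul_X_pow']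
        have : ¬ e M ≤ d := by
          have := he M
          omega
        rw [if_neg this, mul_zero]
      rw [this, add_zero]
    · have : N = M + 1 := le_antisymm hNM h
      rw [this]

lemma pp_zero (a : ℕ → ℚ) (e : ℕ → ℕ) : pp a e 0 = 1 := by simp [pp]

lemma pp_succ (a : ℕ → ℚ) (e : ℕ → ℕ) (N : ℕ) :
    pp a e (N+1) = pp a e N * (1 + C (R := ℚ) (a N) * X ^ (e N)) := Finset.prod_range_succ _ _

/-- the infinite product -/
noncomputable def iprod (a : ℕ → ℚ) (e : ℕ → ℕ) : PS :=
  PowerSeries.mk fun n => PowerSeries.coeff (R := ℚ) n (pp a e (n+1))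

lemma tend_iprod (a : ℕ → ℚ) (e : ℕ → ℕ) (he : ∀ k, k < e k) :
    Tend (pp a e) (iprod a e) := by
  intro d N hdN
  rw [iprod, PowerSeries.coeff_mk]
  rcases le_or_gt N (d+1) with h | h
  · exact (coeff_pp_stable a e he d N (d+1) hdN h).symm
  · exact (coeff_pp_stable a e he d (d+1) N (Nat.lt_succ_self d) (le_of_lt h))

lemma f_eq (m : ℕ) : f m = iprod (fun _ => (-1 : ℚ)) (fun k => m * (k+1)) := by
  apply PowerSeries.ext; intro n
  rw [f, iprod, PowerSeries.coeff_mk, PowerSeries.coeff_mk]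
  congr 1
  refine Finset.prod_congr rfl fun k _ => ?_
  rw [map_neg, map_one]
  ring

lemma hm1 (m : ℕ) (hm : 0 < m) (k : ℕ) : k < m * (k + 1) := by nlinarith

lemma tend_f (m : ℕ) (hm : 0 < m) :
    Tend (pp (fun _ => (-1 : ℚ)) (fun k => m * (k+1))) (f m) := by
  rw [f_eq]; exact tend_iprod _ _ (hm1 m hm)


/-- substitution q ↦ q^m as a function -/
noncomputable def Sf (m : ℕ) (F : PS) : PS :=
  PowerSeries.mk fun n => if m ∣ n then PowerSeries.coeff (R := ℚ) (n/m) F else 0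

lemma coeff_Sf (m : ℕ) (F : PS) (n : ℕ) :
    PowerSeries.coeff (R := ℚ) n (Sf m F) = if m ∣ n then PowerSeries.coeff (R := ℚ) (n/m) F else 0 :=
  PowerSeries.coeff_mk _ _

lemma Sf_mul (m : ℕ) (hm : 0 < m) (F G : PS) : Sf m (F * G) = Sf m F * Sf m G := by
  apply PowerSeries.ext; intro n
  rw [coeff_Sf, PowerSeries.coeff_mul, PowerSeries.coeff_mul]
  have hrhs : ∀ p ∈ antidiagonal n,
      (PowerSeries.coeff (R := ℚ) p.1) (Sf m F) * (PowerSeries.coeff (R := ℚ) p.2) (Sf m G) =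
      if m ∣ p.1 ∧ m ∣ p.2 then
        (PowerSeries.coeff (R := ℚ) (p.1/m)) F * (PowerSeries.coeff (R := ℚ) (p.2/m)) G else 0 := by
    intro p _
    rw [coeff_Sf, coeff_Sf]
    by_cases h1 : m ∣ p.1 <;> by_cases h2 : m ∣ p.2 <;> simp [h1, h2]
  rw [Finset.sum_congr rfl hrhs, ← Finset.sum_filter]
  by_cases hn : m ∣ n
  · rw [if_pos hn]
    refine Finset.sum_nbij' (fun p => (m * p.1, m * p.2)) (fun p => (p.1 / m, p.2 / m))
      ?_ ?_ ?_ ?_ ?_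
    · intro p hp
      rw [Finset.HasAntidiagonal.mem_antidiagonal] at hp
      rw [Finset.mem_filter, Finset.HasAntidiagonal.mem_antidiagonal]
      refine ⟨?_, ⟨p.1, rfl⟩, ⟨p.2, rfl⟩⟩
      obtain ⟨q, hq⟩ := hn
      rw [hq, Nat.mul_div_cancel_left _ hm] at hp
      rw [hq, ← hp]; ring
    · intro p hp
      obtain ⟨x, y⟩ := p
      rw [Finset.mem_filter, Finset.HasAntidiagonal.mem_antidiagonal] at hp
      obtain ⟨hsum, ⟨a, ha⟩, ⟨b, hb⟩⟩ := hp
      rw [Finset.HasAntidiagonal.mem_antidiagonal]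
      subst ha; subst hb
      simp only [Nat.mul_div_cancel_left _ hm]
      have : m * (a + b) = n := by rw [← hsum]; ring
      rw [← this, Nat.mul_div_cancel_left _ hm]
    · intro p _
      simp [Nat.mul_div_cancel_left _ hm]
    · intro p hp
      obtain ⟨x, y⟩ := p
      rw [Finset.mem_filter, Finset.HasAntidiagonal.mem_antidiagonal] at hp
      obtain ⟨_, ⟨a, ha⟩, ⟨b, hb⟩⟩ := hp
      subst ha; subst hb
      simp [Nat.mul_div_cancel_left _ hm]
    · intro p _
      simp [Nat.mul_div_cancel_left _ hm]
  · rw [if_neg hn]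
    refine (Finset.sum_eq_zero ?_).symm
    intro p hp
    rw [Finset.mem_filter, Finset.HasAntidiagonal.mem_antidiagonal] at hp
    exact absurd (hp.1 ▸ (hp.2.1.add hp.2.2)) hn

lemma Sf_add (m : ℕ) (F G : PS) : Sf m (F + G) = Sf m F + Sf m G := by
  apply PowerSeries.ext; intro n
  rw [map_add, coeff_Sf, coeff_Sf, coeff_Sf, map_add]
  by_cases h : m ∣ n <;> simp [h]

lemma Sf_one (m : ℕ) (hm : 0 < m) : Sf m 1 = 1 := by
  apply PowerSeries.ext; intro n
  rw [coeff_Sf, PowerSeries.coeff_one]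
  by_cases h : m ∣ n
  · rw [if_pos h, PowerSeries.coeff_one]
    obtain ⟨q, rfl⟩ := h
    rw [Nat.mul_div_cancel_left _ hm]
    by_cases hq : q = 0 <;> simp [hq, Nat.mul_eq_zero, hm.ne']
  · rw [if_neg h, PowerSeries.coeff_one, if_neg]
    rintro rfl
    exact h (dvd_zero m)

lemma Sf_C (m : ℕ) (hm : 0 < m) (c : ℚ) : Sf m (C (R := ℚ) c) = C (R := ℚ) c := by
  apply PowerSeries.ext; intro n
  rw [coeff_Sf, PowerSeries.coeff_C]
  by_cases h : m ∣ n
  · rw [if_pos h, PowerSeries.coeff_C]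
    obtain ⟨q, rfl⟩ := h
    rw [Nat.mul_div_cancel_left _ hm]
    by_cases hq : q = 0 <;> simp [hq, Nat.mul_eq_zero, hm.ne']
  · rw [if_neg h, PowerSeries.coeff_C, if_neg]
    rintro rfl
    exact h (dvd_zero m)

lemma Sf_X_pow (m : ℕ) (hm : 0 < m) (j : ℕ) : Sf m (X ^ j) = X ^ (m * j) := by
  apply PowerSeries.ext; intro n
  rw [coeff_Sf, PowerSeries.coeff_X_pow]
  by_cases h : m ∣ n
  · rw [if_pos h, PowerSeries.coeff_X_pow]
    obtain ⟨q, rfl⟩ := h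
    rw [Nat.mul_div_cancel_left _ hm]
    by_cases hq : q = j
    · simp [hq]
    · rw [if_neg hq, if_neg]
      intro hc
      exact hq (Nat.eq_of_mul_eq_mul_left hm hc)
  · rw [if_neg h, PowerSeries.coeff_X_pow, if_neg]
    rintro rfl
    exact h ⟨j, rfl⟩

lemma Sf_pow (m : ℕ) (hm : 0 < m) (F : PS) (j : ℕ) : Sf m (F ^ j) = (Sf m F) ^ j := by
  induction j with
  | zero => simpa using Sf_one m hm
  | succ j ih => rw [pow_succ, pow_succ, Sf_mul m hm, ih]

lemma Sf_comp (a b : ℕ) (ha : 0 < a) (hb : 0 < b) (F : PS) :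
    Sf a (Sf b F) = Sf (a * b) F := by
  apply PowerSeries.ext; intro n
  rw [coeff_Sf, coeff_Sf]
  by_cases h : a ∣ n
  · rw [if_pos h, coeff_Sf]
    by_cases h2 : b ∣ n / a
    · rw [if_pos h2, if_pos, Nat.div_div_eq_div_mul]
      obtain ⟨q, hq⟩ := h
      obtain ⟨r, hr⟩ := h2
      subst hq
      rw [Nat.mul_div_cancel_left _ ha] at hr
      exact ⟨r, by rw [hr]; ring⟩
    · rw [if_neg h2, if_neg]
      intro hc
      obtain ⟨r, hr⟩ := hc
      apply h2
      rw [hr, show a * b * r = a * (b * r) by ring, Nat.mul_div_cancel_left _ ha]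
      exact ⟨r, rfl⟩
  · rw [if_neg h, coeff_Sf, if_neg]
    intro hc
    exact h (dvd_trans ⟨b, rfl⟩ hc)

lemma Sf_tend (m : ℕ) (hm : 0 < m) {F : ℕ → PS} {G : PS} (h : Tend F G) :
    Tend (fun N => Sf m (F N)) (Sf m G) := by
  intro d N hdN
  rw [coeff_Sf, coeff_Sf]
  by_cases hd : m ∣ d
  · rw [if_pos hd, if_pos hd, h (d/m) N (lt_of_le_of_lt (Nat.div_le_self d m) hdN)]
  · rw [if_neg hd, if_neg hd]

lemma Sf_pp (m : ℕ) (hm : 0 < m) (a : ℕ → ℚ) (e : ℕ → ℕ) (N : ℕ) :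
    Sf m (pp a e N) = pp a (fun k => m * e k) N := by
  induction N with
  | zero => simpa [pp] using Sf_one m hm
  | succ N ih =>
    rw [pp_succ, Sf_mul m hm, ih, Sf_add, Sf_one m hm,
      Sf_mul m hm, Sf_C m hm, Sf_X_pow m hm, pp_succ]

lemma Sf_iprod (m : ℕ) (hm : 0 < m) (a : ℕ → ℚ) (e : ℕ → ℕ) (he : ∀ k, k < e k) :
    Sf m (iprod a e) = iprod a (fun k => m * e k) := by
  have he' : ∀ k, k < m * e k := fun k => lt_of_lt_of_le (he k) (Nat.le_mul_of_pos_left _ hm)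
  refine Tend.unique (F := fun N => pp a (fun k => m * e k) N) ?_ (tend_iprod a _ he')
  have := Sf_tend m hm (tend_iprod a e he)
  exact Tend.congr this (fun N => Sf_pp m hm a e N)

lemma Sf_f (m k : ℕ) (hm : 0 < m) (hk : 0 < k) : Sf m (f k) = f (m * k) := by
  rw [f_eq k, Sf_iprod m hm _ _ (hm1 k hk), f_eq (m*k)]
  have : (fun j => m * (k * (j+1))) = fun j => (m*k)*(j+1) := by funext j; ring
  rw [this]

/-- odd-part extraction: `U2 F = ∑ coeff(2n+1) F qⁿ` -/
noncomputable def U2 (F : PS) : PS := PowerSeries.mk fun n => PowerSeries.coeff (R := ℚ) (2*n+1) F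

lemma coeff_U2 (F : PS) (n : ℕ) : PowerSeries.coeff (R := ℚ) n (U2 F) = PowerSeries.coeff (R := ℚ) (2*n+1) F :=
  PowerSeries.coeff_mk _ _

lemma U2_add (F G : PS) : U2 (F + G) = U2 F + U2 G := by
  apply PowerSeries.ext; intro n
  rw [map_add, coeff_U2, coeff_U2, coeff_U2, map_add]

lemma U2_even (A : PS) : U2 (Sf 2 A) = 0 := by
  apply PowerSeries.ext; intro n
  rw [coeff_U2, coeff_Sf, if_neg (by omega), map_zero]

lemma U2_odd (A : PS) : U2 (X * Sf 2 A) = A := by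
  apply PowerSeries.ext; intro n
  rw [coeff_U2, show 2*n+1 = (2*n)+1 by ring, PowerSeries.coeff_succ_X_mul, coeff_Sf,
    if_pos ⟨n, by ring⟩, Nat.mul_div_cancel_left _ (by norm_num : 0 < 2)]

lemma U2_even_mul (W G : PS) : U2 (Sf 2 W * G) = W * U2 G := by
  apply PowerSeries.ext; intro n
  rw [coeff_U2, PowerSeries.coeff_mul, PowerSeries.coeff_mul]
  have hrhs : ∀ p ∈ antidiagonal (2*n+1),
      (PowerSeries.coeff (R := ℚ) p.1) (Sf 2 W) * (PowerSeries.coeff (R := ℚ) p.2) G =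
      if 2 ∣ p.1 then (PowerSeries.coeff (R := ℚ) (p.1/2)) W * (PowerSeries.coeff (R := ℚ) p.2) G else 0 := by
    intro p _
    rw [coeff_Sf]
    by_cases h1 : 2 ∣ p.1 <;> simp [h1]
  rw [Finset.sum_congr rfl hrhs, ← Finset.sum_filter]
  refine (Finset.sum_nbij' (fun p => (2 * p.1, 2 * p.2 + 1)) (fun p => (p.1 / 2, p.2 / 2))
      ?_ ?_ ?_ ?_ ?_).symm
  · intro p hp
    rw [Finset.HasAntidiagonal.mem_antidiagonal] at hp
    rw [Finset.mem_filter, Finset.HasAntidiagonal.mem_antidiagonal]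
    dsimp only
    exact ⟨by omega, ⟨p.1, rfl⟩⟩
  · intro p hp
    rw [Finset.mem_filter, Finset.HasAntidiagonal.mem_antidiagonal] at hp
    rw [Finset.HasAntidiagonal.mem_antidiagonal]
    dsimp only
    obtain ⟨hsum, ⟨a, ha⟩⟩ := hp
    omega
  · intro p hp
    rw [Finset.HasAntidiagonal.mem_antidiagonal] at hp
    have : (2 * p.1)/2 = p.1 := by omega
    have h2 : (2 * p.2 + 1)/2 = p.2 := by omega
    cases p
    simp_all
  · intro p hp
    rw [Finset.mem_filter, Finset.HasAntidiagonal.mem_antidiagonal] at hp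
    obtain ⟨hsum, ⟨a, ha⟩⟩ := hp
    cases p
    simp only [Prod.mk.injEq]
    omega
  · intro p hp
    rw [Finset.HasAntidiagonal.mem_antidiagonal] at hp
    dsimp only
    rw [coeff_U2, Nat.mul_div_cancel_left _ (by norm_num : 0 < 2)]

/-- the auxiliary infinite products ∏(1+qᵏ), ∏(1+q^{2k-1}) -/
noncomputable def g1 : PS := iprod (fun _ => 1) (fun k => k+1)
noncomputable def hodd : PS := iprod (fun _ => 1) (fun k => 2*k+1)

lemma tend_g1 : Tend (pp (fun _ => 1) (fun k => k+1)) g1 := tend_iprod _ _ (fun k => Nat.lt_succ_self k)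
lemma tend_hodd : Tend (pp (fun _ => 1) (fun k => 2*k+1)) hodd := tend_iprod _ _ (fun k => by omega)

lemma P1 : f 1 * g1 = f 2 := by
  refine Tend.unique (F := fun N => pp (fun _ => (-1:ℚ)) (fun k => 1*(k+1)) N *
    pp (fun _ => (1:ℚ)) (fun k => k+1) N) (Tend.mul (tend_f 1 one_pos) tend_g1) ?_
  have key : ∀ N, pp (fun _ => (-1:ℚ)) (fun k => 1*(k+1)) N * pp (fun _ => (1:ℚ)) (fun k => k+1) N
      = pp (fun _ => (-1:ℚ)) (fun k => 2*(k+1)) N := by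
    intro N
    rw [pp, pp, ← Finset.prod_mul_distrib, pp]
    refine Finset.prod_congr rfl fun k _ => ?_
    simp only [map_neg, map_one, one_mul]
    have : (X : PS)^(2*(k+1)) = X^(k+1) * X^(k+1) := by rw [← pow_add]; ring_nf
    rw [this]; ring
  exact Tend.congr (tend_f 2 (by norm_num)) (fun N => (key N).symm)

lemma P2 : Sf 2 g1 * hodd = g1 := by
  have hfin : ∀ N, pp (fun _ => (1:ℚ)) (fun k => 2*(k+1)) N * pp (fun _ => (1:ℚ)) (fun k => 2*k+1) N
      = pp (fun _ => (1:ℚ)) (fun k => k+1) (2*N) := by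
    intro N
    induction N with
    | zero => simp [pp]
    | succ N ih =>
      rw [pp_succ, pp_succ, show 2*(N+1) = (2*N+1)+1 by ring, pp_succ,
        show (2*N+1) = (2*N)+1 by rfl, pp_succ, ← ih]
      ring
  refine Tend.unique (F := fun N => Sf 2 (pp (fun _ => (1:ℚ)) (fun k => k+1) N) *
    pp (fun _ => (1:ℚ)) (fun k => 2*k+1) N)
    (Tend.mul (Sf_tend 2 (by norm_num) tend_g1) tend_hodd) ?_
  have h2 : Tend (fun N => pp (fun _ => (1:ℚ)) (fun k => k+1) (2*N)) g1 :=
    Tend.comp tend_g1 (fun N => 2*N) (fun N => by show N ≤ 2*N; omega)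
  refine Tend.congr h2 (fun N => ?_)
  rw [← hfin N, Sf_pp 2 (by norm_num)]

lemma hodd_f : hodd * f 1 * f 4 = f 2 * f 2 := by
  have h4 : f 4 = f 2 * Sf 2 g1 := by
    have := congrArg (Sf 2) P1
    rw [Sf_mul 2 (by norm_num), Sf_f 2 1 (by norm_num) (by norm_num),
      Sf_f 2 2 (by norm_num) (by norm_num)] at this
    exact this.symm
  rw [h4, show hodd * f 1 * (f 2 * Sf 2 g1) = (Sf 2 g1 * hodd) * f 1 * f 2 by ring, P2,
    show g1 * f 1 * f 2 = (f 1 * g1) * f 2 by ring, P1]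

/-! ### Theta series -/

def tri (k : ℕ) : ℕ := k*(k+1)/2

lemma two_tri (k : ℕ) : 2 * tri k = k * (k+1) := by
  have h : 2 ∣ k * (k+1) := (Nat.even_mul_succ_self k).two_dvd
  unfold tri; omega

lemma tri_ge (k : ℕ) : k ≤ tri k := by
  have := two_tri k
  nlinarith [Nat.le_refl k]

lemma sq_ge (k : ℕ) : k ≤ k * k := by
  rcases Nat.eq_zero_or_pos k with h | h
  · simp [h]
  · calc k = k * 1 := (mul_one k).symm
      _ ≤ k * k := Nat.mul_le_mul_left k h

noncomputable def thc (k : ℕ) : ℚ := if k = 0 then 1 else 2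

noncomputable def phiP (N : ℕ) : PS := ∑ k ∈ range N, C (R := ℚ) (thc k) * X ^ (k*k)
noncomputable def psiP (N : ℕ) : PS := ∑ k ∈ range N, X ^ (tri k)

noncomputable def phi : PS := PowerSeries.mk fun n => PowerSeries.coeff (R := ℚ) n (phiP (n+1))
noncomputable def psi : PS := PowerSeries.mk fun n => PowerSeries.coeff (R := ℚ) n (psiP (n+1))

lemma sum_stable (c : ℕ → ℚ) (e : ℕ → ℕ) (he : ∀ k, k ≤ e k) (d : ℕ) :
    ∀ N M : ℕ, d < N → N ≤ M →
      PowerSeries.coeff (R := ℚ) d (∑ k ∈ range M, C (R := ℚ) (c k) * X ^ (e k)) =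
      PowerSeries.coeff (R := ℚ) d (∑ k ∈ range N, C (R := ℚ) (c k) * X ^ (e k)) := by
  intro N M hdN hNM
  induction M with
  | zero => exact absurd hdN (by omega)
  | succ M ih =>
    rcases Nat.lt_or_ge N (M+1) with h | h
    · have hM : N ≤ M := Nat.lt_succ_iff.mp h
      rw [← ih hM, Finset.sum_range_succ, map_add]
      have : (PowerSeries.coeff (R := ℚ) d) (C (R := ℚ) (c M) * X ^ (e M)) = 0 := by
        rw [PowerSeries.coeff_C_mul, PowerSeries.coeff_X_pow, if_neg, mul_zero]
        have h1 := he M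
        omega
      rw [this, add_zero]
    · have : N = M + 1 := le_antisymm hNM h
      rw [this]

lemma tend_phi : Tend phiP phi := by
  intro d N hdN
  rw [phi, PowerSeries.coeff_mk]
  unfold phiP
  rcases le_or_gt N (d+1) with h | h
  · exact (sum_stable thc _ (fun k => sq_ge k) d N (d+1) hdN h).symm
  · exact sum_stable thc _ (fun k => sq_ge k) d (d+1) N (Nat.lt_succ_self d) (le_of_lt h)

lemma tend_psi : Tend psiP psi := by
  have hps : ∀ M, psiP M = ∑ k ∈ range M, C (R := ℚ) ((fun _ => (1:ℚ)) k) * X ^ (tri k) := by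
    intro M; unfold psiP; refine Finset.sum_congr rfl fun k _ => ?_; rw [map_one, one_mul]
  intro d N hdN
  rw [psi, PowerSeries.coeff_mk, hps, hps]
  rcases le_or_gt N (d+1) with h | h
  · exact (sum_stable _ _ (fun k => tri_ge k) d N (d+1) hdN h).symm
  · exact sum_stable _ _ (fun k => tri_ge k) d (d+1) N (Nat.lt_succ_self d) (le_of_lt h)

lemma Sf_zero (m : ℕ) : Sf m 0 = 0 := by
  apply PowerSeries.ext; intro n
  rw [coeff_Sf, map_zero]
  split <;> simp

lemma Sf_sum (m : ℕ) (F : ℕ → PS) (N : ℕ) :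
    Sf m (∑ k ∈ range N, F k) = ∑ k ∈ range N, Sf m (F k) := by
  induction N with
  | zero => simpa using Sf_zero m
  | succ N ih => rw [Finset.sum_range_succ, Sf_add, ih, Finset.sum_range_succ]

lemma Sf_phiP (N : ℕ) : Sf 4 (phiP N) = ∑ k ∈ range N, C (R := ℚ) (thc k) * X ^ (4*(k*k)) := by
  unfold phiP
  rw [Sf_sum]
  refine Finset.sum_congr rfl fun k _ => ?_
  rw [Sf_mul 4 (by norm_num), Sf_C 4 (by norm_num), Sf_X_pow 4 (by norm_num)]

lemma X_Sf_psiP (N : ℕ) : X * Sf 8 (psiP N) = ∑ k ∈ range N, X ^ (8 * tri k + 1) := by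
  unfold psiP
  rw [Sf_sum, Finset.mul_sum]
  refine Finset.sum_congr rfl fun k _ => ?_
  rw [Sf_X_pow 8 (by norm_num), pow_succ, mul_comm]

lemma T1exact (N : ℕ) :
    phiP (2*N) = Sf 4 (phiP N) + C (R := ℚ) 2 * (X * Sf 8 (psiP N)) := by
  rw [Sf_phiP, X_Sf_psiP, Finset.mul_sum]
  induction N with
  | zero => simp [phiP]
  | succ N ih =>
    have e1 : (2*N)*(2*N) = 4*(N*N) := by ring
    have e2 : (2*N+1)*(2*N+1) = 8 * tri N + 1 := by
      have := two_tri N; nlinarith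
    rw [show 2*(N+1) = (2*N)+1+1 by ring]
    unfold phiP
    rw [Finset.sum_range_succ, Finset.sum_range_succ, ← phiP, ih]
    rw [Finset.sum_range_succ, Finset.sum_range_succ]
    have hthc : thc (2*N) = thc N := by unfold thc; split <;> split <;> first | rfl | omega
    have hthc2 : thc (2*N+1) = 2 := by unfold thc; rw [if_neg (by omega)]
    rw [hthc, hthc2, e1, e2]
    ring

lemma T1 : phi = Sf 4 phi + C (R := ℚ) 2 * (X * Sf 8 psi) := by
  refine Tend.unique (F := fun N => phiP (2*N)) ?_ ?_
  · exact Tend.comp tend_phi (fun N => 2*N) (fun N => by show N ≤ 2*N; omega)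
  · have h : Tend (fun N => Sf 4 (phiP N) + C (R := ℚ) 2 * (X * Sf 8 (psiP N)))
        (Sf 4 phi + C (R := ℚ) 2 * (X * Sf 8 psi)) := by
      refine Tend.add (Sf_tend 4 (by norm_num) tend_phi) ?_
      exact Tend.const_mul 2 ((Sf_tend 8 (by norm_num) tend_psi).X_mul)
    exact Tend.congr h (fun N => (T1exact N).symm)

/-! ### T3 : ψ² = φ·S₂ψ -/

lemma coeff_psiP_sq (d N : ℕ) :
    PowerSeries.coeff (R := ℚ) d (psiP N * psiP N) =
    ∑ p ∈ range N ×ˢ range N, (if d = tri p.1 + tri p.2 then (1:ℚ) else 0) := by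
  unfold psiP
  rw [Finset.sum_mul_sum, Finset.sum_product]
  rw [map_sum]
  refine Finset.sum_congr rfl fun i _ => ?_
  rw [map_sum]
  refine Finset.sum_congr rfl fun j _ => ?_
  rw [← pow_add, PowerSeries.coeff_X_pow]

lemma coeff_phiP_Sf2psiP (d N : ℕ) :
    PowerSeries.coeff (R := ℚ) d (phiP N * Sf 2 (psiP N)) =
    ∑ p ∈ range N ×ˢ range N, (if d = p.1*p.1 + 2 * tri p.2 then thc p.1 else 0) := by
  unfold phiP psiP
  rw [Sf_sum]
  have : ∀ k, Sf 2 ((X : PS) ^ tri k) = X ^ (2 * tri k) := fun k => Sf_X_pow 2 (by norm_num) _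
  simp only [this]
  rw [Finset.sum_mul_sum, Finset.sum_product]
  rw [map_sum]
  refine Finset.sum_congr rfl fun i _ => ?_
  rw [map_sum]
  refine Finset.sum_congr rfl fun j _ => ?_
  rw [show (C (R := ℚ)) (thc i) * X ^ (i*i) * X ^ (2 * tri j) = (C (R := ℚ)) (thc i) * (X ^ (i*i) * X ^ (2*tri j)) by ring,
    PowerSeries.coeff_C_mul, ← pow_add, PowerSeries.coeff_X_pow]
  split <;> simp [mul_comm]

lemma bijA (d N : ℕ) (hd : d < N) :
    ∑ _p ∈ (range N ×ˢ range N).filter (fun p => d = tri p.1 + tri p.2 ∧ p.2 ≤ p.1), (1:ℚ) =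
    ∑ _p ∈ (range N ×ˢ range N).filter (fun p => d = p.1*p.1 + 2 * tri p.2), (1:ℚ) := by
  refine Finset.sum_nbij'
    (fun p => if (p.1+p.2) % 2 = 0 then ((p.1-p.2)/2, (p.1+p.2)/2) else ((p.1+p.2+1)/2, (p.1-p.2-1)/2))
    (fun q => if q.1 ≤ q.2 then (q.2+q.1, q.2-q.1) else (q.1+q.2, q.1-q.2-1)) ?_ ?_ ?_ ?_ ?_
  · rintro ⟨m, n⟩ hp
    rw [Finset.mem_filter, Finset.mem_product, Finset.mem_range, Finset.mem_range] at hp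
    obtain ⟨⟨hmN, hnN⟩, hcond, hnm⟩ := hp
    dsimp only at hcond hnm ⊢
    have e1 := two_tri m; have e2 := two_tri n
    rw [Finset.mem_filter, Finset.mem_product, Finset.mem_range, Finset.mem_range]
    by_cases hpar : (m+n) % 2 = 0
    · rw [if_pos hpar]
      dsimp only
      obtain ⟨k, j, hm', hn', hk, hj⟩ : ∃ k j, m = j + k ∧ n + k = j ∧ (m-n)/2 = k ∧ (m+n)/2 = j := by
        refine ⟨(m-n)/2, (m+n)/2, by omega, by omega, rfl, rfl⟩
      rw [hk, hj]
      have e3 := two_tri j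
      have key : m*(m+1) + n*(n+1) = 2*(k*k) + 2*(j*(j+1)) := by
        have h1 : m = n + 2*k := by omega
        have h2 : j = n + k := by omega
        rw [h1, h2]; ring
      have hcond' : d = k*k + 2 * tri j := by omega
      refine ⟨⟨?_, ?_⟩, hcond'⟩
      · have : k ≤ k*k := sq_ge k
        omega
      · have : j ≤ tri j := tri_ge j
        omega
    · rw [if_neg hpar]
      dsimp only
      obtain ⟨k, j, hm', hn', hk, hj⟩ : ∃ k j, m = k + j ∧ n + j + 1 = k ∧ (m+n+1)/2 = k ∧ (m-n-1)/2 = j := by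
        refine ⟨(m+n+1)/2, (m-n-1)/2, by omega, by omega, rfl, rfl⟩
      rw [hk, hj]
      have e3 := two_tri j
      have key : m*(m+1) + n*(n+1) = 2*(k*k) + 2*(j*(j+1)) := by
        have h1 : m = n + 2*j + 1 := by omega
        have h2 : k = n + j + 1 := by omega
        rw [h1, h2]; ring
      have hcond' : d = k*k + 2 * tri j := by omega
      refine ⟨⟨?_, ?_⟩, hcond'⟩
      · have : k ≤ k*k := sq_ge k
        omega
      · have : j ≤ tri j := tri_ge j
        omega
  · rintro ⟨k, j⟩ hq
    rw [Finset.mem_filter, Finset.mem_product, Finset.mem_range, Finset.mem_range] at hq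
    obtain ⟨⟨hkN, hjN⟩, hcond⟩ := hq
    dsimp only at hcond ⊢
    have e3 := two_tri j
    rw [Finset.mem_filter, Finset.mem_product, Finset.mem_range, Finset.mem_range]
    by_cases hkj : k ≤ j
    · rw [if_pos hkj]
      dsimp only
      have e1 := two_tri (j+k); have e2 := two_tri (j-k)
      have key : (j+k)*((j+k)+1) + (j-k)*((j-k)+1) = 2*(k*k) + 2*(j*(j+1)) := by
        obtain ⟨n, hn⟩ : ∃ n, j - k = n ∧ j = n + k := ⟨j-k, rfl, by omega⟩
        rw [hn.1, hn.2, show n + k + k = n + 2*k by ring]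
        ring
      have hcond2 : d = tri (j+k) + tri (j-k) := by omega
      refine ⟨⟨?_, ?_⟩, hcond2, by omega⟩
      · have : j + k ≤ tri (j+k) := tri_ge _
        omega
      · have : j - k ≤ tri (j-k) := tri_ge _
        omega
    · rw [if_neg hkj]
      dsimp only
      have e1 := two_tri (k+j); have e2 := two_tri (k-j-1)
      have key : (k+j)*((k+j)+1) + (k-j-1)*((k-j-1)+1) = 2*(k*k) + 2*(j*(j+1)) := by
        obtain ⟨n, hn⟩ : ∃ n, k - j - 1 = n ∧ k = n + j + 1 := ⟨k-j-1, rfl, by omega⟩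
        rw [hn.1, hn.2, show n + j + 1 + j = n + 2*j + 1 by ring]
        ring
      have hcond2 : d = tri (k+j) + tri (k-j-1) := by omega
      refine ⟨⟨?_, ?_⟩, hcond2, by omega⟩
      · have : k + j ≤ tri (k+j) := tri_ge _
        omega
      · have : k - j - 1 ≤ tri (k-j-1) := tri_ge _
        omega
  · rintro ⟨m, n⟩ hp
    rw [Finset.mem_filter, Finset.mem_product, Finset.mem_range, Finset.mem_range] at hp
    obtain ⟨⟨hmN, hnN⟩, hcond, hnm⟩ := hp
    dsimp only at hnm ⊢
    by_cases hpar : (m+n) % 2 = 0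
    · rw [if_pos hpar]
      dsimp only
      rw [if_pos (by omega : (m-n)/2 ≤ (m+n)/2)]
      have : (m+n)/2 + (m-n)/2 = m ∧ (m+n)/2 - (m-n)/2 = n := by omega
      rw [this.1, this.2]
    · rw [if_neg hpar]
      dsimp only
      rw [if_neg (by omega : ¬ ((m+n+1)/2 ≤ (m-n-1)/2))]
      have : (m+n+1)/2 + (m-n-1)/2 = m ∧ (m+n+1)/2 - (m-n-1)/2 - 1 = n := by omega
      rw [this.1, this.2]
  · rintro ⟨k, j⟩ hq
    rw [Finset.mem_filter, Finset.mem_product, Finset.mem_range, Finset.mem_range] at hq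
    obtain ⟨⟨hkN, hjN⟩, hcond⟩ := hq
    dsimp only at hcond ⊢
    by_cases hkj : k ≤ j
    · rw [if_pos hkj]
      dsimp only
      rw [if_pos (by omega : ((j+k)+(j-k)) % 2 = 0)]
      have : ((j+k)-(j-k))/2 = k ∧ ((j+k)+(j-k))/2 = j := by omega
      rw [this.1, this.2]
    · rw [if_neg hkj]
      dsimp only
      rw [if_neg (by omega : ¬ (((k+j)+(k-j-1)) % 2 = 0))]
      have : ((k+j)+(k-j-1)+1)/2 = k ∧ ((k+j)-(k-j-1)-1)/2 = j := by omega
      rw [this.1, this.2]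
  · intro p _
    rfl

lemma bijB (d N : ℕ) (hd : d < N) :
    ∑ _p ∈ (range N ×ˢ range N).filter (fun p => d = tri p.1 + tri p.2 ∧ ¬ p.2 ≤ p.1), (1:ℚ) =
    ∑ _p ∈ (range N ×ˢ range N).filter (fun p => d = p.1*p.1 + 2 * tri p.2 ∧ p.1 ≠ 0), (1:ℚ) := by
  refine Finset.sum_nbij'
    (fun p => if (p.1+p.2) % 2 = 0 then ((p.2-p.1)/2, (p.1+p.2)/2) else ((p.1+p.2+1)/2, (p.2-p.1-1)/2))
    (fun q => if q.1 ≤ q.2 then (q.2-q.1, q.2+q.1) else (q.1-q.2-1, q.1+q.2)) ?_ ?_ ?_ ?_ ?_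
  · rintro ⟨m, n⟩ hp
    rw [Finset.mem_filter, Finset.mem_product, Finset.mem_range, Finset.mem_range] at hp
    obtain ⟨⟨hmN, hnN⟩, hcond, hnm⟩ := hp
    dsimp only at hcond hnm ⊢
    have e1 := two_tri m; have e2 := two_tri n
    rw [Finset.mem_filter, Finset.mem_product, Finset.mem_range, Finset.mem_range]
    by_cases hpar : (m+n) % 2 = 0
    · rw [if_pos hpar]
      dsimp only
      obtain ⟨k, j, hm', hn', hk, hj⟩ : ∃ k j, n = j + k ∧ m + k = j ∧ (n-m)/2 = k ∧ (m+n)/2 = j := by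
        refine ⟨(n-m)/2, (m+n)/2, by omega, by omega, rfl, rfl⟩
      rw [hk, hj]
      have e3 := two_tri j
      have key : m*(m+1) + n*(n+1) = 2*(k*k) + 2*(j*(j+1)) := by
        have h1 : n = m + 2*k := by omega
        have h2 : j = m + k := by omega
        rw [h1, h2]; ring
      have hcond' : d = k*k + 2 * tri j := by omega
      refine ⟨⟨?_, ?_⟩, hcond', by omega⟩
      · have : k ≤ k*k := sq_ge k
        omega
      · have : j ≤ tri j := tri_ge j
        omega
    · rw [if_neg hpar]
      dsimp only
      obtain ⟨k, j, hm', hn', hk, hj⟩ : ∃ k j, n = k + j ∧ m + j + 1 = k ∧ (m+n+1)/2 = k ∧ (n-m-1)/2 = j := by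
        refine ⟨(m+n+1)/2, (n-m-1)/2, by omega, by omega, rfl, rfl⟩
      rw [hk, hj]
      have e3 := two_tri j
      have key : m*(m+1) + n*(n+1) = 2*(k*k) + 2*(j*(j+1)) := by
        have h1 : n = m + 2*j + 1 := by omega
        have h2 : k = m + j + 1 := by omega
        rw [h1, h2]; ring
      have hcond' : d = k*k + 2 * tri j := by omega
      refine ⟨⟨?_, ?_⟩, hcond', by omega⟩
      · have : k ≤ k*k := sq_ge k
        omega
      · have : j ≤ tri j := tri_ge j
        omega
  · rintro ⟨k, j⟩ hq
    rw [Finset.mem_filter, Finset.mem_product, Finset.mem_range, Finset.mem_range] at hq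
    obtain ⟨⟨hkN, hjN⟩, hcond, hk0⟩ := hq
    dsimp only at hcond hk0 ⊢
    have e3 := two_tri j
    rw [Finset.mem_filter, Finset.mem_product, Finset.mem_range, Finset.mem_range]
    by_cases hkj : k ≤ j
    · rw [if_pos hkj]
      dsimp only
      have e1 := two_tri (j+k); have e2 := two_tri (j-k)
      have key : (j+k)*((j+k)+1) + (j-k)*((j-k)+1) = 2*(k*k) + 2*(j*(j+1)) := by
        obtain ⟨n, hn⟩ : ∃ n, j - k = n ∧ j = n + k := ⟨j-k, rfl, by omega⟩
        rw [hn.1, hn.2, show n + k + k = n + 2*k by ring]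
        ring
      have hcond2 : d = tri (j-k) + tri (j+k) := by omega
      refine ⟨⟨?_, ?_⟩, hcond2, by omega⟩
      · have : j - k ≤ tri (j-k) := tri_ge _
        omega
      · have : j + k ≤ tri (j+k) := tri_ge _
        omega
    · rw [if_neg hkj]
      dsimp only
      have e1 := two_tri (k+j); have e2 := two_tri (k-j-1)
      have key : (k+j)*((k+j)+1) + (k-j-1)*((k-j-1)+1) = 2*(k*k) + 2*(j*(j+1)) := by
        obtain ⟨n, hn⟩ : ∃ n, k - j - 1 = n ∧ k = n + j + 1 := ⟨k-j-1, rfl, by omega⟩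
        rw [hn.1, hn.2, show n + j + 1 + j = n + 2*j + 1 by ring]
        ring
      have hcond2 : d = tri (k-j-1) + tri (k+j) := by omega
      refine ⟨⟨?_, ?_⟩, hcond2, by omega⟩
      · have : k - j - 1 ≤ tri (k-j-1) := tri_ge _
        omega
      · have : k + j ≤ tri (k+j) := tri_ge _
        omega
  · rintro ⟨m, n⟩ hp
    rw [Finset.mem_filter, Finset.mem_product, Finset.mem_range, Finset.mem_range] at hp
    obtain ⟨⟨hmN, hnN⟩, hcond, hnm⟩ := hp
    dsimp only at hnm ⊢
    by_cases hpar : (m+n) % 2 = 0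
    · rw [if_pos hpar]
      dsimp only
      rw [if_pos (by omega : (n-m)/2 ≤ (m+n)/2)]
      have : (m+n)/2 - (n-m)/2 = m ∧ (m+n)/2 + (n-m)/2 = n := by omega
      rw [this.1, this.2]
    · rw [if_neg hpar]
      dsimp only
      rw [if_neg (by omega : ¬ ((m+n+1)/2 ≤ (n-m-1)/2))]
      have : (m+n+1)/2 - (n-m-1)/2 - 1 = m ∧ (m+n+1)/2 + (n-m-1)/2 = n := by omega
      rw [this.1, this.2]
  · rintro ⟨k, j⟩ hq
    rw [Finset.mem_filter, Finset.mem_product, Finset.mem_range, Finset.mem_range] at hq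
    obtain ⟨⟨hkN, hjN⟩, hcond, hk0⟩ := hq
    dsimp only at hcond hk0 ⊢
    by_cases hkj : k ≤ j
    · rw [if_pos hkj]
      dsimp only
      rw [if_pos (by omega : ((j-k)+(j+k)) % 2 = 0)]
      have : ((j+k)-(j-k))/2 = k ∧ ((j-k)+(j+k))/2 = j := by omega
      rw [this.1, this.2]
    · rw [if_neg hkj]
      dsimp only
      rw [if_neg (by omega : ¬ (((k-j-1)+(k+j)) % 2 = 0))]
      have : ((k-j-1)+(k+j)+1)/2 = k ∧ ((k+j)-(k-j-1)-1)/2 = j := by omega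
      rw [this.1, this.2]
  · intro p _
    rfl

lemma T3core (d N : ℕ) (hd : d < N) :
    (∑ p ∈ range N ×ˢ range N, (if d = tri p.1 + tri p.2 then (1:ℚ) else 0)) =
    ∑ p ∈ range N ×ˢ range N, (if d = p.1*p.1 + 2 * tri p.2 then thc p.1 else 0) := by
  have hsplitR : ∀ p : ℕ × ℕ, (if d = p.1*p.1 + 2 * tri p.2 then thc p.1 else 0) =
      (if d = p.1*p.1 + 2 * tri p.2 then (1:ℚ) else 0) +
      (if d = p.1*p.1 + 2 * tri p.2 ∧ p.1 ≠ 0 then (1:ℚ) else 0) := by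
    intro p
    unfold thc
    by_cases h1 : d = p.1*p.1 + 2*tri p.2 <;> by_cases h2 : p.1 = 0 <;>
      simp [h1, h2] <;> norm_num
  rw [Finset.sum_congr rfl (fun p _ => hsplitR p), Finset.sum_add_distrib]
  rw [← Finset.sum_filter, ← Finset.sum_filter, ← Finset.sum_filter]
  have hsplitL : (range N ×ˢ range N).filter (fun p => d = tri p.1 + tri p.2) =
      ((range N ×ˢ range N).filter (fun p => d = tri p.1 + tri p.2 ∧ p.2 ≤ p.1)) ∪
      ((range N ×ˢ range N).filter (fun p => d = tri p.1 + tri p.2 ∧ ¬ p.2 ≤ p.1)) := by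
    rw [← Finset.filter_or]
    refine Finset.filter_congr fun p _ => ?_
    constructor
    · intro h; by_cases hc : p.2 ≤ p.1
      · exact Or.inl ⟨h, hc⟩
      · exact Or.inr ⟨h, hc⟩
    · rintro (⟨h, _⟩ | ⟨h, _⟩) <;> exact h
  rw [hsplitL, Finset.sum_union]
  · rw [bijA d N hd, bijB d N hd]
  · rw [Finset.disjoint_filter]
    rintro p _ ⟨_, h⟩ ⟨_, h'⟩
    exact h' h

lemma T3 : psi * psi = phi * Sf 2 psi := by
  apply PowerSeries.ext; intro d
  have h1 := (Tend.mul tend_psi tend_psi) d (d+1) (Nat.lt_succ_self d)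
  have h2 := (Tend.mul tend_phi (Sf_tend 2 (by norm_num) tend_psi)) d (d+1) (Nat.lt_succ_self d)
  rw [← h1, ← h2, coeff_psiP_sq, coeff_phiP_Sf2psiP, T3core d (d+1) (Nat.lt_succ_self d)]

/-! ### Gaussian binomials (base q²) and the finite Jacobi identity -/

noncomputable def gb : ℕ → ℕ → PS
  | 0, 0 => 1
  | 0, _+1 => 0
  | (n+1), 0 => gb n 0
  | (n+1), (k+1) => gb n k + X^(2*(k+1)) * gb n (k+1)

lemma gb_zero (n : ℕ) : gb n 0 = 1 := by
  induction n with
  | zero => rfl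
  | succ n ih => rw [gb, ih]

lemma gb_gt (n k : ℕ) (h : n < k) : gb n k = 0 := by
  induction n generalizing k with
  | zero => cases k with
    | zero => omega
    | succ k => rfl
  | succ n ih =>
    cases k with
    | zero => omega
    | succ k => rw [gb, ih k (by omega), ih (k+1) (by omega), mul_zero, add_zero]

lemma gb_diag (n : ℕ) : gb n n = 1 := by
  induction n with
  | zero => rfl
  | succ n ih => rw [gb, ih, gb_gt n (n+1) (by omega), mul_zero, add_zero]

/-- partial Pochhammer (q²;q²)ₙ -/
noncomputable def pch (n : ℕ) : PS := pp (fun _ => (-1:ℚ)) (fun k => 2*(k+1)) n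

lemma pch_succ (n : ℕ) : pch (n+1) = pch n * (1 - X^(2*(n+1))) := by
  rw [pch, pp_succ, pch]
  congr 1
  rw [map_neg, map_one]
  ring

lemma gbP : ∀ n k, k ≤ n → gb n k * pch k * pch (n-k) = pch n := by
  intro n
  induction n with
  | zero => intro k hk
            interval_cases k
            simp [gb_zero, pch, pp_zero]
  | succ n ih =>
    intro k hk
    cases k with
    | zero =>
      rw [gb_zero]
      simp [pch, pp_zero]
    | succ k =>
      rcases Nat.lt_or_ge k n with hkn | hkn
      · have h1 : k ≤ n := by omega
        have e1 : n + 1 - (k+1) = n - k := by omega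
        have e2 : n - k = (n - (k+1)) + 1 := by omega
        have hgb : gb (n+1) (k+1) = gb n k + X^(2*(k+1)) * gb n (k+1) := rfl
        have hp : pch (n-k) = pch (n-(k+1)) * (1 - X^(2*(n-k))) := by
          rw [e2, pch_succ, ← e2]
        have t1 : gb n k * pch (k+1) * pch (n-k) = pch n * (1 - X^(2*(k+1))) := by
          rw [pch_succ k]
          calc gb n k * (pch k * (1 - X^(2*(k+1)))) * pch (n-k)
              = (gb n k * pch k * pch (n-k)) * (1 - X^(2*(k+1))) := by ring
            _ = pch n * (1 - X^(2*(k+1))) := by rw [ih k h1]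
        have t2 : (X^(2*(k+1)) * gb n (k+1)) * pch (k+1) * pch (n-k)
            = X^(2*(k+1)) * (pch n * (1 - X^(2*(n-k)))) := by
          rw [hp]
          calc X^(2*(k+1)) * gb n (k+1) * pch (k+1) * (pch (n-(k+1)) * (1 - X^(2*(n-k))))
              = X^(2*(k+1)) * ((gb n (k+1) * pch (k+1) * pch (n-(k+1))) * (1 - X^(2*(n-k)))) := by
                ring
            _ = _ := by rw [ih (k+1) (by omega)]
        rw [e1, hgb, add_mul, add_mul, t1, t2, pch_succ n]
        have e3 : (X:PS)^(2*(k+1)) * X^(2*(n-k)) = X^(2*(n+1)) := by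
          rw [← pow_add]; congr 1; omega
        calc pch n * (1-X^(2*(k+1))) + X^(2*(k+1)) * (pch n * (1 - X^(2*(n-k))))
            = pch n * (1 - X^(2*(k+1)) * X^(2*(n-k))) := by ring
          _ = pch n * (1 - X^(2*(n+1))) := by rw [e3]
      · have hh : k = n := by omega
        subst hh
        rw [gb_diag]
        have hz : k + 1 - (k+1) = 0 := by omega
        rw [hz]
        simp [pch, pp_zero]

lemma pp_constantCoeff (a : ℕ → ℚ) (e : ℕ → ℕ) (he : ∀ k, 0 < e k) (N : ℕ) :
    constantCoeff (R := ℚ) (pp a e N) = 1 := by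
  induction N with
  | zero => simp [pp_zero]
  | succ N ih =>
    rw [pp_succ, map_mul, ih, one_mul, map_add, map_one, map_mul]
    have : constantCoeff (R := ℚ) ((X:PS) ^ (e N)) = 0 := by
      rw [← PowerSeries.coeff_zero_eq_constantCoeff, PowerSeries.coeff_X_pow, if_neg]
      have := he N
      omega
    rw [this, mul_zero, add_zero]

lemma pch_constantCoeff (n : ℕ) : constantCoeff (R := ℚ) (pch n) = 1 :=
  pp_constantCoeff _ _ (fun k => by omega) n

lemma pch_ne_zero (n : ℕ) : pch n ≠ 0 := by
  intro h
  have := pch_constantCoeff n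
  rw [h, map_zero] at this
  norm_num at this

lemma gbR (n k : ℕ) (h : k < n) :
    gb n (k+1) * (1 - X^(2*(k+1))) = gb n k * (1 - X^(2*(n-k))) := by
  have h1 := gbP n (k+1) (by omega)
  have h2 := gbP n k (by omega)
  have e2 : n - k = (n - (k+1)) + 1 := by omega
  have hp : pch (n-k) = pch (n-(k+1)) * (1 - X^(2*(n-k))) := by
    rw [e2, pch_succ, ← e2]
  rw [pch_succ k] at h1
  rw [hp] at h2
  have hM : pch k * pch (n-(k+1)) ≠ 0 :=
    mul_ne_zero (pch_ne_zero k) (pch_ne_zero _)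
  apply mul_right_cancel₀ hM
  calc gb n (k+1) * (1 - X^(2*(k+1))) * (pch k * pch (n-(k+1)))
      = gb n (k+1) * (pch k * (1 - X^(2*(k+1)))) * pch (n-(k+1)) := by ring
    _ = pch n := h1
    _ = gb n k * pch k * (pch (n-(k+1)) * (1 - X^(2*(n-k)))) := h2.symm
    _ = gb n k * (1 - X^(2*(n-k))) * (pch k * pch (n-(k+1))) := by ring

lemma pascal2 (n k : ℕ) : gb (n+1) (k+1) = X^(2*(n-k)) * gb n k + gb n (k+1) := by
  rcases Nat.lt_or_ge k n with h | h
  · have hgb : gb (n+1) (k+1) = gb n k + X^(2*(k+1)) * gb n (k+1) := rfl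
    rw [hgb]
    linear_combination - gbR n k h
  · rcases Nat.eq_or_lt_of_le h with h' | h'
    · subst h'
      rw [gb_diag, gb_gt n (n+1) (by omega), Nat.sub_self]
      norm_num
      exact (gb_diag n).symm
    · rw [gb_gt (n+1) (k+1) (by omega), gb_gt n k (by omega), gb_gt n (k+1) (by omega)]
      simp

/-! ### finite Jacobi triple product at z = 1 -/

def dd (n i : ℕ) : ℕ := if i ≤ n then n - i else i - n

lemma dd_succ (n j : ℕ) : dd (n+1) (j+1) = dd n j := by
  unfold dd; split <;> split <;> omega

noncomputable def HH (n : ℕ) : PS := pp (fun _ => (1:ℚ)) (fun k => 2*k+1) n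

lemma ddz (n i : ℕ) : ((dd n i : ℤ)) * (dd n i) = ((n:ℤ) - i) * ((n:ℤ) - i) := by
  unfold dd
  split
  · rename_i h
    push_cast [h]
    ring
  · rename_i h
    push_cast [show n ≤ i by omega]
    ring

lemma expA (n j : ℕ) (h : j ≤ 2*n) :
    4*n+4-2*(j+2) + dd (n+1) (j+2) * dd (n+1) (j+2) = dd n j * dd n j + (2*n+1) := by
  zify [show 2*(j+2) ≤ 4*n+4 by omega]
  rw [ddz, ddz]
  push_cast
  ring

lemma expC (n j : ℕ) (h : j ≤ 2*n) :
    2*j + dd (n+1) j * dd (n+1) j = dd n j * dd n j + (2*n+1) := by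
  zify
  rw [ddz, ddz]
  push_cast
  ring

lemma gb_decomp (n i : ℕ) (hi : i ≤ 2*n+2) :
    gb (2*n+2) i = (if 2 ≤ i then X^(4*n+4-2*i) * gb (2*n) (i-2) else 0)
                 + (if 1 ≤ i then (1+X^(4*n+2)) * gb (2*n) (i-1) else 0)
                 + X^(2*i) * gb (2*n) i := by
  match i with
  | 0 =>
    rw [if_neg (by omega), if_neg (by omega), gb_zero, gb_zero]
    norm_num
  | 1 =>
    rw [if_neg (by omega), if_pos (by omega)]
    have h1 : gb (2*n+2) 1 = gb (2*n+1) 0 + X^(2*1) * gb (2*n+1) 1 := rfl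
    have h2 : gb (2*n+1) 1 = X^(2*(2*n-0)) * gb (2*n) 0 + gb (2*n) 1 := pascal2 (2*n) 0
    rw [h1, h2, gb_zero, gb_zero]
    simp only [mul_one]
    rw [mul_add, ← pow_add, show 2*1+2*(2*n-0) = 4*n+2 from by omega]
    ring
  | (m+2) =>
    rw [if_pos (by omega), if_pos (by omega)]
    have h1 : gb (2*n+2) (m+2) = gb (2*n+1) (m+1) + X^(2*(m+2)) * gb (2*n+1) (m+2) := rfl
    have h2 : gb (2*n+1) (m+1) = X^(2*(2*n-m)) * gb (2*n) m + gb (2*n) (m+1) := pascal2 (2*n) m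
    have h3 : gb (2*n+1) (m+2) = X^(2*(2*n-(m+1))) * gb (2*n) (m+1) + gb (2*n) (m+2) :=
      pascal2 (2*n) (m+1)
    have e0 : m + 2 - 2 = m := by omega
    have e0' : m + 2 - 1 = m + 1 := by omega
    rw [h1, h2, h3, e0, e0']
    rcases Nat.lt_or_ge m (2*n) with hm | hm
    · have e1 : 2*(2*n-m) = 4*n+4-2*(m+2) := by omega
      have e2 : (X:PS)^(2*(m+2)) * X^(2*(2*n-(m+1))) = X^(4*n+2) := by
        rw [← pow_add]; congr 1; omega
      calc X ^ (2*(2*n-m)) * gb (2*n) m + gb (2*n) (m+1) +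
            X ^ (2*(m+2)) * (X ^ (2*(2*n-(m+1))) * gb (2*n) (m+1) + gb (2*n) (m+2))
          = X ^ (2*(2*n-m)) * gb (2*n) m + gb (2*n) (m+1) +
            (X ^ (2*(m+2)) * X ^ (2*(2*n-(m+1)))) * gb (2*n) (m+1) +
            X ^ (2*(m+2)) * gb (2*n) (m+2) := by ring
        _ = _ := by rw [e2, e1]; ring
    · have hm2 : m = 2*n := by omega
      subst hm2
      rw [gb_gt (2*n) (2*n+1) (by omega), gb_gt (2*n) (2*n+2) (by omega),
        show 4*n+4-2*(2*n+2) = 0 from by omega, show 2*(2*n-2*n) = 0 from by omega]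
      ring

lemma HH_sq : ∀ n, HH n * HH n = ∑ i ∈ range (2*n+1), gb (2*n) i * X^(dd n i * dd n i) := by
  intro n
  induction n with
  | zero =>
    rw [HH]
    simp [pp_zero, gb_zero, dd]
  | succ n ih =>
    have hL : HH (n+1) = HH n * (1 + X^(2*n+1)) := by
      rw [HH, pp_succ, ← HH, map_one, one_mul]
    have hsplit : ∑ i ∈ range (2*n+1+1+1), gb (2*n+2) i * X^(dd (n+1) i * dd (n+1) i)
        = (∑ i ∈ range (2*n+1+1+1),
            (if 2 ≤ i then X^(4*n+4-2*i) * gb (2*n) (i-2) else 0) * X^(dd (n+1) i * dd (n+1) i))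
        + (∑ i ∈ range (2*n+1+1+1),
            (if 1 ≤ i then (1+X^(4*n+2)) * gb (2*n) (i-1) else 0) * X^(dd (n+1) i * dd (n+1) i))
        + (∑ i ∈ range (2*n+1+1+1), X^(2*i) * gb (2*n) i * X^(dd (n+1) i * dd (n+1) i)) := by
      rw [← Finset.sum_add_distrib, ← Finset.sum_add_distrib]
      refine Finset.sum_congr rfl fun i hi => ?_
      rw [Finset.mem_range] at hi
      rw [gb_decomp n i (by omega)]
      ring
    have hSA : (∑ i ∈ range (2*n+1+1+1),
            (if 2 ≤ i then X^(4*n+4-2*i) * gb (2*n) (i-2) else 0) * X^(dd (n+1) i * dd (n+1) i))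
        = ∑ i ∈ range (2*n+1), gb (2*n) i * X^(dd n i * dd n i) * X^(2*n+1) := by
      rw [Finset.sum_range_succ', Finset.sum_range_succ']
      rw [if_neg (by omega : ¬ (2:ℕ) ≤ 0), if_neg (by omega : ¬ (2:ℕ) ≤ 0+1)]
      simp only [zero_mul, add_zero]
      refine Finset.sum_congr rfl fun i hi => ?_
      rw [Finset.mem_range] at hi
      rw [if_pos (by omega : 2 ≤ i+1+1)]
      have e0 : i+1+1-2 = i := by omega
      rw [e0]
      calc X^(4*n+4-2*(i+1+1)) * gb (2*n) i * X^(dd (n+1) (i+1+1) * dd (n+1) (i+1+1))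
          = gb (2*n) i * (X^(4*n+4-2*(i+1+1)) * X^(dd (n+1) (i+1+1) * dd (n+1) (i+1+1))) := by ring
        _ = gb (2*n) i * X^(4*n+4-2*(i+1+1) + dd (n+1) (i+1+1) * dd (n+1) (i+1+1)) := by
            rw [← pow_add]
        _ = gb (2*n) i * X^(dd n i * dd n i + (2*n+1)) := by
            rw [expA n i (by omega : i ≤ 2*n)]
        _ = _ := by rw [pow_add]; ring
    have hSB : (∑ i ∈ range (2*n+1+1+1),
            (if 1 ≤ i then (1+X^(4*n+2)) * gb (2*n) (i-1) else 0) * X^(dd (n+1) i * dd (n+1) i))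
        = ∑ i ∈ range (2*n+1), gb (2*n) i * X^(dd n i * dd n i) * (1+X^(4*n+2)) := by
      rw [Finset.sum_range_succ']
      rw [if_neg (by omega : ¬ (1:ℕ) ≤ 0)]
      simp only [zero_mul, add_zero]
      rw [Finset.sum_range_succ]
      rw [if_pos (by omega : 1 ≤ 2*n+1+1), show 2*n+1+1-1 = 2*n+1 from by omega,
        gb_gt (2*n) (2*n+1) (by omega)]
      simp only [mul_zero, zero_mul, add_zero]
      refine Finset.sum_congr rfl fun i hi => ?_
      rw [Finset.mem_range] at hi
      rw [if_pos (by omega : 1 ≤ i+1), show i+1-1 = i from by omega, dd_succ]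
      ring
    have hSC : (∑ i ∈ range (2*n+1+1+1), X^(2*i) * gb (2*n) i * X^(dd (n+1) i * dd (n+1) i))
        = ∑ i ∈ range (2*n+1), gb (2*n) i * X^(dd n i * dd n i) * X^(2*n+1) := by
      rw [Finset.sum_range_succ, Finset.sum_range_succ,
        gb_gt (2*n) (2*n+1) (by omega), gb_gt (2*n) (2*n+1+1) (by omega)]
      simp only [mul_zero, zero_mul, add_zero]
      refine Finset.sum_congr rfl fun i hi => ?_
      rw [Finset.mem_range] at hi
      calc X^(2*i) * gb (2*n) i * X^(dd (n+1) i * dd (n+1) i)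
          = gb (2*n) i * (X^(2*i) * X^(dd (n+1) i * dd (n+1) i)) := by ring
        _ = gb (2*n) i * X^(2*i + dd (n+1) i * dd (n+1) i) := by rw [← pow_add]
        _ = gb (2*n) i * X^(dd n i * dd n i + (2*n+1)) := by
            rw [expC n i (by omega : i ≤ 2*n)]
        _ = _ := by rw [pow_add]; ring
    rw [hL, show 2*(n+1)+1 = 2*n+1+1+1 from by omega,
      show 2*(n+1) = 2*n+2 from by omega, hsplit, hSA, hSB, hSC]
    calc HH n * (1 + X^(2*n+1)) * (HH n * (1 + X^(2*n+1)))
        = (HH n * HH n) * ((1 + X^(2*n+1)) * (1 + X^(2*n+1))) := by ring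
      _ = (∑ i ∈ range (2*n+1), gb (2*n) i * X^(dd n i * dd n i)) *
            ((1 + X^(2*n+1)) * (1 + X^(2*n+1))) := by rw [ih]
      _ = _ := by
          rw [Finset.sum_mul, ← Finset.sum_add_distrib, ← Finset.sum_add_distrib]
          refine Finset.sum_congr rfl fun i hi => ?_
          have : (X:PS)^(4*n+2) = X^(2*n+1) * X^(2*n+1) := by
            rw [← pow_add]; congr 1; omega
          rw [this]
          ring

/-! ### the bridge: φ = f 2 · hodd² -/

lemma dvd_pch_sub (a b : ℕ) (hab : a ≤ b) : (X:PS)^(2*a+2) ∣ pch b - pch a := by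
  suffices h : ∃ T, pch b = pch a * T ∧ (X:PS)^(2*a+2) ∣ (T - 1) by
    obtain ⟨T, hT, hdvd⟩ := h
    rw [hT, show pch a * T - pch a = pch a * (T - 1) from by ring]
    exact hdvd.mul_left _
  induction b with
  | zero =>
    have : a = 0 := by omega
    subst this
    exact ⟨1, by rw [mul_one], by simp⟩
  | succ b ih =>
    rcases Nat.lt_or_ge a (b+1) with h | h
    · obtain ⟨T, hT, hdvd⟩ := ih (by omega)
      refine ⟨T * (1 - X^(2*(b+1))), by rw [pch_succ, hT]; ring, ?_⟩
      have : T * (1 - X^(2*(b+1))) - 1 = (T - 1) * (1 - X^(2*(b+1))) - X^(2*(b+1)) := by ring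
      rw [this]
      refine dvd_sub (hdvd.mul_right _) ?_
      exact pow_dvd_pow X (by omega)
    · have : a = b+1 := by omega
      subst this
      exact ⟨1, by rw [mul_one], by simp⟩

lemma dvd_pch_sub' (a b m : ℕ) (hab : a ≤ b) (hm : m ≤ 2*a+2) : (X:PS)^m ∣ pch b - pch a :=
  dvd_trans (pow_dvd_pow X hm) (dvd_pch_sub a b hab)

lemma key_coeff (d n i : ℕ) (hn : n = 2*d+2) (hi : i ≤ 2*n)
    (hw1 : n ≤ i + d) (hw2 : i ≤ n + d) :
    ∀ e, e ≤ d → PowerSeries.coeff (R := ℚ) e (pch n * gb (2*n) i) = PowerSeries.coeff (R := ℚ) e 1 := by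
  intro e he
  set M : PS := pch i * pch (2*n-i) with hM
  have hgbP := gbP (2*n) i hi
  have hUM : (pch n * gb (2*n) i) * M = pch n * pch (2*n) := by
    rw [hM, ← hgbP]; ring
  have hMc : constantCoeff (R := ℚ) M = 1 := by
    rw [hM, map_mul, pch_constantCoeff, pch_constantCoeff, mul_one]
  have hM0 : M ≠ 0 := by
    intro h; rw [h, map_zero] at hMc; norm_num at hMc
  have hdvd : (X:PS)^(d+1) ∣ (pch n * pch (2*n) - M) := by
    have hsplit : pch n * pch (2*n) - M
        = pch n * (pch (2*n) - pch (2*n-i)) + (pch n - pch i) * pch (2*n-i) := by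
      rw [hM]; ring
    rw [hsplit]
    refine dvd_add (Dvd.dvd.mul_left ?_ _) (Dvd.dvd.mul_right ?_ _)
    · exact dvd_pch_sub' (2*n-i) (2*n) (d+1) (by omega) (by omega)
    · rcases le_total i n with h | h
      · exact dvd_pch_sub' i n (d+1) h (by omega)
      · have := dvd_pch_sub' n i (d+1) h (by omega)
        have h2 : pch n - pch i = -(pch i - pch n) := by ring
        rw [h2]
        exact this.neg_right
  have hU1 : pch n * gb (2*n) i - 1 = (pch n * pch (2*n) - M) * M⁻¹ := by
    apply mul_right_cancel₀ hM0
    rw [sub_mul, hUM, one_mul]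
    rw [mul_assoc, PowerSeries.inv_mul_cancel M (by rw [hMc]; norm_num), mul_one]
  have hdvd2 : (X:PS)^(d+1) ∣ (pch n * gb (2*n) i - 1) := by
    rw [hU1]; exact hdvd.mul_right _
  have hz : PowerSeries.coeff (R := ℚ) e (pch n * gb (2*n) i - 1) = 0 := by
    rw [PowerSeries.X_pow_dvd_iff] at hdvd2
    exact hdvd2 e (by omega)
  rw [map_sub] at hz
  linarith [hz]

lemma coeff_phiP (d N : ℕ) :
    PowerSeries.coeff (R := ℚ) d (phiP N) = ∑ k ∈ range N, (if d = k*k then thc k else 0) := by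
  unfold phiP
  rw [map_sum]
  refine Finset.sum_congr rfl fun k _ => ?_
  rw [PowerSeries.coeff_C_mul, PowerSeries.coeff_X_pow]
  split <;> simp

lemma count_lemma (d n : ℕ) (hn : n = 2*d+2) :
    ∑ i ∈ range (2*n+1), (if d = dd n i * dd n i then (1:ℚ) else 0)
    = ∑ k ∈ range (d+1), (if d = k*k then thc k else 0) := by
  by_cases hex : ∃ k, k ≤ d ∧ k * k = d
  · obtain ⟨k0, hk0d, hk0⟩ := hex
    have huniq : ∀ k : ℕ, k * k = d → k = k0 := by
      intro k hk
      have : k * k = k0 * k0 := by rw [hk, hk0]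
      nlinarith [this]
    have hRHS : ∑ k ∈ range (d+1), (if d = k*k then thc k else 0) = thc k0 := by
      rw [Finset.sum_eq_single_of_mem k0 (Finset.mem_range.mpr (by omega))]
      · rw [if_pos hk0.symm]
      · intro b _ hb
        rw [if_neg]
        intro hc
        exact hb (huniq b hc.symm)
    rw [hRHS]
    have hfilter : (range (2*n+1)).filter (fun i => d = dd n i * dd n i)
        = if k0 = 0 then {n} else {n - k0, n + k0} := by
      ext i
      rw [Finset.mem_filter, Finset.mem_range]
      constructor
      · rintro ⟨hir, hcond⟩
        have : dd n i = k0 := huniq _ hcond.symm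
        split
        · rename_i h0
          subst h0
          rw [Finset.mem_singleton]
          unfold dd at this
          split at this <;> omega
        · rw [Finset.mem_insert, Finset.mem_singleton]
          unfold dd at this
          split at this <;> omega
      · intro hi
        split at hi
        · rename_i h0
          subst h0
          rw [Finset.mem_singleton] at hi
          refine ⟨by omega, ?_⟩
          have hdd : dd n i = 0 := by unfold dd; split <;> omega
          rw [hdd]
          omega
        · rw [Finset.mem_insert, Finset.mem_singleton] at hi
          have hk0n : k0 ≤ n := by omega
          rcases hi with h | h <;> subst h
          · refine ⟨by omega, ?_⟩
            have : dd n (n - k0) = k0 := by unfold dd; split <;> omega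
            rw [this, hk0]
          · refine ⟨by omega, ?_⟩
            have : dd n (n + k0) = k0 := by unfold dd; split <;> omega
            rw [this, hk0]
    rw [← Finset.sum_filter, hfilter]
    by_cases h0 : k0 = 0
    · rw [if_pos h0, Finset.sum_singleton, h0]
      rfl
    · rw [if_neg h0]
      rw [Finset.sum_pair (by omega : n - k0 ≠ n + k0)]
      unfold thc
      rw [if_neg h0]
      norm_num
  · rw [Finset.sum_eq_zero, Finset.sum_eq_zero]
    · intro k hk
      rw [if_neg]
      intro hc
      exact hex ⟨k, by rw [Finset.mem_range] at hk; omega, hc.symm⟩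
    · intro i _
      rw [if_neg]
      intro hc
      refine hex ⟨dd n i, ?_, hc.symm⟩
      have := sq_ge (dd n i)
      omega

lemma B1' : phi = f 2 * (hodd * hodd) := by
  apply PowerSeries.ext
  intro d
  set n : ℕ := 2*d+2 with hn
  have hdn : d < n := by omega
  have htend : PowerSeries.coeff (R := ℚ) d (f 2 * (hodd * hodd))
      = PowerSeries.coeff (R := ℚ) d (pch n * (HH n * HH n)) := by
    have := ((tend_f 2 (by norm_num)).mul (tend_hodd.mul tend_hodd)) d n hdn
    exact this.symm
  rw [htend, HH_sq, Finset.mul_sum, map_sum]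
  have hterm : ∀ i ∈ range (2*n+1),
      PowerSeries.coeff (R := ℚ) d (pch n * (gb (2*n) i * X^(dd n i * dd n i)))
      = (if d = dd n i * dd n i then (1:ℚ) else 0) := by
    intro i hi
    rw [Finset.mem_range] at hi
    rw [show pch n * (gb (2*n) i * X^(dd n i * dd n i))
        = (pch n * gb (2*n) i) * X^(dd n i * dd n i) from by ring,
      PowerSeries.coeff_mul_X_pow']
    by_cases he : dd n i * dd n i ≤ d
    · rw [if_pos he]
      have hddd : dd n i ≤ d := by
        have := sq_ge (dd n i)
        omega
      have hw : n ≤ i + d ∧ i ≤ n + d := by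
        unfold dd at hddd
        split at hddd <;> omega
      rw [key_coeff d n i hn (by omega) hw.1 hw.2 (d - dd n i * dd n i) (by omega)]
      rw [PowerSeries.coeff_one]
      by_cases hde : d = dd n i * dd n i
      · rw [if_pos (by omega), if_pos hde]
      · rw [if_neg (by omega), if_neg hde]
    · rw [if_neg he, if_neg (by omega)]
  rw [Finset.sum_congr rfl hterm, count_lemma d n hn]
  have := tend_phi d (d+1) (Nat.lt_succ_self d)
  rw [← this, coeff_phiP]

/-! ### product forms of φ and ψ -/

lemma B1 : phi * (f 1 * f 1) * (f 4 * f 4) = f 2 ^ 5 := by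
  rw [B1']
  calc f 2 * (hodd * hodd) * (f 1 * f 1) * (f 4 * f 4)
      = f 2 * ((hodd * f 1 * f 4) * (hodd * f 1 * f 4)) := by ring
    _ = f 2 * ((f 2 * f 2) * (f 2 * f 2)) := by rw [hodd_f]
    _ = f 2 ^ 5 := by ring

lemma mul_low (D G : PS) (n : ℕ) (h : ∀ m, m < n → PowerSeries.coeff (R := ℚ) m D = 0) :
    PowerSeries.coeff (R := ℚ) n (D * G) = PowerSeries.coeff (R := ℚ) n D * constantCoeff (R := ℚ) G := by
  rw [PowerSeries.coeff_mul]
  rw [Finset.sum_eq_single_of_mem (n, 0) (Finset.HasAntidiagonal.mem_antidiagonal.mpr (by omega))]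
  · rw [PowerSeries.coeff_zero_eq_constantCoeff]
  · rintro ⟨i, j⟩ hij hne
    rw [Finset.HasAntidiagonal.mem_antidiagonal] at hij
    have : i < n := by
      rcases Nat.lt_or_ge i n with h' | h'
      · exact h'
      · exfalso; apply hne
        have : i = n := by omega
        subst this
        have : j = 0 := by omega
        subst this
        rfl
    rw [h i this, zero_mul]

lemma rhs_zero (B D : PS) (n : ℕ) (hn : 1 ≤ n)
    (h : ∀ m, m < n → PowerSeries.coeff (R := ℚ) m D = 0) :
    PowerSeries.coeff (R := ℚ) n (B * Sf 2 D) = 0 := by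
  rw [PowerSeries.coeff_mul]
  apply Finset.sum_eq_zero
  rintro ⟨i, j⟩ hij
  rw [Finset.HasAntidiagonal.mem_antidiagonal] at hij
  rw [coeff_Sf]
  by_cases h2 : 2 ∣ j
  · rw [if_pos h2, h (j/2) (by omega), mul_zero]
  · rw [if_neg h2, mul_zero]

lemma neg_fix (F : PS) (h : F = - Sf 2 F) : F = 0 := by
  apply PowerSeries.ext
  intro n
  induction n using Nat.strong_induction_on with
  | _ n ih =>
  have hc : PowerSeries.coeff (R := ℚ) n F = - PowerSeries.coeff (R := ℚ) n (Sf 2 F) := by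
    rw [← map_neg, ← h]
  rw [coeff_Sf] at hc
  rw [map_zero]
  by_cases h2 : 2 ∣ n
  · rw [if_pos h2] at hc
    rcases Nat.eq_zero_or_pos n with h0 | h0
    · subst h0
      rw [Nat.zero_div] at hc
      linarith [hc]
    · rw [ih (n/2) (by omega), map_zero] at hc
      rw [hc]
      ring
  · rw [if_neg h2] at hc
    rw [hc]
    ring

lemma sub_uniq (A B w v : PS) (hrelw : w*w*A = B * Sf 2 w) (hrelv : v*v*A = B * Sf 2 v)
    (h0 : PowerSeries.coeff (R := ℚ) 0 w = PowerSeries.coeff (R := ℚ) 0 v)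
    (hc : constantCoeff (R := ℚ) ((w+v)*A) ≠ 0) : w = v := by
  apply PowerSeries.ext
  intro n
  induction n using Nat.strong_induction_on with
  | _ n ih =>
  rcases Nat.eq_zero_or_pos n with h0' | h0'
  · subst h0'; exact h0
  have hD : ∀ m, m < n → PowerSeries.coeff (R := ℚ) m (w - v) = 0 := by
    intro m hm
    rw [map_sub, ih m hm, sub_self]
  have hrel : (w - v) * ((w+v)*A) = B * Sf 2 (w - v) := by
    have hS : Sf 2 (w - v) = Sf 2 w - Sf 2 v := by
      have : Sf 2 ((w - v) + v) = Sf 2 (w-v) + Sf 2 v := Sf_add 2 _ _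
      rw [show (w-v) + v = w from by ring] at this
      rw [this]; ring
    rw [hS, mul_sub, ← hrelw, ← hrelv]
    ring
  have h1 : PowerSeries.coeff (R := ℚ) n ((w - v) * ((w+v)*A)) = 0 := by
    rw [hrel]
    exact rhs_zero B (w-v) n h0' hD
  rw [mul_low (w-v) ((w+v)*A) n hD] at h1
  have h2 : PowerSeries.coeff (R := ℚ) n (w - v) = 0 := by
    rcases mul_eq_zero.mp h1 with h | h
    · exact h
    · exact absurd h hc
  rw [map_sub] at h2
  linarith [h2]

lemma K2 : phi * phi = Sf 2 (phi * phi) + C (R := ℚ) 4 * (X * Sf 4 (psi * psi)) := by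
  have hA : phi * phi = Sf 4 (phi*phi) + C (R := ℚ) 4 * (X * Sf 4 (psi*psi))
      + C (R := ℚ) 4 * ((X*X) * Sf 8 (psi*psi)) := by
    have e1 : Sf 4 phi * Sf 4 phi = Sf 4 (phi*phi) := (Sf_mul 4 (by norm_num) _ _).symm
    have e2 : Sf 8 psi * Sf 8 psi = Sf 8 (psi*psi) := (Sf_mul 8 (by norm_num) _ _).symm
    have e3 : Sf 4 phi * Sf 8 psi = Sf 4 (psi * psi) := by
      rw [show Sf 8 psi = Sf 4 (Sf 2 psi) from by rw [Sf_comp 4 2 (by norm_num) (by norm_num)],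
        ← Sf_mul 4 (by norm_num), ← T3]
    have e4 : (C (R := ℚ) 2) * (C (R := ℚ) 2) = C (R := ℚ) 4 := by rw [← map_mul]; norm_num
    have e5 : (2:PS) * (C (R := ℚ) 2) = C (R := ℚ) 4 := by
      rw [show (2:PS) = C (R := ℚ) 2 from (map_ofNat (C (R := ℚ)) 2).symm, ← map_mul]; norm_num
    conv_lhs => rw [T1]
    calc (Sf 4 phi + C (R := ℚ) 2 * (X * Sf 8 psi)) * (Sf 4 phi + C (R := ℚ) 2 * (X * Sf 8 psi))
        = Sf 4 phi * Sf 4 phi + ((2:PS) * C (R := ℚ) 2) * (X * (Sf 4 phi * Sf 8 psi))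
          + (C (R := ℚ) 2 * C (R := ℚ) 2) * ((X*X) * (Sf 8 psi * Sf 8 psi)) := by ring
      _ = _ := by rw [e1, e2, e3, e4, e5]
  have hZ : (phi*phi - Sf 2 (phi*phi) - C (R := ℚ) 4 * (X * Sf 4 (psi*psi)))
      = - Sf 2 (phi*phi - Sf 2 (phi*phi) - C (R := ℚ) 4 * (X * Sf 4 (psi*psi))) := by
    have hS1 : Sf 2 (phi*phi - Sf 2 (phi*phi) - C (R := ℚ) 4 * (X * Sf 4 (psi*psi)))
        = Sf 2 (phi*phi) - Sf 4 (phi*phi) - C (R := ℚ) 4 * ((X*X) * Sf 8 (psi*psi)) := by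
      have hsub : ∀ F G : PS, Sf 2 (F - G) = Sf 2 F - Sf 2 G := by
        intro F G
        have : Sf 2 ((F - G) + G) = Sf 2 (F-G) + Sf 2 G := Sf_add 2 _ _
        rw [show (F-G) + G = F from by ring] at this
        rw [this]; ring
      have c1 : Sf 2 (Sf 2 (phi*phi)) = Sf 4 (phi*phi) := by
        rw [Sf_comp 2 2 (by norm_num) (by norm_num)]
      have c2 : Sf 2 (Sf 4 (psi*psi)) = Sf 8 (psi*psi) := by
        rw [Sf_comp 2 4 (by norm_num) (by norm_num)]
      have c3 : Sf 2 (X:PS) = X * X := by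
        rw [show (X:PS) = X^1 from (pow_one X).symm, Sf_X_pow 2 (by norm_num)]
        rw [show 2*1 = 1+1 from rfl, pow_add, pow_one]
      have c4 : Sf 2 (C (R := ℚ) 4 * (X * Sf 4 (psi*psi))) = C (R := ℚ) 4 * ((X*X) * Sf 8 (psi*psi)) := by
        rw [Sf_mul 2 (by norm_num), Sf_C 2 (by norm_num), Sf_mul 2 (by norm_num), c3, c2]
      rw [hsub, hsub, c1, c4]
    rw [hS1]
    linear_combination hA
  have := neg_fix _ hZ
  linear_combination this

lemma constantCoeff_f (m : ℕ) (hm : 0 < m) : constantCoeff (R := ℚ) (f m) = 1 := by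
  have h := tend_f m hm 0 1 (by omega)
  rw [← PowerSeries.coeff_zero_eq_constantCoeff, ← h,
    PowerSeries.coeff_zero_eq_constantCoeff]
  exact pp_constantCoeff _ _ (fun k => by have := hm1 m hm k; omega) 1

lemma constantCoeff_psi : constantCoeff (R := ℚ) psi = 1 := by
  have h := tend_psi 0 1 (by omega)
  rw [← PowerSeries.coeff_zero_eq_constantCoeff, ← h]
  unfold psiP tri
  simp

lemma constantCoeff_phi : constantCoeff (R := ℚ) phi = 1 := by
  have h := tend_phi 0 1 (by omega)
  rw [← PowerSeries.coeff_zero_eq_constantCoeff, ← h]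
  unfold phiP thc
  simp

lemma f_ne_zero (m : ℕ) (hm : 0 < m) : f m ≠ 0 := by
  intro h
  have := constantCoeff_f m hm
  rw [h, map_zero] at this
  norm_num at this

lemma B2 : psi * f 1 = f 2 * f 2 := by
  have hrelw : (psi * f 1) * (psi * f 1) * (f 4 * f 4) = (f 2)^4 * Sf 2 (psi * f 1) := by
    have h1 : Sf 2 (psi * f 1) = Sf 2 psi * f 2 := by
      rw [Sf_mul 2 (by norm_num), Sf_f 2 1 (by norm_num) (by norm_num)]
    rw [h1]
    calc psi * f 1 * (psi * f 1) * (f 4 * f 4)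
        = (psi * psi) * (f 1 * f 1) * (f 4 * f 4) := by ring
      _ = (phi * Sf 2 psi) * (f 1 * f 1) * (f 4 * f 4) := by rw [T3]
      _ = (phi * (f 1 * f 1) * (f 4 * f 4)) * Sf 2 psi := by ring
      _ = f 2 ^5 * Sf 2 psi := by rw [B1]
      _ = f 2 ^4 * (Sf 2 psi * f 2) := by ring
  have hrelv : (f 2 * f 2) * (f 2 * f 2) * (f 4 * f 4) = (f 2)^4 * Sf 2 (f 2 * f 2) := by
    rw [Sf_mul 2 (by norm_num), Sf_f 2 2 (by norm_num) (by norm_num)]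
    ring
  refine sub_uniq (f 4 * f 4) ((f 2)^4) _ _ hrelw hrelv ?_ ?_
  · simp only [PowerSeries.coeff_zero_eq_constantCoeff, map_mul, constantCoeff_psi,
      constantCoeff_f 1 (by norm_num), constantCoeff_f 2 (by norm_num)]
  · rw [map_mul, map_add, map_mul, map_mul, map_mul, constantCoeff_psi,
      constantCoeff_f 1 (by norm_num), constantCoeff_f 2 (by norm_num),
      constantCoeff_f 4 (by norm_num)]
    norm_num

/-! ### assembly -/

lemma U2_C_mul (c : ℚ) (F : PS) : U2 (C (R := ℚ) c * F) = C (R := ℚ) c * U2 F := by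
  apply PowerSeries.ext; intro n
  rw [coeff_U2, PowerSeries.coeff_C_mul, PowerSeries.coeff_C_mul, coeff_U2]

lemma Sf_comp' (a b c : ℕ) (ha : 0 < a) (hb : 0 < b) (h : a*b = c) (F : PS) :
    Sf a (Sf b F) = Sf c F := by rw [Sf_comp a b ha hb, h]

lemma Sf_f' (m k c : ℕ) (hm : 0 < m) (hk : 0 < k) (h : m*k = c) : Sf m (f k) = f c := by
  rw [Sf_f m k hm hk, h]

lemma U2_phi : U2 phi = C (R := ℚ) 2 * Sf 4 psi := by
  conv_lhs => rw [T1]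
  rw [U2_add]
  rw [show Sf 4 phi = Sf 2 (Sf 2 phi) from (Sf_comp' 2 2 4 (by norm_num) (by norm_num) rfl phi).symm,
    U2_even, U2_C_mul,
    show Sf 8 psi = Sf 2 (Sf 4 psi) from (Sf_comp' 2 4 8 (by norm_num) (by norm_num) rfl psi).symm,
    U2_odd, zero_add]

lemma U2_phi2 : U2 (phi * phi) = C (R := ℚ) 4 * Sf 2 (psi * psi) := by
  conv_lhs => rw [K2]
  rw [U2_add, U2_even, U2_C_mul,
    show Sf 4 (psi*psi) = Sf 2 (Sf 2 (psi*psi)) from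
      (Sf_comp' 2 2 4 (by norm_num) (by norm_num) rfl _).symm,
    U2_odd, zero_add]

lemma U2_phi4 : U2 ((phi * phi) * (phi * phi)) = C (R := ℚ) 8 * ((phi*phi) * Sf 2 (psi * psi)) := by
  conv_lhs => rw [K2]
  have hexp : (Sf 2 (phi*phi) + C (R := ℚ) 4 * (X * Sf 4 (psi*psi))) *
      (Sf 2 (phi*phi) + C (R := ℚ) 4 * (X * Sf 4 (psi*psi)))
      = Sf 2 ((phi*phi) * (phi*phi))
      + C (R := ℚ) 8 * (X * Sf 2 ((phi*phi) * Sf 2 (psi*psi)))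
      + C (R := ℚ) 16 * (Sf 2 (X * (Sf 2 (psi*psi) * Sf 2 (psi*psi)))) := by
    have e1 : Sf 2 (phi*phi) * Sf 2 (phi*phi) = Sf 2 ((phi*phi)*(phi*phi)) :=
      (Sf_mul 2 (by norm_num) _ _).symm
    have e2 : Sf 4 (psi*psi) = Sf 2 (Sf 2 (psi*psi)) :=
      (Sf_comp' 2 2 4 (by norm_num) (by norm_num) rfl _).symm
    have e3 : Sf 2 ((phi*phi) * Sf 2 (psi*psi)) = Sf 2 (phi*phi) * Sf 2 (Sf 2 (psi*psi)) :=
      Sf_mul 2 (by norm_num) _ _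
    have e4 : Sf 2 (X * (Sf 2 (psi*psi) * Sf 2 (psi*psi)))
        = (X*X) * (Sf 2 (Sf 2 (psi*psi)) * Sf 2 (Sf 2 (psi*psi))) := by
      rw [Sf_mul 2 (by norm_num), Sf_mul 2 (by norm_num)]
      congr 1
      rw [show (X:PS) = X^1 from (pow_one X).symm, Sf_X_pow 2 (by norm_num)]
      rw [show 2*1 = 1+1 from rfl, pow_add, pow_one]
    have e5 : (2:PS) * C (R := ℚ) 4 = C (R := ℚ) 8 := by
      rw [show (2:PS) = C (R := ℚ) 2 from (map_ofNat (C (R := ℚ)) 2).symm, ← map_mul]; norm_num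
    have e6 : C (R := ℚ) 4 * C (R := ℚ) 4 = C (R := ℚ) 16 := by rw [← map_mul]; norm_num
    rw [e3, e4, ← e1, ← e2, ← e5, ← e6]
    ring
  rw [hexp, U2_add, U2_add, U2_even, U2_C_mul, U2_odd, U2_C_mul, U2_even]
  ring

lemma last_id : psi*psi*psi * (phi*phi) * Sf 2 (psi*psi) * (f 1)^7 = (f 2)^14 := by
  have hS : Sf 2 psi * f 2 = f 4 * f 4 := by
    have := congrArg (Sf 2) B2
    rw [Sf_mul 2 (by norm_num), Sf_mul 2 (by norm_num),
      Sf_f' 2 1 2 (by norm_num) (by norm_num) rfl, Sf_f' 2 2 4 (by norm_num) (by norm_num) rfl] at this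
    exact this
  have hne : (f 4 * f 4) * (f 4 * f 4) * (f 2 * f 2) ≠ 0 := by
    refine mul_ne_zero (mul_ne_zero (mul_ne_zero ?_ ?_) (mul_ne_zero ?_ ?_)) (mul_ne_zero ?_ ?_) <;>
      first | exact f_ne_zero 4 (by norm_num) | exact f_ne_zero 2 (by norm_num)
  apply mul_right_cancel₀ hne
  have hSf2 : Sf 2 (psi * psi) = Sf 2 psi * Sf 2 psi := Sf_mul 2 (by norm_num) _ _
  calc psi*psi*psi * (phi*phi) * Sf 2 (psi*psi) * (f 1)^7 * ((f 4 * f 4) * (f 4 * f 4) * (f 2 * f 2))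
      = ((psi * f 1) * (psi * f 1) * (psi * f 1)) *
        ((phi * (f 1 * f 1) * (f 4 * f 4)) * (phi * (f 1 * f 1) * (f 4 * f 4))) *
        ((Sf 2 psi * f 2) * (Sf 2 psi * f 2)) := by
          rw [hSf2]; ring
    _ = ((f 2 * f 2) * (f 2 * f 2) * (f 2 * f 2)) * ((f 2^5) * (f 2^5)) *
        ((f 4 * f 4) * (f 4 * f 4)) := by rw [B2, B1, hS]
    _ = (f 2)^14 * ((f 4 * f 4) * (f 4 * f 4) * (f 2 * f 2)) := by ring

lemma master (P : PS) (hP : P * (f 1 * f 1) = f 2) :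
    U2 (U2 (U2 P)) * (f 1)^16 =
      C (R := ℚ) 64 * ((f 2)^8 * (psi*psi*psi * (phi*phi) * Sf 2 (psi*psi))) := by
  have hne1 : f 1 * f 1 ≠ 0 := mul_ne_zero (f_ne_zero 1 (by norm_num)) (f_ne_zero 1 (by norm_num))
  have hf1 : f 1 ≠ 0 := f_ne_zero 1 (by norm_num)
  -- step 0
  have st0 : P * (f 2)^4 = phi * (f 4 * f 4) := by
    apply mul_right_cancel₀ hne1
    calc P * (f 2)^4 * (f 1 * f 1) = (P * (f 1 * f 1)) * (f 2)^4 := by ring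
      _ = f 2 * (f 2)^4 := by rw [hP]
      _ = f 2 ^5 := by ring
      _ = phi * (f 1 * f 1) * (f 4 * f 4) := B1.symm
      _ = phi * (f 4 * f 4) * (f 1 * f 1) := by ring
  -- transport lemmas
  have h24 : Sf 2 ((f 1)^4) = (f 2)^4 := by
    rw [Sf_pow 2 (by norm_num), Sf_f' 2 1 2 (by norm_num) (by norm_num) rfl]
  have h42 : Sf 2 ((f 2)*(f 2)) = f 4 * f 4 := by
    rw [Sf_mul 2 (by norm_num), Sf_f' 2 2 4 (by norm_num) (by norm_num) rfl]
  -- step 1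
  have st1 : U2 P * (f 1)^4 = C (R := ℚ) 2 * ((f 2) * (f 2) * Sf 4 psi) := by
    have h := congrArg U2 st0
    rw [show P * (f 2)^4 = Sf 2 ((f 1)^4) * P from by rw [h24]; ring, U2_even_mul] at h
    rw [show phi * (f 4 * f 4) = Sf 2 ((f 2)*(f 2)) * phi from by rw [h42]; ring,
      U2_even_mul, U2_phi] at h
    calc U2 P * (f 1)^4 = (f 1)^4 * U2 P := by ring
      _ = f 2 * f 2 * (C (R := ℚ) 2 * Sf 4 psi) := h
      _ = C (R := ℚ) 2 * ((f 2) * (f 2) * Sf 4 psi) := by ring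
  -- step 2
  have hB1sq : (phi*phi) * ((f 1)^4 * ((f 4*f 4)*(f 4*f 4))) = (f 2)^10 := by
    have := congrArg (fun t => t * t) B1
    beta_reduce at this
    calc (phi*phi) * ((f 1)^4 * ((f 4*f 4)*(f 4*f 4)))
        = (phi * (f 1 * f 1) * (f 4 * f 4)) * (phi * (f 1 * f 1) * (f 4 * f 4)) := by ring
      _ = f 2^5 * f 2^5 := this
      _ = (f 2)^10 := by ring
  have st2 : U2 (U2 P) * (f 1)^8 = C (R := ℚ) 8 * ((f 2)^4 * Sf 2 (psi*psi*psi)) := by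
    have hmul : U2 P * (f 2)^10 = C (R := ℚ) 2 * ((f 2)*(f 2)*((f 4*f 4)*(f 4*f 4)) * Sf 4 psi * (phi*phi)) := by
      calc U2 P * (f 2)^10
          = (U2 P * (f 1)^4) * ((phi*phi) * ((f 4*f 4)*(f 4*f 4))) := by
            rw [← hB1sq]; ring
        _ = (C (R := ℚ) 2 * ((f 2) * (f 2) * Sf 4 psi)) * ((phi*phi) * ((f 4*f 4)*(f 4*f 4))) := by
            rw [st1]
        _ = _ := by ring
    have hW : Sf 2 ((f 1)*(f 1)*((f 2*f 2)*(f 2*f 2)) * Sf 2 psi)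
        = (f 2)*(f 2)*((f 4*f 4)*(f 4*f 4)) * Sf 4 psi := by
      rw [Sf_mul 2 (by norm_num), Sf_mul 2 (by norm_num), Sf_mul 2 (by norm_num),
        Sf_mul 2 (by norm_num), Sf_mul 2 (by norm_num),
        Sf_f' 2 1 2 (by norm_num) (by norm_num) rfl, Sf_f' 2 2 4 (by norm_num) (by norm_num) rfl,
        Sf_comp' 2 2 4 (by norm_num) (by norm_num) rfl]
    have h10 : Sf 2 ((f 1)^5) = (f 2)^5 := by
      rw [Sf_pow 2 (by norm_num), Sf_f' 2 1 2 (by norm_num) (by norm_num) rfl]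
    have h := congrArg U2 hmul
    rw [show U2 P * (f 2)^10 = Sf 2 (((f 1)^5)*((f 1)^5)) * U2 P from by
        rw [Sf_mul 2 (by norm_num), h10]; ring, U2_even_mul] at h
    rw [show C (R := ℚ) 2 * ((f 2)*(f 2)*((f 4*f 4)*(f 4*f 4)) * Sf 4 psi * (phi*phi))
        = C (R := ℚ) 2 * (Sf 2 ((f 1)*(f 1)*((f 2*f 2)*(f 2*f 2)) * Sf 2 psi) * (phi*phi)) from by
        rw [hW], U2_C_mul, U2_even_mul, U2_phi2] at h
    -- h : f1^5*f1^5 * U2 (U2 P) = C2 * (f1*f1*(f2*f2*(f2*f2))*Sf2 psi * (C4 * Sf 2 (psi*psi)))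
    have hcombine : C (R := ℚ) 2 * ((f 1)*(f 1)*((f 2*f 2)*(f 2*f 2)) * Sf 2 psi * (C (R := ℚ) 4 * Sf 2 (psi*psi)))
        = (f 1 * f 1) * (C (R := ℚ) 8 * ((f 2)^4 * Sf 2 (psi*psi*psi))) := by
      have e1 : Sf 2 psi * Sf 2 (psi*psi) = Sf 2 (psi*psi*psi) := by
        rw [← Sf_mul 2 (by norm_num)]
        congr 1
        ring
      have e2 : C (R := ℚ) 2 * C (R := ℚ) 4 = C (R := ℚ) 8 := by rw [← map_mul]; norm_num
      calc C (R := ℚ) 2 * ((f 1)*(f 1)*((f 2*f 2)*(f 2*f 2)) * Sf 2 psi * (C (R := ℚ) 4 * Sf 2 (psi*psi)))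
          = (C (R := ℚ) 2 * C (R := ℚ) 4) * ((f 1)*(f 1)*((f 2*f 2)*(f 2*f 2)) * (Sf 2 psi * Sf 2 (psi*psi))) := by
            ring
        _ = _ := by rw [e1, e2]; ring
    rw [hcombine] at h
    apply mul_left_cancel₀ hne1
    calc (f 1 * f 1) * (U2 (U2 P) * (f 1)^8)
        = (f 1)^5 * (f 1)^5 * U2 (U2 P) := by ring
      _ = (f 1 * f 1) * (C (R := ℚ) 8 * ((f 2)^4 * Sf 2 (psi*psi*psi))) := h
  -- step 3
  have hB1quad : ((phi*phi)*(phi*phi)) * ((f 1)^8 * (((f 4*f 4)*(f 4*f 4))*((f 4*f 4)*(f 4*f 4))))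
      = (f 2)^20 := by
    have h2 := congrArg (fun t => (t * t) * (t * t)) B1
    beta_reduce at h2
    calc ((phi*phi)*(phi*phi)) * ((f 1)^8 * (((f 4*f 4)*(f 4*f 4))*((f 4*f 4)*(f 4*f 4))))
        = ((phi * (f 1 * f 1) * (f 4 * f 4)) * (phi * (f 1 * f 1) * (f 4 * f 4))) *
          ((phi * (f 1 * f 1) * (f 4 * f 4)) * (phi * (f 1 * f 1) * (f 4 * f 4))) := by ring
      _ = (f 2^5 * f 2^5) * (f 2^5 * f 2^5) := h2
      _ = (f 2)^20 := by ring
  have hmul3 : U2 (U2 P) * (f 2)^20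
      = C (R := ℚ) 8 * ((f 2)^4 * (((f 4*f 4)*(f 4*f 4))*((f 4*f 4)*(f 4*f 4))) * Sf 2 (psi*psi*psi) *
          ((phi*phi)*(phi*phi))) := by
    calc U2 (U2 P) * (f 2)^20
        = (U2 (U2 P) * (f 1)^8) * (((phi*phi)*(phi*phi)) *
            (((f 4*f 4)*(f 4*f 4))*((f 4*f 4)*(f 4*f 4)))) := by rw [← hB1quad]; ring
      _ = (C (R := ℚ) 8 * ((f 2)^4 * Sf 2 (psi*psi*psi))) * (((phi*phi)*(phi*phi)) *
            (((f 4*f 4)*(f 4*f 4))*((f 4*f 4)*(f 4*f 4)))) := by rw [st2]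
      _ = _ := by ring
  have hW3 : Sf 2 ((f 1 * f 1) * (f 1 * f 1) * (((f 2*f 2)*(f 2*f 2))*((f 2*f 2)*(f 2*f 2))) * (psi*psi*psi))
      = (f 2 * f 2) * (f 2 * f 2) * (((f 4*f 4)*(f 4*f 4))*((f 4*f 4)*(f 4*f 4))) * Sf 2 (psi*psi*psi) := by
    simp only [Sf_mul 2 (by norm_num : 0 < 2), Sf_f' 2 1 2 (by norm_num) (by norm_num) rfl,
      Sf_f' 2 2 4 (by norm_num) (by norm_num) rfl]
  have h20 : Sf 2 ((f 1)^10) = (f 2)^10 := by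
    rw [Sf_pow 2 (by norm_num), Sf_f' 2 1 2 (by norm_num) (by norm_num) rfl]
  have h := congrArg U2 hmul3
  rw [show U2 (U2 P) * (f 2)^20 = Sf 2 ((f 1)^10 * (f 1)^10) * U2 (U2 P) from by
      rw [Sf_mul 2 (by norm_num), h20]; ring, U2_even_mul] at h
  rw [show C (R := ℚ) 8 * ((f 2)^4 * (((f 4*f 4)*(f 4*f 4))*((f 4*f 4)*(f 4*f 4))) * Sf 2 (psi*psi*psi) *
          ((phi*phi)*(phi*phi)))
      = C (R := ℚ) 8 * (Sf 2 ((f 1 * f 1) * (f 1 * f 1) * (((f 2*f 2)*(f 2*f 2))*((f 2*f 2)*(f 2*f 2))) *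
          (psi*psi*psi)) * ((phi*phi)*(phi*phi))) from by rw [hW3]; ring,
    U2_C_mul, U2_even_mul, U2_phi4] at h
  have hcomb : C (R := ℚ) 8 * ((f 1 * f 1) * (f 1 * f 1) * (((f 2*f 2)*(f 2*f 2))*((f 2*f 2)*(f 2*f 2))) *
        (psi*psi*psi) * (C (R := ℚ) 8 * ((phi*phi) * Sf 2 (psi*psi))))
      = ((f 1 * f 1) * (f 1 * f 1)) *
        (C (R := ℚ) 64 * ((f 2)^8 * (psi*psi*psi * (phi*phi) * Sf 2 (psi*psi)))) := by
    have e2 : C (R := ℚ) 8 * C (R := ℚ) 8 = C (R := ℚ) 64 := by rw [← map_mul]; norm_num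
    calc C (R := ℚ) 8 * ((f 1 * f 1) * (f 1 * f 1) * (((f 2*f 2)*(f 2*f 2))*((f 2*f 2)*(f 2*f 2))) *
        (psi*psi*psi) * (C (R := ℚ) 8 * ((phi*phi) * Sf 2 (psi*psi))))
        = (C (R := ℚ) 8 * C (R := ℚ) 8) * ((f 1 * f 1) * (f 1 * f 1) *
            (((f 2*f 2)*(f 2*f 2))*((f 2*f 2)*(f 2*f 2))) *
            (psi*psi*psi) * ((phi*phi) * Sf 2 (psi*psi))) := by ring
      _ = _ := by rw [e2]; ring
  rw [hcomb] at h
  have hne4 : (f 1 * f 1) * (f 1 * f 1) ≠ 0 := mul_ne_zero hne1 hne1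
  apply mul_left_cancel₀ hne4
  calc ((f 1 * f 1) * (f 1 * f 1)) * (U2 (U2 (U2 P)) * (f 1)^16)
      = (f 1)^10 * (f 1)^10 * U2 (U2 (U2 P)) := by ring
    _ = _ := h

end OP

open OP in
/-- $\sum_{n\ge 0}\bar p(8n+7)q^n = 64 f_2^{22}/f_1^{23}$. -/
theorem overpartition_8n7_genfun
    (p : ℕ → ℕ)
    (hp : PowerSeries.mk (fun n => (p n : ℚ)) = f 2 * ((f 1) ^ 2)⁻¹) :
    PowerSeries.mk (fun n => (p (8 * n + 7) : ℚ)) =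
      64 * (f 2) ^ 22 * ((f 1) ^ 23)⁻¹ := by
  set P : OP.PS := PowerSeries.mk (fun n => (p n : ℚ)) with hPdef
  have hc2 : constantCoeff (R := ℚ) ((f 1)^2) ≠ 0 := by
    rw [map_pow, constantCoeff_f 1 (by norm_num)]
    norm_num
  have hP : P * (f 1 * f 1) = f 2 := by
    rw [hp]
    calc f 2 * ((f 1)^2)⁻¹ * (f 1 * f 1) = f 2 * (((f 1)^2)⁻¹ * (f 1)^2) := by ring
      _ = f 2 * 1 := by
          rw [show ((f 1)^2)⁻¹ * (f 1)^2 = 1 from by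
            rw [mul_comm]; exact PowerSeries.mul_inv_cancel _ hc2]
      _ = f 2 := mul_one _
  have hU : PowerSeries.mk (fun n => (p (8 * n + 7) : ℚ)) = U2 (U2 (U2 P)) := by
    apply PowerSeries.ext; intro n
    rw [coeff_U2, coeff_U2, coeff_U2, hPdef, PowerSeries.coeff_mk, PowerSeries.coeff_mk]
    congr 2
    ring
  have hm16 := master P hP
  have hm : U2 (U2 (U2 P)) * (f 1)^23 = C (R := ℚ) 64 * (f 2)^22 := by
    calc U2 (U2 (U2 P)) * (f 1)^23 = (U2 (U2 (U2 P)) * (f 1)^16) * (f 1)^7 := by ring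
      _ = C (R := ℚ) 64 * ((f 2)^8 * (psi*psi*psi * (phi*phi) * Sf 2 (psi*psi))) * (f 1)^7 := by
          rw [hm16]
      _ = C (R := ℚ) 64 * ((f 2)^8 * (psi*psi*psi * (phi*phi) * Sf 2 (psi*psi) * (f 1)^7)) := by ring
      _ = C (R := ℚ) 64 * ((f 2)^8 * (f 2)^14) := by rw [last_id]
      _ = C (R := ℚ) 64 * (f 2)^22 := by ring
  have hc23 : constantCoeff (R := ℚ) ((f 1)^23) ≠ 0 := by
    rw [map_pow, constantCoeff_f 1 (by norm_num)]
    norm_num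
  rw [hU]
  calc U2 (U2 (U2 P)) = U2 (U2 (U2 P)) * ((f 1)^23 * ((f 1)^23)⁻¹) := by
        rw [PowerSeries.mul_inv_cancel _ hc23, mul_one]
    _ = (U2 (U2 (U2 P)) * (f 1)^23) * ((f 1)^23)⁻¹ := by ring
    _ = C (R := ℚ) 64 * (f 2)^22 * ((f 1)^23)⁻¹ := by rw [hm]
    _ = 64 * (f 2)^22 * ((f 1)^23)⁻¹ := by
        rw [show (C (R := ℚ) 64 : OP.PS) = 64 from map_ofNat _ 64]
end

section
/- The 2-dissection identity 1/f₁² = f₈⁵ / (f₂⁵ f₁₆²) + 2q f₄² f₁₆² / (f₂⁵ f₈) holds as an identity of formal power series. -/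
open PowerSeries

namespace Diss
variable {A : Type*} [CommRing A]

/-- Gaussian binomial in base `t`, defined by the `q`-Pascal recurrence. -/
def qb (t : A) : ℕ → ℕ → A
  | 0, 0 => 1
  | 0, _+1 => 0
  | _+1, 0 => 1
  | m+1, r+1 => qb t m (r+1) + t ^ (m - r) * qb t m r

@[simp] lemma qb_zero_right (t : A) (m : ℕ) : qb t m 0 = 1 := by
  cases m <;> rfl

lemma qb_eq_zero (t : A) {m r : ℕ} (h : m < r) : qb t m r = 0 := by
  induction m generalizing r with
  | zero => cases r with
    | zero => omega
    | succ r => rfl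
  | succ m ih =>
    cases r with
    | zero => omega
    | succ r =>
      rw [qb, ih (by omega), ih (by omega), mul_zero, add_zero]

@[simp] lemma qb_self (t : A) (m : ℕ) : qb t m m = 1 := by
  induction m with
  | zero => rfl
  | succ m ih => rw [qb, qb_eq_zero t (by omega), ih, Nat.sub_self, pow_zero, one_mul, zero_add]

lemma qb_pascal₁ (t : A) (m r : ℕ) :
    qb t (m+1) (r+1) = qb t m (r+1) + t ^ (m - r) * qb t m r := rfl

/-- partial product `∏_{i=1}^{m} (1 - t^i)` -/
def pp (t : A) (m : ℕ) : A := ∏ i ∈ Finset.range m, (1 - t ^ (i+1))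

@[simp] lemma pp_zero (t : A) : pp t 0 = 1 := by simp [pp]

lemma pp_succ (t : A) (m : ℕ) : pp t (m+1) = pp t m * (1 - t ^ (m+1)) := by
  simp [pp, Finset.prod_range_succ]

lemma qb_mul_pp (t : A) : ∀ m r : ℕ, r ≤ m →
    qb t m r * (pp t r * pp t (m - r)) = pp t m := by
  intro m
  induction m with
  | zero => intro r hr; interval_cases r; simp
  | succ m ih =>
    intro r hr
    cases r with
    | zero => simp
    | succ r =>
      rcases Nat.eq_or_lt_of_le hr with h | h
      · rw [h]; simp
      · have hrm : r ≤ m := by omega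
        have hrm' : r + 1 ≤ m := by omega
        have ih1 := ih (r+1) hrm'
        have ih2 := ih r hrm
        have hpow : t^(m-r) * t^(r+1) = t^(m+1) := by
          rw [← pow_add]; congr 1; omega
        have H1 : pp t (m+1-(r+1)) = pp t (m-(r+1)) * (1 - t^(m-r)) := by
          rw [show m+1-(r+1) = (m-(r+1))+1 by omega, pp_succ,
            show m-(r+1)+1 = m-r by omega]
        have H2 : pp t (r+1) = pp t r * (1 - t^(r+1)) := pp_succ t r
        have H3 : pp t (m+1) = pp t m * (1 - t^(m+1)) := pp_succ t m
        have H4 : pp t (m-r) = pp t (m-(r+1)) * (1 - t^(m-r)) := by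
          rw [show m-r = (m-(r+1))+1 by omega, pp_succ,
            show m-(r+1)+1 = m-r by omega]
        rw [qb_pascal₁, H1, H2, H3]
        rw [H2] at ih1
        rw [H4] at ih2
        linear_combination (1 - t^(m-r)) * ih1 + t^(m-r)*(1-t^(r+1)) * ih2
          - pp t m * hpow

lemma qb_map {B : Type*} [CommRing B] (φ : A →+* B) (t : A) (m r : ℕ) :
    φ (qb t m r) = qb (φ t) m r := by
  induction m generalizing r with
  | zero => cases r <;> simp [qb]
  | succ m ih =>
    cases r with
    | zero => simp
    | succ r => simp [qb_pascal₁, ih, map_add, map_mul, map_pow]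

lemma qb_pascal₂ (t : A) (m r : ℕ) :
    qb t (m+1) (r+1) = t ^ (r+1) * qb t m (r+1) + qb t m r := by
  -- transport from ℤ[X]
  have key : ∀ m r : ℕ, qb (Polynomial.X : Polynomial ℤ) (m+1) (r+1)
      = Polynomial.X ^ (r+1) * qb Polynomial.X m (r+1) + qb Polynomial.X m r := by
    intro m r
    rcases lt_or_ge m r with h | h
    · rw [qb_eq_zero _ (by omega : m < r+1), mul_zero, zero_add]
      rcases Nat.eq_or_lt_of_le (Nat.succ_le_of_lt h) with h' | h'
      · rw [← h']
        rw [qb_eq_zero _ (by omega), qb_eq_zero _ (by omega)]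
      · rw [qb_eq_zero _ (by omega), qb_eq_zero _ (by omega)]
    · -- r ≤ m; use product formula and cancellation in the domain ℤ[X]
      set T := (Polynomial.X : Polynomial ℤ) with hT
      have hppne : ∀ k : ℕ, pp T k ≠ 0 := by
        intro k
        refine Finset.prod_ne_zero_iff.mpr fun i _ => ?_
        intro hc
        have h1 : (T : Polynomial ℤ)^(i+1) = 1 := by linear_combination -hc
        have h2 := congrArg Polynomial.natDegree h1
        simp [hT] at h2
      have hcancel : pp T (r+1) * pp T (m - r) ≠ 0 := mul_ne_zero (hppne _) (hppne _)
      apply mul_right_cancel₀ hcancel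
      have e1 : m + 1 - (r+1) = m - r := by omega
      have h1 : qb T (m+1) (r+1) * (pp T (r+1) * pp T (m-r)) = pp T (m+1) := by
        have := qb_mul_pp T (m+1) (r+1) (by omega)
        rwa [e1] at this
      rw [h1, add_mul]
      rcases Nat.eq_or_lt_of_le h with h' | h'
      · subst h'
        rw [qb_eq_zero _ (by omega), Nat.sub_self, pp_zero, pp_succ, qb_self]
        ring
      · have h2 : qb T m (r+1) * (pp T (r+1) * pp T (m - (r+1))) = pp T m :=
          qb_mul_pp T m (r+1) (by omega)
        have h3 : qb T m r * (pp T r * pp T (m - r)) = pp T m := qb_mul_pp T m r (by omega)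
        have hpow : T^(r+1) * T^(m-r) = T^(m+1) := by
          rw [← pow_add]; congr 1; omega
        have H2 : pp T (r+1) = pp T r * (1 - T^(r+1)) := pp_succ T r
        have H3 : pp T (m+1) = pp T m * (1 - T^(m+1)) := pp_succ T m
        have H4 : pp T (m-r) = pp T (m-(r+1)) * (1 - T^(m-r)) := by
          rw [show m-r = (m-(r+1))+1 by omega, pp_succ,
            show m-(r+1)+1 = m-r by omega]
        rw [H3, H2, H4]
        rw [H2] at h2
        rw [H4] at h3
        linear_combination -T^(r+1)*(1-T^(m-r))*h2 - (1-T^(r+1))*h3 + pp T m * hpow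
  have hm : ∀ m r : ℕ, (Polynomial.aeval t) (qb (Polynomial.X : Polynomial ℤ) m r) = qb t m r := by
    intro m r
    have := qb_map ((Polynomial.aeval t : Polynomial ℤ →ₐ[ℤ] A) : Polynomial ℤ →+* A)
      (Polynomial.X : Polynomial ℤ) m r
    simpa using this
  have htr := congrArg (Polynomial.aeval t : Polynomial ℤ →ₐ[ℤ] A) (key m r)
  rw [map_add, map_mul, map_pow, hm, hm, hm] at htr
  simpa using htr


/-! ## ℤ-indexed Gaussian binomial -/

/-- `qb` with integer index, `0` out of range. -/
def qz (t : A) (m : ℕ) (k : ℤ) : A := if 0 ≤ k then qb t m k.toNat else 0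

lemma qz_neg (t : A) {m : ℕ} {k : ℤ} (h : k < 0) : qz t m k = 0 := by
  simp [qz, not_le.mpr h]

lemma qz_of_gt (t : A) {m : ℕ} {k : ℤ} (h : (m : ℤ) < k) : qz t m k = 0 := by
  have h0 : (0:ℤ) ≤ k := by omega
  simp only [qz, if_pos h0]
  exact qb_eq_zero t (by omega)

lemma qz_pascal₁ (t : A) (m : ℕ) (k : ℤ) :
    qz t (m+1) k = qz t m k + t ^ ((m + 1 - k : ℤ)).toNat * qz t m (k-1) := by
  rcases lt_trichotomy k 0 with h | h | h
  · rw [qz_neg t h, qz_neg t h, qz_neg t (by omega), mul_zero, add_zero]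
  · subst h; simp [qz, qz_neg t (by norm_num : (-1:ℤ) < 0)]
  · rcases lt_or_ge (m+1 : ℤ) k with h2 | h2
    · rw [qz_of_gt t h2, qz_of_gt t (by omega), qz_of_gt t (by omega), mul_zero, add_zero]
    · have h0 : (0:ℤ) ≤ k := by omega
      have h1 : (0:ℤ) ≤ k - 1 := by omega
      simp only [qz, if_pos h0, if_pos h1]
      obtain ⟨r, rfl⟩ : ∃ r : ℕ, k = (r : ℤ) + 1 := ⟨(k-1).toNat, by omega⟩
      have e1 : ((r:ℤ)+1).toNat = r + 1 := by omega
      have e2 : ((r:ℤ)+1-1).toNat = r := by omega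
      have e3 : ((m + 1 - ((r:ℤ)+1))).toNat = m - r := by omega
      rw [e1, e2, e3, qb_pascal₁]

lemma qz_pascal₂ (t : A) (m : ℕ) (k : ℤ) :
    qz t (m+1) k = t ^ k.toNat * qz t m k + qz t m (k-1) := by
  rcases lt_trichotomy k 0 with h | h | h
  · rw [qz_neg t h, qz_neg t h, qz_neg t (by omega), mul_zero, add_zero]
  · subst h; simp [qz, qz_neg t (by norm_num : (-1:ℤ) < 0)]
  · rcases lt_or_ge (m+1 : ℤ) k with h2 | h2
    · rw [qz_of_gt t h2, qz_of_gt t (by omega), mul_zero, zero_add]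
      exact (qz_of_gt t (by omega)).symm
    · have h0 : (0:ℤ) ≤ k := by omega
      have h1 : (0:ℤ) ≤ k - 1 := by omega
      simp only [qz, if_pos h0, if_pos h1]
      obtain ⟨r, rfl⟩ : ∃ r : ℕ, k = (r : ℤ) + 1 := ⟨(k-1).toNat, by omega⟩
      have e1 : ((r:ℤ)+1).toNat = r + 1 := by omega
      have e2 : ((r:ℤ)+1-1).toNat = r := by omega
      rw [e1, e2, qb_pascal₂]

@[simp] lemma qz_zero_zero (t : A) : qz t 0 0 = 1 := by simp [qz, qb]

/-! ## Sum helpers -/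

lemma sum_shift (F : ℤ → A) (a b : ℤ) :
    ∑ k ∈ Finset.Icc a b, F k = ∑ j ∈ Finset.Icc (a-1) (b-1), F (j+1) := by
  have h := Finset.map_add_right_Icc (a-1) (b-1) (1:ℤ)
  rw [show a-1+1 = a by ring, show b-1+1 = b by ring] at h
  rw [← h, Finset.sum_map]
  simp [addRightEmbedding]

lemma sum_ext (F : ℤ → A) (a b a' b' : ℤ)
    (h : ∀ k, F k ≠ 0 → ((a ≤ k ∧ k ≤ b) ↔ (a' ≤ k ∧ k ≤ b'))) :
    ∑ k ∈ Finset.Icc a b, F k = ∑ k ∈ Finset.Icc a' b', F k := by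
  have h1 : ∑ k ∈ Finset.Icc a b ∩ Finset.Icc a' b', F k = ∑ k ∈ Finset.Icc a b, F k := by
    apply Finset.sum_subset Finset.inter_subset_left
    intro x hx hnx
    by_contra hF
    refine hnx (Finset.mem_inter.mpr ⟨hx, Finset.mem_Icc.mpr ?_⟩)
    exact (h x hF).mp (Finset.mem_Icc.mp hx)
  have h2 : ∑ k ∈ Finset.Icc a b ∩ Finset.Icc a' b', F k = ∑ k ∈ Finset.Icc a' b', F k := by
    apply Finset.sum_subset Finset.inter_subset_right
    intro x hx hnx
    by_contra hF
    refine hnx (Finset.mem_inter.mpr ⟨Finset.mem_Icc.mpr ?_, hx⟩)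
    exact (h x hF).mpr (Finset.mem_Icc.mp hx)
  rw [← h1, h2]

/-! ## The two finite Gauss sums -/

/-- `∑_{k=-n}^{n} t^(k²) qbinom_{t²}(2n, n+k)` -/
noncomputable def Ss (t : A) (n : ℕ) : A :=
  ∑ k ∈ Finset.Icc (-(n:ℤ)) n, t ^ (k.natAbs^2) * qz (t^2) (2*n) (n+k)

noncomputable def Ts (t : A) (n : ℕ) : A :=
  ∑ k ∈ Finset.Icc (-(n:ℤ)-1) (n+1), t ^ (k.natAbs^2) * qz (t^2) (2*n+1) (n+1+k)

/-- `∑_{k=-n}^{n} t^(k(k+1)/2) qbinom_t(2n, n+k)` -/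
noncomputable def Us (t : A) (n : ℕ) : A :=
  ∑ k ∈ Finset.Icc (-(n:ℤ)) n, t ^ ((k*(k+1)/2)).toNat * qz t (2*n) (n+k)

noncomputable def Vs (t : A) (n : ℕ) : A :=
  ∑ k ∈ Finset.Icc (-(n:ℤ)-1) (n+1), t ^ ((k*(k+1)/2)).toNat * qz t (2*n+1) (n+1+k)

@[simp] lemma Ss_zero (t : A) : Ss t 0 = 1 := by simp [Ss]

@[simp] lemma Us_zero (t : A) : Us t 0 = 1 := by simp [Us]

lemma Ss_succ_eq (t : A) (n : ℕ) : Ss t (n+1) = (1 + t^(2*n+1)) * Ts t n := by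
  rw [Ss]
  have hrange : Finset.Icc (-((n:ℕ)+1:ℤ)) (((n:ℕ):ℤ)+1) = Finset.Icc (-(n:ℤ)-1) ((n:ℤ)+1) := by
    congr 1; ring
  push_cast
  rw [hrange]
  have expand : ∀ k ∈ Finset.Icc (-(n:ℤ)-1) ((n:ℤ)+1),
      t ^ (k.natAbs^2) * qz (t^2) (2*(n+1)) ((n:ℤ)+1+k)
      = t ^ (k.natAbs^2) * qz (t^2) (2*n+1) ((n:ℤ)+1+k)
        + t ^ (k.natAbs^2) * (t^2) ^ ((n + 1 - k : ℤ)).toNat * qz (t^2) (2*n+1) ((n:ℤ)+k) := by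
    intro k hk
    rw [show (2*(n+1)) = (2*n+1) + 1 by ring, qz_pascal₁]
    rw [show ((2*n+1 : ℕ) : ℤ) + 1 - ((n:ℤ)+1+k) = (n + 1 - k : ℤ) by push_cast; ring]
    rw [show (n:ℤ)+1+k-1 = (n:ℤ)+k by ring]
    ring
  rw [Finset.sum_congr rfl expand, Finset.sum_add_distrib]
  have hA : ∑ k ∈ Finset.Icc (-(n:ℤ)-1) ((n:ℤ)+1),
      t ^ (k.natAbs^2) * qz (t^2) (2*n+1) ((n:ℤ)+1+k) = Ts t n := rfl
  have hB : ∑ k ∈ Finset.Icc (-(n:ℤ)-1) ((n:ℤ)+1),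
      t ^ (k.natAbs^2) * (t^2) ^ ((n + 1 - k : ℤ)).toNat * qz (t^2) (2*n+1) ((n:ℤ)+k)
      = t^(2*n+1) * Ts t n := by
    rw [sum_shift]
    rw [show -(n:ℤ)-1-1 = -(n:ℤ)-2 by ring, show (n:ℤ)+1-1 = (n:ℤ) by ring]
    have term : ∀ j ∈ Finset.Icc (-(n:ℤ)-2) (n:ℤ),
        t ^ ((j+1).natAbs^2) * (t^2) ^ ((n + 1 - (j+1) : ℤ)).toNat * qz (t^2) (2*n+1) ((n:ℤ)+(j+1))
        = t^(2*n+1) * (t ^ (j.natAbs^2) * qz (t^2) (2*n+1) ((n:ℤ)+1+j)) := by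
      intro j hj
      rw [Finset.mem_Icc] at hj
      rw [show (n:ℤ)+(j+1) = (n:ℤ)+1+j by ring]
      have h1 : ((j+1).natAbs^2 : ℤ) = (j+1)^2 := Int.natAbs_sq _
      have h2 : ((j.natAbs)^2 : ℤ) = j^2 := Int.natAbs_sq _
      have h3 : ((n:ℤ) + 1 - (j+1)).toNat = ((n:ℤ) - j).toNat := by omega
      have e2 : (j+1).natAbs^2 + 2 * ((n:ℤ) + 1 - (j+1)).toNat = 2*n+1 + j.natAbs^2 := by
        have h4 : (((n:ℤ) - j).toNat : ℤ) = (n:ℤ) - j := by omega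
        zify
        rw [h3, h4, sq_abs, sq_abs]
        ring
      calc t ^ ((j+1).natAbs^2) * (t^2) ^ ((n + 1 - (j+1) : ℤ)).toNat * qz (t^2) (2*n+1) ((n:ℤ)+1+j)
          = t ^ ((j+1).natAbs^2 + 2 * ((n + 1 - (j+1) : ℤ)).toNat) * qz (t^2) (2*n+1) ((n:ℤ)+1+j) := by
            rw [← pow_mul, ← pow_add]
        _ = t^(2*n+1 + j.natAbs^2) * qz (t^2) (2*n+1) ((n:ℤ)+1+j) := by rw [e2]
        _ = t^(2*n+1) * (t ^ (j.natAbs^2) * qz (t^2) (2*n+1) ((n:ℤ)+1+j)) := by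
            rw [pow_add]; ring
    rw [Finset.sum_congr rfl term]
    rw [sum_ext _ (-(n:ℤ)-2) (n:ℤ) (-(n:ℤ)-1) ((n:ℤ)+1) (by
      intro j hF
      constructor
      · intro h
        refine ⟨?_, by omega⟩
        by_contra hlt
        exact hF (by rw [qz_neg _ (by omega : (n:ℤ)+1+j < 0)]; ring)
      · intro h
        refine ⟨by omega, ?_⟩
        by_contra hgt
        exact hF (by rw [qz_of_gt _ (by push_cast; omega : ((2*n+1:ℕ):ℤ) < (n:ℤ)+1+j)]; ring))]
    rw [Ts, Finset.mul_sum]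
  rw [hA, hB]
  ring

lemma sum_shift' (F : ℤ → A) (a b : ℤ) :
    ∑ k ∈ Finset.Icc a b, F k = ∑ j ∈ Finset.Icc (a+1) (b+1), F (j-1) := by
  rw [sum_shift (fun j => F (j-1)) (a+1) (b+1)]
  simp

lemma Ts_eq (t : A) (n : ℕ) : Ts t n = (1 + t^(2*n+1)) * Ss t n := by
  rw [Ts]
  have expand : ∀ j ∈ Finset.Icc (-(n:ℤ)-1) ((n:ℤ)+1),
      t ^ (j.natAbs^2) * qz (t^2) (2*n+1) ((n:ℤ)+1+j)
      = t ^ (j.natAbs^2) * (t^2) ^ (((n:ℤ)+1+j)).toNat * qz (t^2) (2*n) ((n:ℤ)+1+j)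
        + t ^ (j.natAbs^2) * qz (t^2) (2*n) ((n:ℤ)+j) := by
    intro j hj
    rw [show (2*n+1) = (2*n) + 1 by ring, qz_pascal₂]
    rw [show (n:ℤ)+1+j-1 = (n:ℤ)+j by ring]
    ring
  rw [Finset.sum_congr rfl expand, Finset.sum_add_distrib]
  have hB : ∑ j ∈ Finset.Icc (-(n:ℤ)-1) ((n:ℤ)+1),
      t ^ (j.natAbs^2) * (t^2) ^ (((n:ℤ)+1+j)).toNat * qz (t^2) (2*n) ((n:ℤ)+1+j)
      = t^(2*n+1) * Ss t n := by
    rw [sum_shift']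
    rw [show -(n:ℤ)-1+1 = -(n:ℤ) by ring]
    have term : ∀ k ∈ Finset.Icc (-(n:ℤ)) ((n:ℤ)+1+1),
        t ^ ((k-1).natAbs^2) * (t^2) ^ (((n:ℤ)+1+(k-1))).toNat * qz (t^2) (2*n) ((n:ℤ)+1+(k-1))
        = t^(2*n+1) * (t ^ (k.natAbs^2) * qz (t^2) (2*n) ((n:ℤ)+k)) := by
      intro k hk
      rw [Finset.mem_Icc] at hk
      rw [show (n:ℤ)+1+(k-1) = (n:ℤ)+k by ring]
      have e2 : (k-1).natAbs^2 + 2 * (((n:ℤ)+k)).toNat = 2*n+1 + k.natAbs^2 := by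
        have h3 : (((n:ℤ) + k)).toNat = (n:ℤ) + k := by omega
        zify
        rw [h3, sq_abs, sq_abs]
        ring
      calc t ^ ((k-1).natAbs^2) * (t^2) ^ (((n:ℤ)+k)).toNat * qz (t^2) (2*n) ((n:ℤ)+k)
          = t ^ ((k-1).natAbs^2 + 2 * (((n:ℤ)+k)).toNat) * qz (t^2) (2*n) ((n:ℤ)+k) := by
            rw [← pow_mul, ← pow_add]
        _ = t^(2*n+1 + k.natAbs^2) * qz (t^2) (2*n) ((n:ℤ)+k) := by rw [e2]
        _ = t^(2*n+1) * (t ^ (k.natAbs^2) * qz (t^2) (2*n) ((n:ℤ)+k)) := by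
            rw [pow_add]; ring
    rw [Finset.sum_congr rfl term]
    rw [sum_ext _ (-(n:ℤ)) ((n:ℤ)+1+1) (-(n:ℤ)) (n:ℤ) (by
      intro k hF
      constructor
      · intro h
        refine ⟨h.1, ?_⟩
        by_contra hgt
        exact hF (by rw [qz_of_gt _ (by push_cast; omega : ((2*n:ℕ):ℤ) < (n:ℤ)+k)]; ring)
      · intro h
        exact ⟨h.1, by omega⟩)]
    rw [Ss, Finset.mul_sum]
  have hA : ∑ j ∈ Finset.Icc (-(n:ℤ)-1) ((n:ℤ)+1),
      t ^ (j.natAbs^2) * qz (t^2) (2*n) ((n:ℤ)+j) = Ss t n := by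
    rw [Ss]
    apply sum_ext
    intro j hF
    constructor
    · intro h
      constructor
      · by_contra hlt
        exact hF (by rw [qz_neg _ (by omega : (n:ℤ)+j < 0)]; ring)
      · by_contra hgt
        exact hF (by rw [qz_of_gt _ (by push_cast; omega : ((2*n:ℕ):ℤ) < (n:ℤ)+j)]; ring)
    · intro h
      exact ⟨by omega, by omega⟩
  rw [hA, hB]
  ring

lemma Ss_closed (t : A) (n : ℕ) :
    Ss t n = ∏ j ∈ Finset.range n, (1 + t^(2*j+1))^2 := by
  induction n with
  | zero => simp
  | succ n ih =>
    rw [Ss_succ_eq, Ts_eq, ih, Finset.prod_range_succ]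
    ring

/-! ## triangular numbers -/

def tri (k : ℤ) : ℕ := (k*(k+1)).toNat / 2

lemma tri_cast (k : ℤ) : (tri k : ℤ) * 2 = k*(k+1) := by
  have h1 : 0 ≤ k*(k+1) := by nlinarith [sq_nonneg (2*k+1)]
  obtain ⟨c, hc⟩ := Int.even_mul_succ_self k
  have h2 : ((k*(k+1)).toNat : ℤ) = k*(k+1) := Int.toNat_of_nonneg h1
  unfold tri
  omega

@[simp] lemma tri_zero : tri 0 = 0 := rfl

lemma tri_eq (k : ℤ) : ((k*(k+1)/2 : ℤ)).toNat = tri k := by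
  have := tri_cast k
  omega

lemma Us_succ_eq (t : A) (n : ℕ) : Us t (n+1) = (1 + t^(n+1)) * Vs t n := by
  rw [Us]
  have hrange : Finset.Icc (-((n:ℕ)+1:ℤ)) (((n:ℕ):ℤ)+1) = Finset.Icc (-(n:ℤ)-1) ((n:ℤ)+1) := by
    congr 1; ring
  push_cast
  rw [hrange]
  have expand : ∀ k ∈ Finset.Icc (-(n:ℤ)-1) ((n:ℤ)+1),
      t ^ (tri k) * qz t (2*(n+1)) ((n:ℤ)+1+k)
      = t ^ (tri k) * qz t (2*n+1) ((n:ℤ)+1+k)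
        + t ^ (tri k) * t ^ ((n + 1 - k : ℤ)).toNat * qz t (2*n+1) ((n:ℤ)+k) := by
    intro k hk
    rw [show (2*(n+1)) = (2*n+1) + 1 by ring, qz_pascal₁]
    rw [show ((2*n+1 : ℕ) : ℤ) + 1 - ((n:ℤ)+1+k) = (n + 1 - k : ℤ) by push_cast; ring]
    rw [show (n:ℤ)+1+k-1 = (n:ℤ)+k by ring]
    ring
  rw [show (fun k => t ^ ((k*(k+1)/2:ℤ)).toNat * qz t (2*(n+1)) ((n:ℤ)+1+k))
      = (fun k => t ^ (tri k) * qz t (2*(n+1)) ((n:ℤ)+1+k)) from ?_]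
  · rw [Finset.sum_congr rfl expand, Finset.sum_add_distrib]
    have hA : ∑ k ∈ Finset.Icc (-(n:ℤ)-1) ((n:ℤ)+1),
        t ^ (tri k) * qz t (2*n+1) ((n:ℤ)+1+k) = Vs t n := by
      rw [Vs]
      apply Finset.sum_congr rfl
      intro k _
      rw [tri_eq]
    have hB : ∑ k ∈ Finset.Icc (-(n:ℤ)-1) ((n:ℤ)+1),
        t ^ (tri k) * t ^ ((n + 1 - k : ℤ)).toNat * qz t (2*n+1) ((n:ℤ)+k)
        = t^(n+1) * Vs t n := by
      rw [sum_shift]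
      rw [show -(n:ℤ)-1-1 = -(n:ℤ)-2 by ring, show (n:ℤ)+1-1 = (n:ℤ) by ring]
      have term : ∀ j ∈ Finset.Icc (-(n:ℤ)-2) (n:ℤ),
          t ^ (tri (j+1)) * t ^ ((n + 1 - (j+1) : ℤ)).toNat * qz t (2*n+1) ((n:ℤ)+(j+1))
          = t^(n+1) * (t ^ (tri j) * qz t (2*n+1) ((n:ℤ)+1+j)) := by
        intro j hj
        rw [Finset.mem_Icc] at hj
        rw [show (n:ℤ)+(j+1) = (n:ℤ)+1+j by ring]
        have e2 : tri (j+1) + ((n + 1 - (j+1) : ℤ)).toNat = (n+1) + tri j := by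
          have t1 := tri_cast (j+1)
          have t2 := tri_cast j
          have hexp : (j+1)*((j+1)+1) = j*(j+1) + 2*(j+1) := by ring
          omega
        rw [← pow_add, e2, pow_add]
        ring
      rw [Finset.sum_congr rfl term]
      rw [sum_ext _ (-(n:ℤ)-2) (n:ℤ) (-(n:ℤ)-1) ((n:ℤ)+1) (by
        intro j hF
        constructor
        · intro h
          refine ⟨?_, by omega⟩
          by_contra hlt
          exact hF (by rw [qz_neg _ (by omega : (n:ℤ)+1+j < 0)]; ring)
        · intro h
          refine ⟨by omega, ?_⟩
          by_contra hgt
          exact hF (by rw [qz_of_gt _ (by push_cast; omega : ((2*n+1:ℕ):ℤ) < (n:ℤ)+1+j)]; ring))]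
      rw [Vs, Finset.mul_sum]
      apply Finset.sum_congr rfl
      intro k _
      rw [tri_eq]
    rw [hA, hB]
    ring
  · funext k
    rw [tri_eq]

lemma Vs_eq (t : A) (n : ℕ) : Vs t n = (1 + t^n) * Us t n := by
  rw [Vs]
  have expand : ∀ j ∈ Finset.Icc (-(n:ℤ)-1) ((n:ℤ)+1),
      t ^ ((j*(j+1)/2:ℤ)).toNat * qz t (2*n+1) ((n:ℤ)+1+j)
      = t ^ (tri j) * t ^ (((n:ℤ)+1+j)).toNat * qz t (2*n) ((n:ℤ)+1+j)
        + t ^ (tri j) * qz t (2*n) ((n:ℤ)+j) := by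
    intro j hj
    rw [show (2*n+1) = (2*n) + 1 by ring, qz_pascal₂]
    rw [show (n:ℤ)+1+j-1 = (n:ℤ)+j by ring]
    rw [tri_eq]
    ring
  rw [Finset.sum_congr rfl expand, Finset.sum_add_distrib]
  have hB : ∑ j ∈ Finset.Icc (-(n:ℤ)-1) ((n:ℤ)+1),
      t ^ (tri j) * t ^ (((n:ℤ)+1+j)).toNat * qz t (2*n) ((n:ℤ)+1+j)
      = t^n * Us t n := by
    rw [sum_shift']
    rw [show -(n:ℤ)-1+1 = -(n:ℤ) by ring]
    have term : ∀ k ∈ Finset.Icc (-(n:ℤ)) ((n:ℤ)+1+1),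
        t ^ (tri (k-1)) * t ^ (((n:ℤ)+1+(k-1))).toNat * qz t (2*n) ((n:ℤ)+1+(k-1))
        = t^n * (t ^ (tri k) * qz t (2*n) ((n:ℤ)+k)) := by
      intro k hk
      rw [Finset.mem_Icc] at hk
      rw [show (n:ℤ)+1+(k-1) = (n:ℤ)+k by ring]
      have e2 : tri (k-1) + (((n:ℤ)+k)).toNat = n + tri k := by
        have t1 := tri_cast (k-1)
        have t2 := tri_cast k
        have hexp : (k-1)*((k-1)+1) = k*(k+1) - 2*k := by ring
        omega
      rw [← pow_add, e2, pow_add]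
      ring
    rw [Finset.sum_congr rfl term]
    rw [sum_ext _ (-(n:ℤ)) ((n:ℤ)+1+1) (-(n:ℤ)) (n:ℤ) (by
      intro k hF
      constructor
      · intro h
        refine ⟨h.1, ?_⟩
        by_contra hgt
        exact hF (by rw [qz_of_gt _ (by push_cast; omega : ((2*n:ℕ):ℤ) < (n:ℤ)+k)]; ring)
      · intro h
        exact ⟨h.1, by omega⟩)]
    rw [Us, Finset.mul_sum]
    apply Finset.sum_congr rfl
    intro k _
    rw [tri_eq]
  have hA : ∑ j ∈ Finset.Icc (-(n:ℤ)-1) ((n:ℤ)+1),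
      t ^ (tri j) * qz t (2*n) ((n:ℤ)+j) = Us t n := by
    rw [Us]
    rw [sum_ext _ (-(n:ℤ)-1) ((n:ℤ)+1) (-(n:ℤ)) (n:ℤ) (by
      intro j hF
      constructor
      · intro h
        constructor
        · by_contra hlt
          exact hF (by rw [qz_neg _ (by omega : (n:ℤ)+j < 0)]; ring)
        · by_contra hgt
          exact hF (by rw [qz_of_gt _ (by push_cast; omega : ((2*n:ℕ):ℤ) < (n:ℤ)+j)]; ring)
      · intro h
        exact ⟨by omega, by omega⟩)]
    apply Finset.sum_congr rfl
    intro k _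
    rw [tri_eq]
  rw [hA, hB]
  ring

lemma Us_closed (t : A) (n : ℕ) :
    Us t n = ∏ j ∈ Finset.range n, ((1 + t^(j+1)) * (1 + t^j)) := by
  induction n with
  | zero => simp
  | succ n ih =>
    rw [Us_succ_eq, Vs_eq, ih, Finset.prod_range_succ]
    ring

/-! ## Power series congruences -/

open PowerSeries

abbrev R := PowerSeries ℚ

/-- Congruence modulo `X^N`. -/
def EqMod (N : ℕ) (a b : R) : Prop := (X : R)^N ∣ (a - b)

lemma EqMod.refl (N : ℕ) (a : R) : EqMod N a a := by
  rw [EqMod, sub_self]; exact dvd_zero _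

lemma EqMod.symm {N : ℕ} {a b : R} (h : EqMod N a b) : EqMod N b a := by
  rw [EqMod, ← neg_sub a b]; exact h.neg_right

lemma EqMod.trans {N : ℕ} {a b c : R} (h1 : EqMod N a b) (h2 : EqMod N b c) :
    EqMod N a c := by
  have e : a - c = (a-b) + (b-c) := by ring
  rw [EqMod, e]
  exact dvd_add h1 h2

lemma EqMod.add {N : ℕ} {a b c d : R} (h1 : EqMod N a b) (h2 : EqMod N c d) :
    EqMod N (a+c) (b+d) := by
  have e : a+c-(b+d) = (a-b) + (c-d) := by ring
  rw [EqMod, e]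
  exact dvd_add h1 h2

lemma EqMod.mul {N : ℕ} {a b c d : R} (h1 : EqMod N a b) (h2 : EqMod N c d) :
    EqMod N (a*c) (b*d) := by
  have : a*c - b*d = (a-b)*c + b*(c-d) := by ring
  rw [EqMod, this]
  exact dvd_add (h1.mul_right c) (h2.mul_left b)

lemma EqMod.of_le {N N' : ℕ} {a b : R} (h : EqMod N a b) (hle : N' ≤ N) :
    EqMod N' a b := dvd_trans (pow_dvd_pow _ hle) h

lemma eqMod_iff_coeff {N : ℕ} {a b : R} :
    EqMod N a b ↔ ∀ j < N, (coeff (R := ℚ) j) a = (coeff (R := ℚ) j) b := by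
  rw [EqMod, X_pow_dvd_iff]
  constructor
  · intro h j hj
    have := h j hj
    rw [map_sub, sub_eq_zero] at this
    exact this
  · intro h j hj
    rw [map_sub, sub_eq_zero]
    exact h j hj

lemma eq_of_eqMod {a b : R} (h : ∀ N, EqMod N a b) : a = b := by
  ext j
  exact (eqMod_iff_coeff.mp (h (j+1))) j (by omega)

lemma eqMod_one_prod {N : ℕ} {ι : Type*} (s : Finset ι) (g : ι → R)
    (h : ∀ i ∈ s, EqMod N (g i) 1) : EqMod N (∏ i ∈ s, g i) 1 := by
  induction s using Finset.cons_induction with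
  | empty => simpa using EqMod.refl N 1
  | cons i s hi ih =>
    rw [Finset.prod_cons]
    have := (h i (Finset.mem_cons_self i s)).mul
      (ih (fun j hj => h j (Finset.mem_cons_of_mem hj)))
    simpa using this

lemma eqMod_X_pow {N e : ℕ} (h : N ≤ e) : EqMod N ((X:R)^e) 0 := by
  rw [EqMod, sub_zero]
  exact pow_dvd_pow _ h

/-! ## The products `f` and their partial products -/

lemma f_coeff_pp (d : ℕ) (j : ℕ) :
    (coeff (R := ℚ) j) (f d) = (coeff (R := ℚ) j) (pp ((X:R)^d) (j+1)) := by
  rw [f, coeff_mk]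
  congr 1
  rw [pp]
  apply Finset.prod_congr rfl
  intro k _
  rw [← pow_mul]

lemma pp_succ_mod {d : ℕ} (hd : 1 ≤ d) {N m m' : ℕ} (hm : m' ≤ m) (hN : N ≤ m' + 1) :
    EqMod N (pp ((X:R)^d) m) (pp ((X:R)^d) m') := by
  have hsplit : pp ((X:R)^d) m = pp ((X:R)^d) m' * ∏ i ∈ Finset.Ico m' m, (1 - ((X:R)^d)^(i+1)) := by
    rw [pp, pp, ← Finset.prod_range_mul_prod_Ico _ hm]
  rw [hsplit]
  have htail : EqMod N (∏ i ∈ Finset.Ico m' m, (1 - ((X:R)^d)^(i+1))) 1 := by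
    apply eqMod_one_prod
    intro i hi
    rw [Finset.mem_Ico] at hi
    rw [EqMod, ← pow_mul]
    have : (1 - (X:R)^(d*(i+1))) - 1 = -(X^(d*(i+1))) := by ring
    rw [this, dvd_neg]
    exact pow_dvd_pow _ (by nlinarith [hi.1, hd])
  have := (EqMod.refl N (pp ((X:R)^d) m')).mul htail
  simpa using this

lemma f_eqMod_pp {d : ℕ} (hd : 1 ≤ d) {N m : ℕ} (hm : N ≤ m + 1) :
    EqMod N (f d) (pp ((X:R)^d) m) := by
  rw [eqMod_iff_coeff]
  intro j hj
  rw [f_coeff_pp]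
  rcases le_or_gt (j+1) m with h | h
  · have := pp_succ_mod hd (N := j+1) h (by omega)
    exact ((eqMod_iff_coeff.mp this.symm) j (by omega))
  · have := pp_succ_mod hd (N := j+1) (m := j+1) (m' := m) (by omega) (by omega)
    exact (eqMod_iff_coeff.mp this) j (by omega)

lemma constantCoeff_pp (d m : ℕ) (hd : 1 ≤ d) : constantCoeff (R := ℚ) (pp ((X:R)^d) m) = 1 := by
  rw [pp, map_prod]
  apply Finset.prod_eq_one
  intro i _
  rw [map_sub, map_one, ← pow_mul, map_pow, constantCoeff_X, zero_pow (by positivity), sub_zero]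

lemma constantCoeff_f {d : ℕ} (hd : 1 ≤ d) : constantCoeff (R := ℚ) (f d) = 1 := by
  have h := f_coeff_pp d 0
  rw [coeff_zero_eq_constantCoeff] at h
  rw [h, constantCoeff_pp _ _ hd]

lemma f_ne_zero {d : ℕ} (hd : 1 ≤ d) : constantCoeff (R := ℚ) (f d) ≠ 0 := by
  rw [constantCoeff_f hd]; norm_num

lemma pp_ne_zero (d m : ℕ) (hd : 1 ≤ d) : constantCoeff (R := ℚ) (pp ((X:R)^d) m) ≠ 0 := by
  rw [constantCoeff_pp _ _ hd]; norm_num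

lemma EqMod.inv {N : ℕ} {u v : R} (hu : constantCoeff (R := ℚ) u ≠ 0) (hv : constantCoeff (R := ℚ) v ≠ 0)
    (h : EqMod N u v) : EqMod N u⁻¹ v⁻¹ := by
  have key : u⁻¹ - v⁻¹ = u⁻¹ * v⁻¹ * (v - u) := by
    have h1 : u * u⁻¹ = 1 := PowerSeries.mul_inv_cancel u hu
    have h2 : v * v⁻¹ = 1 := PowerSeries.mul_inv_cancel v hv
    calc u⁻¹ - v⁻¹ = u⁻¹ * (v * v⁻¹) - (u * u⁻¹) * v⁻¹ := by rw [h1, h2]; ring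
    _ = u⁻¹ * v⁻¹ * (v - u) := by ring
  rw [EqMod, key]
  exact Dvd.dvd.mul_left (h.symm) _

/-! ## Theta series -/

/-- `θ_d = ∑_{k ∈ ℤ} X^(d k²)` -/
noncomputable def thS (d : ℕ) : R := PowerSeries.mk fun j =>
  (((Finset.Icc (-(j:ℤ)) j).filter (fun k => d * k.natAbs^2 = j)).card : ℚ)

/-- `ψθ_d = ∑_{k ∈ ℤ} X^(d k(k+1)/2)` -/
noncomputable def psS (d : ℕ) : R := PowerSeries.mk fun j =>
  (((Finset.Icc (-(j:ℤ)-1) j).filter (fun k => d * tri k = j)).card : ℚ)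

lemma coeff_sum_X_pow (s : Finset ℤ) (e : ℤ → ℕ) (j : ℕ) :
    (coeff (R := ℚ) j) (∑ k ∈ s, (X:R)^(e k)) = ((s.filter (fun k => e k = j)).card : ℚ) := by
  rw [map_sum]
  have : ∀ k ∈ s, (coeff (R := ℚ) j) ((X:R)^(e k)) = if e k = j then (1:ℚ) else 0 := by
    intro k _
    rw [coeff_X_pow]
    by_cases h : e k = j
    · simp [h]
    · rw [if_neg (fun hh => h hh.symm), if_neg h]
  rw [Finset.sum_congr rfl this, Finset.sum_boole]

lemma tri_lower (k : ℤ) : -k-1 ≤ (tri k : ℤ) ∧ k ≤ (tri k : ℤ) := by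
  have h := tri_cast k
  constructor <;> nlinarith [sq_nonneg (k+1), sq_nonneg k, sq_nonneg (k-1), sq_nonneg (k+2)]

lemma thS_eqMod {d n N : ℕ} (hd : 1 ≤ d) (hN : N ≤ n + 1) :
    EqMod N (∑ k ∈ Finset.Icc (-(n:ℤ)) n, (X:R)^(d * k.natAbs^2)) (thS d) := by
  rw [eqMod_iff_coeff]
  intro j hj
  rw [coeff_sum_X_pow, thS, coeff_mk]
  congr 1
  apply Finset.card_nbij' id id
  · intro k hk
    simp only [Finset.mem_coe, Finset.mem_filter, Finset.mem_Icc, id] at hk ⊢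
    have h1 : k.natAbs ≤ k.natAbs^2 := Nat.le_self_pow (by norm_num) _
    refine ⟨?_, hk.2⟩
    have h2 : k.natAbs^2 ≤ d * k.natAbs^2 := Nat.le_mul_of_pos_left _ hd
    omega
  · intro k hk
    simp only [Finset.mem_coe, Finset.mem_filter, Finset.mem_Icc, id] at hk ⊢
    have h1 : k.natAbs ≤ k.natAbs^2 := Nat.le_self_pow (by norm_num) _
    have h2 : k.natAbs^2 ≤ d * k.natAbs^2 := Nat.le_mul_of_pos_left _ hd
    refine ⟨?_, hk.2⟩
    omega
  · intro k _; rfl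
  · intro k _; rfl

lemma psS_eqMod {d n N : ℕ} (hd : 1 ≤ d) (hN : N ≤ n) :
    EqMod N (∑ k ∈ Finset.Icc (-(n:ℤ)) n, (X:R)^(d * tri k)) (psS d) := by
  rw [eqMod_iff_coeff]
  intro j hj
  rw [coeff_sum_X_pow, psS, coeff_mk]
  congr 1
  apply Finset.card_nbij' id id
  · intro k hk
    simp only [Finset.mem_coe, Finset.mem_filter, Finset.mem_Icc, id] at hk ⊢
    obtain ⟨h1, h2⟩ := tri_lower k
    have h3 : tri k ≤ d * tri k := Nat.le_mul_of_pos_left _ hd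
    refine ⟨?_, hk.2⟩
    omega
  · intro k hk
    simp only [Finset.mem_coe, Finset.mem_filter, Finset.mem_Icc, id] at hk ⊢
    obtain ⟨h1, h2⟩ := tri_lower k
    have h3 : tri k ≤ d * tri k := Nat.le_mul_of_pos_left _ hd
    refine ⟨?_, hk.2⟩
    omega
  · intro k _; rfl
  · intro k _; rfl

/-- 2-dissection of the theta function: `θ_1 = θ_4 + X ψθ_8`. -/
lemma thS_split : thS 1 = thS 4 + X * psS 8 := by
  ext j
  rw [map_add, thS, thS, coeff_mk, coeff_mk]
  rcases Nat.eq_zero_or_pos j with rfl | hj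
  · have h1 : (coeff (R := ℚ) 0) ((X:R) * psS 8) = 0 := by
      rw [coeff_zero_eq_constantCoeff, map_mul, constantCoeff_X, zero_mul]
    rw [h1, add_zero]
    norm_num [Finset.Icc_self, Finset.filter_singleton]
  · obtain ⟨i, rfl⟩ : ∃ i, j = i + 1 := ⟨j - 1, by omega⟩
    rw [coeff_succ_X_mul, psS, coeff_mk]
    have hsplit := Finset.card_filter_add_card_filter_not
      (s := (Finset.Icc (-(i+1:ℤ)) (i+1)).filter (fun k => 1 * k.natAbs^2 = i+1))
      (p := fun k => Even k)
    rw [Finset.filter_filter, Finset.filter_filter] at hsplit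
    have heven : ((Finset.Icc (-(i+1:ℤ)) (i+1)).filter
        (fun k => 1 * k.natAbs^2 = i+1 ∧ Even k)).card
        = ((Finset.Icc (-(i+1:ℤ)) (i+1)).filter (fun k => 4 * k.natAbs^2 = i+1)).card := by
      apply Finset.card_nbij' (fun k => k/2) (fun m => 2*m)
      · intro k hk
        simp only [Finset.mem_coe, Finset.mem_filter, Finset.mem_Icc] at hk ⊢
        obtain ⟨⟨hk1, hk2⟩, hcond, m, hm⟩ := hk
        have hkm : k = 2*m := by omega
        subst hkm
        have e1 : (2*m)/2 = m := by omega
        rw [e1]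
        have e2 : (2*m).natAbs = 2 * m.natAbs := by
          rw [Int.natAbs_mul]; rfl
        constructor
        · omega
        · rw [one_mul, e2] at hcond
          rw [← hcond]; ring
      · intro m hm
        simp only [Finset.mem_coe, Finset.mem_filter, Finset.mem_Icc] at hm ⊢
        obtain ⟨⟨hm1, hm2⟩, hcond⟩ := hm
        have e2 : (2*m).natAbs = 2 * m.natAbs := by
          rw [Int.natAbs_mul]; rfl
        have h1 : m.natAbs ≤ m.natAbs^2 := Nat.le_self_pow (by norm_num) _
        refine ⟨⟨by omega, by omega⟩, ?_, ⟨m, by ring⟩⟩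
        rw [one_mul, e2, mul_pow, ← hcond]; ring
      · intro k hk
        simp only [Finset.mem_coe, Finset.mem_filter] at hk
        obtain ⟨_, _, m, hm⟩ := hk
        dsimp only
        omega
      · intro m _
        dsimp only
        omega
    have hodd : ((Finset.Icc (-(i+1:ℤ)) (i+1)).filter
        (fun k => 1 * k.natAbs^2 = i+1 ∧ ¬ Even k)).card
        = ((Finset.Icc (-(i:ℤ)-1) i).filter (fun k => 8 * tri k = i)).card := by
      apply Finset.card_nbij' (fun k => (k-1)/2) (fun r => 2*r+1)
      · intro k hk
        simp only [Finset.mem_coe, Finset.mem_filter, Finset.mem_Icc] at hk ⊢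
        obtain ⟨⟨hk1, hk2⟩, hcond, hoddk⟩ := hk
        rw [Int.not_even_iff_odd] at hoddk
        obtain ⟨r, hr⟩ := hoddk
        subst hr
        have e1 : (2*r+1-1)/2 = r := by omega
        rw [e1]
        have hsq : ((2*r+1).natAbs^2 : ℤ) = (2*r+1)^2 := Int.natAbs_sq _
        have htri := tri_cast r
        have hcond' : ((2*r+1).natAbs^2 : ℤ) = (i:ℤ)+1 := by
          rw [one_mul] at hcond
          exact_mod_cast congrArg (Nat.cast : ℕ → ℤ) hcond
        have key : 8 * (tri r : ℤ) = i := by nlinarith [hsq, htri, hcond']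
        refine ⟨⟨?_, ?_⟩, ?_⟩
        · obtain ⟨hl, hu⟩ := tri_lower r
          omega
        · obtain ⟨hl, hu⟩ := tri_lower r
          omega
        · exact_mod_cast key
      · intro r hr
        simp only [Finset.mem_coe, Finset.mem_filter, Finset.mem_Icc] at hr ⊢
        obtain ⟨⟨hr1, hr2⟩, hcond⟩ := hr
        have htri := tri_cast r
        have hcond' : (8 * (tri r : ℤ)) = (i:ℤ) := by
          exact_mod_cast congrArg (Nat.cast : ℕ → ℤ) hcond
        have hsq : ((2*r+1).natAbs^2 : ℤ) = (2*r+1)^2 := Int.natAbs_sq _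
        have key : ((2*r+1).natAbs^2 : ℤ) = (i:ℤ)+1 := by nlinarith [htri, hcond']
        have habs : ((2*r+1).natAbs : ℤ) ≤ (i:ℤ)+1 := by
          have h1 : ((2*r+1).natAbs : ℤ) ≤ ((2*r+1).natAbs:ℤ)^2 := by
            have := Nat.le_self_pow (n := 2) (by norm_num) (2*r+1).natAbs
            exact_mod_cast this
          omega
        have habs2 : -((i:ℤ)+1) ≤ 2*r+1 ∧ 2*r+1 ≤ (i:ℤ)+1 := by
          constructor <;> [skip; skip] <;> omega
        refine ⟨⟨by omega, by omega⟩, ?_, ?_⟩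
        · rw [one_mul]; exact_mod_cast key
        · rw [Int.not_even_iff_odd]; exact ⟨r, by ring⟩
      · intro k hk
        simp only [Finset.mem_coe, Finset.mem_filter] at hk
        obtain ⟨_, _, hoddk⟩ := hk
        rw [Int.not_even_iff_odd] at hoddk
        obtain ⟨r, hr⟩ := hoddk
        dsimp only
        omega
      · intro r _
        dsimp only
        omega
    rw [show (((i+1):ℕ):ℤ) = (i:ℤ)+1 by push_cast; ring]
    rw [← hsplit, heven, hodd]
    push_cast
    ring


/-! ## Limits of the finite identities -/

lemma EqMod.sum {N : ℕ} {ι : Type*} (s : Finset ι) (g h : ι → R)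
    (hgh : ∀ i ∈ s, EqMod N (g i) (h i)) :
    EqMod N (∑ i ∈ s, g i) (∑ i ∈ s, h i) := by
  rw [EqMod, ← Finset.sum_sub_distrib]
  exact Finset.dvd_sum hgh

lemma eqMod_X_pow_mul {N e : ℕ} (a b : R) (h : N ≤ e) :
    EqMod N ((X:R)^e * a) ((X:R)^e * b) := by
  rw [EqMod, ← mul_sub]
  exact Dvd.dvd.mul_right (pow_dvd_pow _ h) _

/-- Limit of the central Gaussian binomial. -/
lemma qz_limit {e N n : ℕ} (he : 1 ≤ e) (k : ℤ) (hk : k.natAbs ≤ n)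
    (hN : N ≤ n - k.natAbs + 1) :
    EqMod N (qz ((X:R)^e) (2*n) ((n:ℤ)+k)) ((f e)⁻¹) := by
  set t : R := (X:R)^e with ht
  have hknn : ((n:ℤ)+k).toNat ≤ 2*n := by omega
  have hq : qz t (2*n) ((n:ℤ)+k) = qb t (2*n) (((n:ℤ)+k).toNat) := by
    rw [qz, if_pos (by omega)]
  set r : ℕ := ((n:ℤ)+k).toNat with hr
  have hprod := qb_mul_pp t (2*n) r hknn
  -- qb = pp(2n) * (pp r)⁻¹ * (pp (2n - r))⁻¹
  have hne1 : constantCoeff (R := ℚ) (pp t r) ≠ 0 := pp_ne_zero e r he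
  have hne2 : constantCoeff (R := ℚ) (pp t (2*n - r)) ≠ 0 := pp_ne_zero e _ he
  have hqb : qb t (2*n) r = pp t (2*n) * (pp t r)⁻¹ * (pp t (2*n - r))⁻¹ := by
    have h1 : pp t r * (pp t r)⁻¹ = 1 := PowerSeries.mul_inv_cancel _ hne1
    have h2 : pp t (2*n-r) * (pp t (2*n-r))⁻¹ = 1 := PowerSeries.mul_inv_cancel _ hne2
    calc qb t (2*n) r = qb t (2*n) r * (pp t r * (pp t r)⁻¹)
          * (pp t (2*n-r) * (pp t (2*n-r))⁻¹) := by rw [h1, h2]; ring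
      _ = (qb t (2*n) r * (pp t r * pp t (2*n-r))) * (pp t r)⁻¹ * (pp t (2*n-r))⁻¹ := by ring
      _ = pp t (2*n) * (pp t r)⁻¹ * (pp t (2*n - r))⁻¹ := by rw [hprod]
  rw [hq, hqb]
  -- now congruences
  have hmod1 : EqMod N (pp t (2*n)) (f e) := (f_eqMod_pp he (by omega)).symm
  have hmod2 : EqMod N ((pp t r)⁻¹) ((f e)⁻¹) := by
    apply EqMod.inv hne1 (f_ne_zero he)
    exact (f_eqMod_pp he (m := r) (by omega)).symm
  have hmod3 : EqMod N ((pp t (2*n - r))⁻¹) ((f e)⁻¹) := by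
    apply EqMod.inv hne2 (f_ne_zero he)
    exact (f_eqMod_pp he (m := 2*n - r) (by omega)).symm
  have := (hmod1.mul hmod2).mul hmod3
  apply this.trans
  have hcancel : f e * (f e)⁻¹ = 1 := PowerSeries.mul_inv_cancel _ (f_ne_zero he)
  have : f e * (f e)⁻¹ * (f e)⁻¹ = (f e)⁻¹ := by rw [hcancel, one_mul]
  rw [this]
  exact EqMod.refl _ _

/-- Limit of the sum side of the first Gauss identity. -/
lemma Ss_limit {d N n : ℕ} (hd : 1 ≤ d) (hn : N ≤ n) :
    EqMod N (Ss ((X:R)^d) n) (thS d * (f (2*d))⁻¹) := by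
  have hstep : EqMod N (Ss ((X:R)^d) n)
      (∑ k ∈ Finset.Icc (-(n:ℤ)) n, (X:R)^(d * k.natAbs^2) * (f (2*d))⁻¹) := by
    rw [Ss]
    apply EqMod.sum
    intro k hk
    rw [Finset.mem_Icc] at hk
    have hxp : ((X:R)^d) ^ (k.natAbs^2) = (X:R)^(d * k.natAbs^2) := by
      rw [← pow_mul]
    have ht2 : ((X:R)^d)^2 = (X:R)^(2*d) := by rw [← pow_mul]; ring_nf
    rw [hxp, ht2]
    rcases le_or_gt N (d * k.natAbs^2) with hbig | hsmall
    · exact eqMod_X_pow_mul _ _ hbig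
    · have habs : k.natAbs ≤ n := by omega
      have h1 : k.natAbs ≤ k.natAbs^2 := Nat.le_self_pow (by norm_num) _
      have h2 : k.natAbs^2 ≤ d * k.natAbs^2 := Nat.le_mul_of_pos_left _ hd
      have hq := qz_limit (e := 2*d) (by omega) k habs (N := N - d * k.natAbs^2) (by omega)
      rw [EqMod] at hq ⊢
      rw [← mul_sub]
      obtain ⟨c, hc⟩ := hq
      exact ⟨c, by rw [hc, ← mul_assoc, ← pow_add,
        show d * k.natAbs^2 + (N - d * k.natAbs^2) = N by omega]⟩
  apply hstep.trans
  rw [← Finset.sum_mul]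
  exact (thS_eqMod hd (by omega)).mul (EqMod.refl N ((f (2*d))⁻¹))

/-- Limit of the sum side of the second Gauss identity. -/
lemma Us_limit {d N n : ℕ} (hd : 1 ≤ d) (hn : N ≤ n) :
    EqMod N (Us ((X:R)^d) n) (psS d * (f d)⁻¹) := by
  have hstep : EqMod N (Us ((X:R)^d) n)
      (∑ k ∈ Finset.Icc (-(n:ℤ)) n, (X:R)^(d * tri k) * (f d)⁻¹) := by
    rw [Us]
    apply EqMod.sum
    intro k hk
    rw [Finset.mem_Icc] at hk
    have hxp : ((X:R)^d) ^ (tri k) = (X:R)^(d * tri k) := by rw [← pow_mul]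
    rw [show ((k*(k+1)/2 : ℤ)).toNat = tri k from tri_eq k, hxp]
    rcases le_or_gt N (d * tri k) with hbig | hsmall
    · exact eqMod_X_pow_mul _ _ hbig
    · have habs : k.natAbs ≤ n := by omega
      obtain ⟨hl, hu⟩ := tri_lower k
      have h2 : tri k ≤ d * tri k := Nat.le_mul_of_pos_left _ hd
      have hNk : N - d * tri k ≤ n - k.natAbs + 1 := by omega
      have hq := qz_limit (e := d) hd k habs (N := N - d * tri k) hNk
      rw [EqMod] at hq ⊢
      rw [← mul_sub]
      obtain ⟨c, hc⟩ := hq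
      exact ⟨c, by rw [hc, ← mul_assoc, ← pow_add,
        show d * tri k + (N - d * tri k) = N by omega]⟩
  apply hstep.trans
  rw [← Finset.sum_mul]
  exact (psS_eqMod hd hn).mul (EqMod.refl N ((f d)⁻¹))

/-! ## Product-side limits -/

lemma constantCoeff_prod_one_sub (d : ℕ) (hd : 1 ≤ d) (n c : ℕ) (hc : 1 ≤ c) :
    constantCoeff (R := ℚ) (∏ j ∈ Finset.range n, (1 - ((X:R)^d)^(c*j+1))) = 1 := by
  rw [map_prod]
  apply Finset.prod_eq_one
  intro i _
  rw [map_sub, map_one, ← pow_mul, map_pow, constantCoeff_X, zero_pow (by positivity), sub_zero]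

lemma inv_inv' (a : R) (h : constantCoeff (R := ℚ) a ≠ 0) : a⁻¹⁻¹ = a := by
  have h2 : constantCoeff (R := ℚ) a⁻¹ ≠ 0 := by
    rw [PowerSeries.constantCoeff_inv]
    simpa using h
  rw [eq_comm, PowerSeries.eq_inv_iff_mul_eq_one h2]
  exact PowerSeries.mul_inv_cancel a h

/-- `∏(1 - t^(2j+1)) ≈ f d / f 2d` for `t = X^d`. -/
lemma oddprod_limit {d N n : ℕ} (hd : 1 ≤ d) (hn : N ≤ n) :
    EqMod N (∏ j ∈ Finset.range n, (1 - ((X:R)^d)^(2*j+1))) (f d * (f (2*d))⁻¹) := by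
  set t : R := (X:R)^d with ht
  have interleave : ∀ m : ℕ, (∏ j ∈ Finset.range m, (1 - t^(2*j+1))) * pp (t^2) m
      = pp t (2*m) := by
    intro m
    induction m with
    | zero => simp
    | succ m ih =>
      rw [Finset.prod_range_succ, pp_succ, show 2*(m+1) = (2*m)+1+1 by ring,
        pp_succ, pp_succ, ← ih, ht]
      ring
  have hne : constantCoeff (R := ℚ) (pp (t^2) n) ≠ 0 := by
    rw [show t^2 = (X:R)^(2*d) by rw [ht, ← pow_mul, Nat.mul_comm]]
    exact pp_ne_zero (2*d) n (by omega)
  have hexact : (∏ j ∈ Finset.range n, (1 - t^(2*j+1)))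
      = pp t (2*n) * (pp (t^2) n)⁻¹ := by
    have hc : pp (t^2) n * (pp (t^2) n)⁻¹ = 1 := PowerSeries.mul_inv_cancel _ hne
    calc (∏ j ∈ Finset.range n, (1 - t^(2*j+1)))
        = (∏ j ∈ Finset.range n, (1 - t^(2*j+1))) * (pp (t^2) n * (pp (t^2) n)⁻¹) := by
          rw [hc, mul_one]
      _ = ((∏ j ∈ Finset.range n, (1 - t^(2*j+1))) * pp (t^2) n) * (pp (t^2) n)⁻¹ := by ring
      _ = pp t (2*n) * (pp (t^2) n)⁻¹ := by rw [interleave n]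
  rw [hexact]
  have h1 : EqMod N (pp t (2*n)) (f d) := (f_eqMod_pp hd (by omega)).symm
  have h2 : EqMod N ((pp (t^2) n)⁻¹) ((f (2*d))⁻¹) := by
    apply EqMod.inv hne (f_ne_zero (by omega))
    rw [show t^2 = (X:R)^(2*d) by rw [ht, ← pow_mul, Nat.mul_comm]]
    exact (f_eqMod_pp (by omega) (by omega)).symm
  exact h1.mul h2

/-- `∏(1 + t^(j+1)) ≈ f 2d / f d` for `t = X^d`. -/
lemma evenplus_limit {d N n : ℕ} (hd : 1 ≤ d) (hn : N ≤ n) :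
    EqMod N (∏ j ∈ Finset.range n, (1 + ((X:R)^d)^(j+1))) (f (2*d) * (f d)⁻¹) := by
  set t : R := (X:R)^d with ht
  have key : (∏ j ∈ Finset.range n, (1 + t^(j+1))) * pp t n = pp (t^2) n := by
    rw [pp, pp, ← Finset.prod_mul_distrib]
    apply Finset.prod_congr rfl
    intro j _
    rw [ht]
    ring
  have hne : constantCoeff (R := ℚ) (pp t n) ≠ 0 := pp_ne_zero d n hd
  have hexact : (∏ j ∈ Finset.range n, (1 + t^(j+1))) = pp (t^2) n * (pp t n)⁻¹ := by
    have hc : pp t n * (pp t n)⁻¹ = 1 := PowerSeries.mul_inv_cancel _ hne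
    calc (∏ j ∈ Finset.range n, (1 + t^(j+1)))
        = ((∏ j ∈ Finset.range n, (1 + t^(j+1))) * pp t n) * (pp t n)⁻¹ := by
          rw [mul_assoc, hc, mul_one]
      _ = pp (t^2) n * (pp t n)⁻¹ := by rw [key]
  rw [hexact]
  have h1 : EqMod N (pp (t^2) n) (f (2*d)) := by
    rw [show t^2 = (X:R)^(2*d) by rw [ht, ← pow_mul, Nat.mul_comm]]
    exact (f_eqMod_pp (by omega) (by omega)).symm
  have h2 : EqMod N ((pp t n)⁻¹) ((f d)⁻¹) :=
    EqMod.inv hne (f_ne_zero hd) (f_eqMod_pp hd (by omega)).symm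
  exact h1.mul h2

/-- `∏(1 + t^(2j+1)) ≈ f 2d ^2 / (f d f 4d)` for `t = X^d`. -/
lemma oddplus_limit {d N n : ℕ} (hd : 1 ≤ d) (hn : N ≤ n) :
    EqMod N (∏ j ∈ Finset.range n, (1 + ((X:R)^d)^(2*j+1)))
      ((f (2*d))^2 * (f d)⁻¹ * (f (4*d))⁻¹) := by
  set t : R := (X:R)^d with ht
  have key : (∏ j ∈ Finset.range n, (1 + t^(2*j+1)))
      * (∏ j ∈ Finset.range n, (1 - t^(2*j+1)))
      = ∏ j ∈ Finset.range n, (1 - ((X:R)^(2*d))^(2*j+1)) := by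
    rw [← Finset.prod_mul_distrib]
    apply Finset.prod_congr rfl
    intro j _
    rw [ht, show ((X:R)^(2*d)) = ((X:R)^d)^2 by rw [← pow_mul]; congr 1; ring]
    ring
  have hne : constantCoeff (R := ℚ) (∏ j ∈ Finset.range n, (1 - t^(2*j+1))) ≠ 0 := by
    rw [constantCoeff_prod_one_sub d hd n 2 (by norm_num)]
    norm_num
  have hexact : (∏ j ∈ Finset.range n, (1 + t^(2*j+1)))
      = (∏ j ∈ Finset.range n, (1 - ((X:R)^(2*d))^(2*j+1)))
        * (∏ j ∈ Finset.range n, (1 - t^(2*j+1)))⁻¹ := by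
    have hc : (∏ j ∈ Finset.range n, (1 - t^(2*j+1)))
        * (∏ j ∈ Finset.range n, (1 - t^(2*j+1)))⁻¹ = 1 :=
      PowerSeries.mul_inv_cancel _ hne
    calc (∏ j ∈ Finset.range n, (1 + t^(2*j+1)))
        = ((∏ j ∈ Finset.range n, (1 + t^(2*j+1)))
            * (∏ j ∈ Finset.range n, (1 - t^(2*j+1))))
          * (∏ j ∈ Finset.range n, (1 - t^(2*j+1)))⁻¹ := by
          rw [mul_assoc, hc, mul_one]
      _ = _ := by rw [key]
  rw [hexact]
  have h1 : EqMod N (∏ j ∈ Finset.range n, (1 - ((X:R)^(2*d))^(2*j+1)))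
      (f (2*d) * (f (2*(2*d)))⁻¹) := oddprod_limit (by omega) hn
  have h2 : EqMod N ((∏ j ∈ Finset.range n, (1 - t^(2*j+1)))⁻¹)
      ((f d * (f (2*d))⁻¹)⁻¹) := by
    apply EqMod.inv hne ?_ (oddprod_limit hd hn)
    rw [map_mul, constantCoeff_f hd, PowerSeries.constantCoeff_inv, constantCoeff_f (by omega)]
    norm_num
  have := h1.mul h2
  have heq : f (2*d) * (f (2*(2*d)))⁻¹ * (f d * (f (2*d))⁻¹)⁻¹
      = (f (2*d))^2 * (f d)⁻¹ * (f (4*d))⁻¹ := by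
    rw [PowerSeries.mul_inv_rev, inv_inv' _ (f_ne_zero (by omega)),
      show 2*(2*d) = 4*d by ring]
    ring
  rwa [heq] at this

/-! ## The three key identities -/

lemma L2 {d : ℕ} (hd : 1 ≤ d) : thS d * (f d)^2 * (f (4*d))^2 = (f (2*d))^5 := by
  have c1 : constantCoeff (R := ℚ) (f d) ≠ 0 := f_ne_zero hd
  have c2 : constantCoeff (R := ℚ) (f (2*d)) ≠ 0 := f_ne_zero (by omega)
  have c4 : constantCoeff (R := ℚ) (f (4*d)) ≠ 0 := f_ne_zero (by omega)
  have hinv1 : f d * (f d)⁻¹ = 1 := PowerSeries.mul_inv_cancel _ c1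
  have hinv2 : f (2*d) * (f (2*d))⁻¹ = 1 := PowerSeries.mul_inv_cancel _ c2
  have hinv4 : f (4*d) * (f (4*d))⁻¹ = 1 := PowerSeries.mul_inv_cancel _ c4
  have key : thS d * (f (2*d))⁻¹ = ((f (2*d))^2 * (f d)⁻¹ * (f (4*d))⁻¹)^2 := by
    apply eq_of_eqMod
    intro N
    have h1 := (Ss_limit (d := d) (n := N) hd le_rfl).symm
    apply h1.trans
    rw [Ss_closed, show (∏ j ∈ Finset.range N, (1 + ((X:R)^d)^(2*j+1))^2)
      = (∏ j ∈ Finset.range N, (1 + ((X:R)^d)^(2*j+1)))^2 from Finset.prod_pow _ _ _,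
      pow_two, pow_two]
    exact (oddplus_limit hd le_rfl).mul (oddplus_limit hd le_rfl)
  have hne : (f d)⁻¹^2 * (f (2*d))⁻¹ * (f (4*d))⁻¹^2 ≠ 0 := by
    have n1 : (f d)⁻¹ ≠ 0 := by rw [Ne, PowerSeries.inv_eq_zero]; exact c1
    have n2 : (f (2*d))⁻¹ ≠ 0 := by rw [Ne, PowerSeries.inv_eq_zero]; exact c2
    have n4 : (f (4*d))⁻¹ ≠ 0 := by rw [Ne, PowerSeries.inv_eq_zero]; exact c4
    exact mul_ne_zero (mul_ne_zero (pow_ne_zero _ n1) n2) (pow_ne_zero _ n4)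
  apply mul_right_cancel₀ hne
  calc thS d * (f d)^2 * (f (4*d))^2 * ((f d)⁻¹^2 * (f (2*d))⁻¹ * (f (4*d))⁻¹^2)
      = (thS d * (f (2*d))⁻¹) * (f d * (f d)⁻¹)^2 * (f (4*d) * (f (4*d))⁻¹)^2 := by ring
    _ = ((f (2*d))^2 * (f d)⁻¹ * (f (4*d))⁻¹)^2 := by rw [key, hinv1, hinv4]; ring
    _ = ((f (2*d))^2 * (f d)⁻¹ * (f (4*d))⁻¹)^2 * (f (2*d) * (f (2*d))⁻¹) := by
        rw [hinv2, mul_one]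
    _ = (f (2*d))^5 * ((f d)⁻¹^2 * (f (2*d))⁻¹ * (f (4*d))⁻¹^2) := by ring

lemma L3 {d : ℕ} (hd : 1 ≤ d) : psS d * f d = 2 * (f (2*d))^2 := by
  have c1 : constantCoeff (R := ℚ) (f d) ≠ 0 := f_ne_zero hd
  have hinv1 : f d * (f d)⁻¹ = 1 := PowerSeries.mul_inv_cancel _ c1
  have key : psS d * (f d)⁻¹ = 2 * (f (2*d) * (f d)⁻¹)^2 := by
    apply eq_of_eqMod
    intro N
    have h1 := (Us_limit (d := d) (N := N) (n := N+1) hd (by omega)).symm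
    apply h1.trans
    rw [Us_closed, Finset.prod_mul_distrib,
      Finset.prod_range_succ' (fun j => 1 + ((X:R)^d)^j) N]
    rw [show ((X:R)^d)^(0:ℕ) = 1 from pow_zero _]
    have h2 : (∏ j ∈ Finset.range (N+1), (1 + ((X:R)^d)^(j+1)))
        * ((∏ j ∈ Finset.range N, (1 + ((X:R)^d)^(j+1))) * (1+1))
        = 2 * ((∏ j ∈ Finset.range (N+1), (1 + ((X:R)^d)^(j+1)))
          * (∏ j ∈ Finset.range N, (1 + ((X:R)^d)^(j+1)))) := by ring
    rw [h2, pow_two]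
    have hmul := ((EqMod.refl N (2:R)).mul
        (evenplus_limit (n := N+1) hd (by omega))).mul
      (evenplus_limit (n := N) hd le_rfl)
    simpa only [mul_assoc] using hmul
  have hne : (f d)⁻¹^2 ≠ 0 := by
    have n1 : (f d)⁻¹ ≠ 0 := by rw [Ne, PowerSeries.inv_eq_zero]; exact c1
    exact pow_ne_zero _ n1
  apply mul_right_cancel₀ hne
  calc psS d * f d * (f d)⁻¹^2 = (psS d * (f d)⁻¹) * (f d * (f d)⁻¹) := by ring
    _ = 2 * (f (2*d) * (f d)⁻¹)^2 := by rw [key, hinv1, mul_one]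
    _ = 2 * (f (2*d))^2 * (f d)⁻¹^2 := by ring

/-- The core product identity `f2⁵ f8 f16² = f1² (f8⁶ + 2X f4² f16⁴)`. -/
lemma star : (f 2)^5 * f 8 * (f 16)^2
    = (f 1)^2 * ((f 8)^6 + 2 * X * (f 4)^2 * (f 16)^4) := by
  have h1 : thS 1 * (f 1)^2 * (f 4)^2 = (f 2)^5 := by
    have := L2 (d := 1) le_rfl
    norm_num at this
    exact this
  have h4 : thS 4 * (f 4)^2 * (f 16)^2 = (f 8)^5 := by
    have := L2 (d := 4) (by norm_num)
    norm_num at this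
    exact this
  have h8 : psS 8 * f 8 = 2 * (f 16)^2 := by
    have := L3 (d := 8) (by norm_num)
    norm_num at this
    exact this
  have hsp := thS_split
  linear_combination (-(f 8 * (f 16)^2)) * h1 + ((f 1)^2 * f 8) * h4
    + (X * (f 1)^2 * (f 4)^2 * (f 16)^2) * h8
    + ((f 1)^2 * (f 4)^2 * f 8 * (f 16)^2) * hsp

lemma ne_zero_of_cc {a : R} (h : constantCoeff (R := ℚ) a ≠ 0) : a ≠ 0 := by
  intro hzero
  rw [hzero, map_zero] at h
  exact h rfl

end Diss

open Diss in
/-- $1/f_1^2 = f_8^5/(f_2^5 f_{16}^2) + 2q f_4^2 f_{16}^2/(f_2^5 f_8)$. -/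
theorem dissection_inv_f1_sq :
    ((f 1) ^ 2)⁻¹ =
      (f 8) ^ 5 * ((f 2) ^ 5 * (f 16) ^ 2)⁻¹
        + 2 * PowerSeries.X * (f 4) ^ 2 * (f 16) ^ 2 * ((f 2) ^ 5 * f 8)⁻¹ := by
  have c1 : PowerSeries.constantCoeff (R := ℚ) (f 1) ≠ 0 := f_ne_zero le_rfl
  have c2 : PowerSeries.constantCoeff (R := ℚ) (f 2) ≠ 0 := f_ne_zero (by norm_num)
  have c8 : PowerSeries.constantCoeff (R := ℚ) (f 8) ≠ 0 := f_ne_zero (by norm_num)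
  have c16 : PowerSeries.constantCoeff (R := ℚ) (f 16) ≠ 0 := f_ne_zero (by norm_num)
  have cP : PowerSeries.constantCoeff (R := ℚ) ((f 1)^2) ≠ 0 := by
    rw [map_pow]; exact pow_ne_zero _ c1
  have cB : PowerSeries.constantCoeff (R := ℚ) ((f 2)^5 * (f 16)^2) ≠ 0 := by
    rw [map_mul, map_pow, map_pow]
    exact mul_ne_zero (pow_ne_zero _ c2) (pow_ne_zero _ c16)
  have cD : PowerSeries.constantCoeff (R := ℚ) ((f 2)^5 * f 8) ≠ 0 := by
    rw [map_mul, map_pow]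
    exact mul_ne_zero (pow_ne_zero _ c2) c8
  have hP : (f 1)^2 * ((f 1)^2)⁻¹ = 1 := PowerSeries.mul_inv_cancel _ cP
  have hB : ((f 2)^5 * (f 16)^2) * ((f 2)^5 * (f 16)^2)⁻¹ = 1 :=
    PowerSeries.mul_inv_cancel _ cB
  have hD : ((f 2)^5 * f 8) * ((f 2)^5 * f 8)⁻¹ = 1 := PowerSeries.mul_inv_cancel _ cD
  have hstar := Diss.star
  have hWne : (f 1)^2 * ((f 2)^5 * (f 16)^2) * ((f 2)^5 * f 8) ≠ 0 :=
    mul_ne_zero (mul_ne_zero (ne_zero_of_cc cP) (ne_zero_of_cc cB)) (ne_zero_of_cc cD)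
  apply mul_right_cancel₀ hWne
  linear_combination (((f 2)^5 * (f 16)^2) * ((f 2)^5 * f 8)) * hP
    - ((f 8)^5 * (f 1)^2 * ((f 2)^5 * f 8)) * hB
    - (2 * PowerSeries.X * (f 4)^2 * (f 16)^2 * (f 1)^2 * ((f 2)^5 * (f 16)^2)) * hD
    + ((f 2)^5) * hstar
end

section
/- As formal power series, ∑_{n∈ℤ} q^{n²} = φ(q²⁵) + 2q D(q⁵) + 2q⁴ E(q⁵), where D(q) = ∑_{n∈ℤ} q^{5n²+2n} and E(q) = ∑_{n∈ℤ} q^{5n²+4n}. -/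
open PowerSeries

/-- `phi j` is the theta series `φ(q^j) = ∑_{m ∈ ℤ} q^{j m²}`: the `n`-th
coefficient is the number of integers `m` with `j·m² = n`. -/
noncomputable def phi (j : ℕ) : PowerSeries ℚ :=
  PowerSeries.mk fun n =>
    ((((Finset.Icc (-(n : ℤ)) (n : ℤ))).filter fun m => (j : ℤ) * m ^ 2 = (n : ℤ)).card : ℚ)

/--  is  where . -/
noncomputable def Dth (j : ℕ) : PowerSeries ℚ :=
  PowerSeries.mk fun n =>
    ((((Finset.Icc (-(n : ℤ)) (n : ℤ))).filter
        fun m => (j : ℤ) * (5 * m ^ 2 + 2 * m) = (n : ℤ)).card : ℚ)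

/--  is  where . -/
noncomputable def Eth (j : ℕ) : PowerSeries ℚ :=
  PowerSeries.mk fun n =>
    ((((Finset.Icc (-(n : ℤ)) (n : ℤ))).filter
        fun m => (j : ℤ) * (5 * m ^ 2 + 4 * m) = (n : ℤ)).card : ℚ)

lemma fiber0 (n : ℤ) :
    (((Finset.Icc (-n) n)).filter (fun m => 1 * m ^ 2 = n ∧ m % 5 = 0)).card
      = (((Finset.Icc (-n) n)).filter (fun m => 25 * m ^ 2 = n)).card := by
  apply Finset.card_nbij' (fun m => m / 5) (fun k => 5 * k)
  · intro m hm
    simp only [Finset.mem_filter, Finset.mem_Icc, Finset.mem_coe] at *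
    obtain ⟨⟨h1, h2⟩, he, hr⟩ := hm
    obtain ⟨k, rfl⟩ : ∃ k, m = 5 * k := ⟨m / 5, by omega⟩
    have hk : (5 * k) / 5 = k := by omega
    rw [hk]
    refine ⟨⟨?_, ?_⟩, by linear_combination he⟩ <;>
      rcases le_or_gt 0 k with h | h <;> nlinarith
  · intro k hk
    simp only [Finset.mem_filter, Finset.mem_Icc, Finset.mem_coe] at *
    obtain ⟨⟨h1, h2⟩, he⟩ := hk
    refine ⟨⟨?_, ?_⟩, by linear_combination he, by omega⟩ <;>
      rcases le_or_gt 0 k with h | h <;> nlinarith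
  · intro m hm
    simp only [Finset.mem_filter, Finset.mem_Icc, Finset.mem_coe] at hm ⊢
    omega
  · intro k _
    simp only
    omega

lemma fiber1 (n : ℤ) :
    (((Finset.Icc (-n) n)).filter (fun m => 1 * m ^ 2 = n ∧ m % 5 = 1)).card
      = (((Finset.Icc (-(n-1)) (n-1))).filter (fun k => 5 * (5 * k ^ 2 + 2 * k) = n - 1)).card := by
  apply Finset.card_nbij' (fun m => (m - 1) / 5) (fun k => 5 * k + 1)
  · intro m hm
    simp only [Finset.mem_filter, Finset.mem_Icc, Finset.mem_coe] at *
    obtain ⟨⟨h1, h2⟩, he, hr⟩ := hm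
    obtain ⟨k, rfl⟩ : ∃ k, m = 5 * k + 1 := ⟨(m - 1) / 5, by omega⟩
    have hk : (5 * k + 1 - 1) / 5 = k := by omega
    rw [hk]
    refine ⟨⟨?_, ?_⟩, by linear_combination he⟩ <;>
      rcases le_or_gt 0 k with h | h <;> nlinarith
  · intro k hk
    simp only [Finset.mem_filter, Finset.mem_Icc, Finset.mem_coe] at *
    obtain ⟨⟨h1, h2⟩, he⟩ := hk
    refine ⟨⟨?_, ?_⟩, by linear_combination he, by omega⟩ <;>
      rcases le_or_gt 0 k with h | h <;> nlinarith
  · intro m hm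
    simp only [Finset.mem_filter, Finset.mem_Icc, Finset.mem_coe] at hm ⊢
    omega
  · intro k _
    simp only
    omega

lemma fiber4 (n : ℤ) :
    (((Finset.Icc (-n) n)).filter (fun m => 1 * m ^ 2 = n ∧ m % 5 = 4)).card
      = (((Finset.Icc (-(n-1)) (n-1))).filter (fun k => 5 * (5 * k ^ 2 + 2 * k) = n - 1)).card := by
  apply Finset.card_nbij' (fun m => (-m - 1) / 5) (fun k => -(5 * k + 1))
  · intro m hm
    simp only [Finset.mem_filter, Finset.mem_Icc, Finset.mem_coe] at *
    obtain ⟨⟨h1, h2⟩, he, hr⟩ := hm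
    obtain ⟨k, rfl⟩ : ∃ k, m = -(5 * k + 1) := ⟨(-m - 1) / 5, by omega⟩
    have hk : (-(-(5 * k + 1)) - 1) / 5 = k := by omega
    rw [hk]
    refine ⟨⟨?_, ?_⟩, by linear_combination he⟩ <;>
      rcases le_or_gt 0 k with h | h <;> nlinarith
  · intro k hk
    simp only [Finset.mem_filter, Finset.mem_Icc, Finset.mem_coe] at *
    obtain ⟨⟨h1, h2⟩, he⟩ := hk
    refine ⟨⟨?_, ?_⟩, by linear_combination he, by omega⟩ <;>
      rcases le_or_gt 0 k with h | h <;> nlinarith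
  · intro m hm
    simp only [Finset.mem_filter, Finset.mem_Icc, Finset.mem_coe] at hm ⊢
    omega
  · intro k _
    simp only
    omega

lemma fiber2 (n : ℤ) :
    (((Finset.Icc (-n) n)).filter (fun m => 1 * m ^ 2 = n ∧ m % 5 = 2)).card
      = (((Finset.Icc (-(n-4)) (n-4))).filter (fun k => 5 * (5 * k ^ 2 + 4 * k) = n - 4)).card := by
  apply Finset.card_nbij' (fun m => (m - 2) / 5) (fun k => 5 * k + 2)
  · intro m hm
    simp only [Finset.mem_filter, Finset.mem_Icc, Finset.mem_coe] at *
    obtain ⟨⟨h1, h2⟩, he, hr⟩ := hm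
    obtain ⟨k, rfl⟩ : ∃ k, m = 5 * k + 2 := ⟨(m - 2) / 5, by omega⟩
    have hk : (5 * k + 2 - 2) / 5 = k := by omega
    rw [hk]
    refine ⟨⟨?_, ?_⟩, by linear_combination he⟩ <;>
      rcases le_or_gt 0 k with h | h <;> nlinarith
  · intro k hk
    simp only [Finset.mem_filter, Finset.mem_Icc, Finset.mem_coe] at *
    obtain ⟨⟨h1, h2⟩, he⟩ := hk
    refine ⟨⟨?_, ?_⟩, by linear_combination he, by omega⟩ <;>
      rcases le_or_gt 0 k with h | h <;> nlinarith
  · intro m hm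
    simp only [Finset.mem_filter, Finset.mem_Icc, Finset.mem_coe] at hm ⊢
    omega
  · intro k _
    simp only
    omega

lemma fiber3 (n : ℤ) :
    (((Finset.Icc (-n) n)).filter (fun m => 1 * m ^ 2 = n ∧ m % 5 = 3)).card
      = (((Finset.Icc (-(n-4)) (n-4))).filter (fun k => 5 * (5 * k ^ 2 + 4 * k) = n - 4)).card := by
  apply Finset.card_nbij' (fun m => (-m - 2) / 5) (fun k => -(5 * k + 2))
  · intro m hm
    simp only [Finset.mem_filter, Finset.mem_Icc, Finset.mem_coe] at *
    obtain ⟨⟨h1, h2⟩, he, hr⟩ := hm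
    obtain ⟨k, rfl⟩ : ∃ k, m = -(5 * k + 2) := ⟨(-m - 2) / 5, by omega⟩
    have hk : (-(-(5 * k + 2)) - 2) / 5 = k := by omega
    rw [hk]
    refine ⟨⟨?_, ?_⟩, by linear_combination he⟩ <;>
      rcases le_or_gt 0 k with h | h <;> nlinarith
  · intro k hk
    simp only [Finset.mem_filter, Finset.mem_Icc, Finset.mem_coe] at *
    obtain ⟨⟨h1, h2⟩, he⟩ := hk
    refine ⟨⟨?_, ?_⟩, by linear_combination he, by omega⟩ <;>
      rcases le_or_gt 0 k with h | h <;> nlinarith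
  · intro m hm
    simp only [Finset.mem_filter, Finset.mem_Icc, Finset.mem_coe] at hm ⊢
    omega
  · intro k _
    simp only
    omega

lemma key (n : ℤ) :
    (((Finset.Icc (-n) n)).filter (fun m => 1 * m ^ 2 = n)).card
      = (((Finset.Icc (-n) n)).filter (fun m => 25 * m ^ 2 = n)).card
        + 2 * (((Finset.Icc (-(n-1)) (n-1))).filter
            (fun k => 5 * (5 * k ^ 2 + 2 * k) = n - 1)).card
        + 2 * (((Finset.Icc (-(n-4)) (n-4))).filter
            (fun k => 5 * (5 * k ^ 2 + 4 * k) = n - 4)).card := by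
  have H : (((Finset.Icc (-n) n)).filter (fun m => 1 * m ^ 2 = n)).card
      = ∑ r ∈ ({0, 1, 2, 3, 4} : Finset ℤ),
          ((((Finset.Icc (-n) n)).filter (fun m => 1 * m ^ 2 = n)).filter
            (fun m => m % 5 = r)).card := by
    apply Finset.card_eq_sum_card_fiberwise
    intro x _
    simp only [Finset.mem_insert, Finset.mem_singleton, Finset.mem_coe]
    omega
  rw [H]
  simp only [Finset.filter_filter]
  rw [show ({0, 1, 2, 3, 4} : Finset ℤ) = insert 0 (insert 1 (insert 2 (insert 3 {4}))) from rfl]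
  rw [Finset.sum_insert (by decide), Finset.sum_insert (by decide),
    Finset.sum_insert (by decide), Finset.sum_insert (by decide), Finset.sum_singleton]
  rw [fiber0, fiber1, fiber2, fiber3, fiber4]
  ring

/-- $\varphi(q) = \varphi(q^{25}) + 2q D(q^5) + 2q^4 E(q^5)$. -/
theorem phi_five_dissection :
    phi 1 = phi 25 + 2 * PowerSeries.X * Dth 5
      + 2 * PowerSeries.X ^ 4 * Eth 5 := by
  ext n
  have hX : (2 : ℚ⟦X⟧) * PowerSeries.X * Dth 5 = PowerSeries.X * (Dth 5 + Dth 5) := by ring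
  have hX4 : (2 : ℚ⟦X⟧) * PowerSeries.X ^ 4 * Eth 5 = PowerSeries.X ^ 4 * (Eth 5 + Eth 5) := by
    ring
  rw [hX, hX4, map_add, map_add]
  match n with
  | 0 =>
    simp [phi, Dth, Eth]
  | 1 =>
    rw [show (1 : ℕ) = 0 + 1 from rfl, PowerSeries.coeff_succ_X_mul,
      PowerSeries.coeff_X_pow_mul']
    simp [phi, Dth, Eth]
    norm_cast
  | 2 =>
    rw [show (2 : ℕ) = 1 + 1 from rfl, PowerSeries.coeff_succ_X_mul,
      PowerSeries.coeff_X_pow_mul']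
    simp [phi, Dth, Eth]
    norm_cast
  | 3 =>
    rw [show (3 : ℕ) = 2 + 1 from rfl, PowerSeries.coeff_succ_X_mul,
      PowerSeries.coeff_X_pow_mul']
    simp [phi, Dth, Eth]
    norm_cast
  | (k + 4) =>
    rw [show k + 4 = (k + 3) + 1 from rfl, PowerSeries.coeff_succ_X_mul,
      show k + 3 + 1 = k + 4 from rfl, PowerSeries.coeff_X_pow_mul]
    simp only [phi, Dth, Eth, PowerSeries.coeff_mk, map_add, Nat.cast_one, Nat.cast_ofNat]
    have hk := key ((k : ℤ) + 4)
    have h1 : ((k : ℤ) + 4) - 1 = ((k + 3 : ℕ) : ℤ) := by push_cast; ring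
    have h4 : ((k : ℤ) + 4) - 4 = ((k : ℕ) : ℤ) := by omega
    rw [h1, h4] at hk
    have hcast : (((k + 4 : ℕ) : ℤ)) = (k : ℤ) + 4 := by push_cast; ring
    rw [show (-(((k + 4 : ℕ)) : ℤ)) = -((k : ℤ) + 4) from by rw [hcast]]
    rw [hcast]
    rw [hk]
    push_cast
    ring
end

section
/- As formal power series over ℤ, (−q; −q)_∞ = f₂³ / (f₁ f₄), where (−q;−q)_∞ = ∏_{k≥1}(1 − (−q)ᵏ). -/
open PowerSeries

/-- `fZ m = ∏_{k ≥ 1} (1 - q^{m k})` as a formal power series over ℤ. -/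
noncomputable def fZ (m : ℕ) : PowerSeries ℤ :=
  PowerSeries.mk fun n => PowerSeries.coeff (R := ℤ) n
    (∏ k ∈ Finset.range (n + 1), (1 - (PowerSeries.X : PowerSeries ℤ) ^ (m * (k + 1))))

/-- `(-q; -q)_∞ = ∏_{k ≥ 1} (1 - (-q)^k)` over ℤ. -/
noncomputable def negq : PowerSeries ℤ :=
  PowerSeries.mk fun n => PowerSeries.coeff (R := ℤ) n
    (∏ k ∈ Finset.range (n + 1), (1 - (-(PowerSeries.X : PowerSeries ℤ)) ^ (k + 1)))

/-- Truncated product `∏_{k<N} (1 - X^{m(k+1)})`. -/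
noncomputable def PP (m N : ℕ) : PowerSeries ℤ :=
  ∏ k ∈ Finset.range N, (1 - (PowerSeries.X : PowerSeries ℤ) ^ (m * (k + 1)))

/-- Truncated product `∏_{k<N} (1 - (-X)^{k+1})`. -/
noncomputable def QQ (N : ℕ) : PowerSeries ℤ :=
  ∏ k ∈ Finset.range N, (1 - (-(PowerSeries.X : PowerSeries ℤ)) ^ (k + 1))

lemma PP_succ (m N : ℕ) :
    PP m (N + 1) = PP m N * (1 - (PowerSeries.X : PowerSeries ℤ) ^ (m * (N + 1))) :=
  Finset.prod_range_succ _ _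

lemma QQ_succ (N : ℕ) :
    QQ (N + 1) = QQ N * (1 - (-(PowerSeries.X : PowerSeries ℤ)) ^ (N + 1)) :=
  Finset.prod_range_succ _ _

/-- Coefficients agree up to degree `n`. -/
def Req (n : ℕ) (a b : PowerSeries ℤ) : Prop :=
  ∀ i, i ≤ n → PowerSeries.coeff (R := ℤ) i a = PowerSeries.coeff (R := ℤ) i b

lemma Req.refl (n : ℕ) (a : PowerSeries ℤ) : Req n a a := fun _ _ => rfl

lemma Req.mul {n : ℕ} {a b c d : PowerSeries ℤ} (h1 : Req n a b) (h2 : Req n c d) :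
    Req n (a * c) (b * d) := by
  intro i hi
  rw [PowerSeries.coeff_mul, PowerSeries.coeff_mul]
  refine Finset.sum_congr rfl fun p hp => ?_
  rw [Finset.HasAntidiagonal.mem_antidiagonal] at hp
  rw [h1 p.1 (by omega), h2 p.2 (by omega)]

lemma Req_one_sub_X_pow {n d : ℕ} (h : n < d) :
    Req n (1 - (PowerSeries.X : PowerSeries ℤ) ^ d) 1 := by
  intro i hi
  rw [map_sub, PowerSeries.coeff_X_pow, if_neg (by omega), sub_zero]

lemma Req_one_sub_negX_pow {n d : ℕ} (h : n < d) :
    Req n (1 - (-(PowerSeries.X : PowerSeries ℤ)) ^ d) 1 := by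
  intro i hi
  rcases Nat.even_or_odd d with he | ho
  · rw [he.neg_pow]
    exact Req_one_sub_X_pow h i hi
  · rw [ho.neg_pow, sub_neg_eq_add, map_add, PowerSeries.coeff_X_pow,
      if_neg (by omega), add_zero]

lemma Req_prod_one {n : ℕ} {s : Finset ℕ} {f : ℕ → PowerSeries ℤ}
    (h : ∀ k ∈ s, Req n (f k) 1) : Req n (∏ k ∈ s, f k) 1 := by
  classical
  induction s using Finset.induction with
  | empty => simpa using Req.refl n 1
  | @insert a s' hk ih =>
      rw [Finset.prod_insert hk]
      have := (h a (Finset.mem_insert_self a s')).mul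
        (ih fun k hks => h k (Finset.mem_insert_of_mem hks))
      simpa using this

lemma coeff_PP_stable {m i N : ℕ} (hm : 0 < m) (h : i < N) :
    PowerSeries.coeff (R := ℤ) i (PP m N) = PowerSeries.coeff (R := ℤ) i (PP m (i + 1)) := by
  have hN : N = (i + 1) + (N - (i + 1)) := by omega
  rw [hN]
  clear hN h
  induction N - (i + 1) with
  | zero => rfl
  | succ t ih =>
      rw [show i + 1 + (t + 1) = (i + 1 + t) + 1 from rfl, PP_succ]
      have h1 : Req i (PP m (i + 1 + t)) (PP m (i + 1 + t)) := Req.refl _ _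
      have h2 : Req i (1 - (PowerSeries.X : PowerSeries ℤ) ^ (m * (i + 1 + t + 1))) 1 :=
        Req_one_sub_X_pow (by nlinarith)
      have := (h1.mul h2) i le_rfl
      rw [this, mul_one, ih]

lemma coeff_QQ_stable {i N : ℕ} (h : i < N) :
    PowerSeries.coeff (R := ℤ) i (QQ N) = PowerSeries.coeff (R := ℤ) i (QQ (i + 1)) := by
  have hN : N = (i + 1) + (N - (i + 1)) := by omega
  rw [hN]
  clear hN h
  induction N - (i + 1) with
  | zero => rfl
  | succ t ih =>
      rw [show i + 1 + (t + 1) = (i + 1 + t) + 1 from rfl, QQ_succ]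
      have h2 : Req i (1 - (-(PowerSeries.X : PowerSeries ℤ)) ^ (i + 1 + t + 1)) 1 :=
        Req_one_sub_negX_pow (by omega)
      have := ((Req.refl i (QQ (i + 1 + t))).mul h2) i le_rfl
      rw [this, mul_one, ih]

lemma coeff_PP_fZ {m i N : ℕ} (hm : 0 < m) (h : i < N) :
    PowerSeries.coeff (R := ℤ) i (PP m N) = PowerSeries.coeff (R := ℤ) i (fZ m) := by
  rw [coeff_PP_stable hm h, fZ, PowerSeries.coeff_mk]
  rfl

lemma coeff_QQ_negq {i N : ℕ} (h : i < N) :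
    PowerSeries.coeff (R := ℤ) i (QQ N) = PowerSeries.coeff (R := ℤ) i negq := by
  rw [coeff_QQ_stable h, negq, PowerSeries.coeff_mk]
  rfl

/-- The key finite product identity. -/
lemma key_s14 (M : ℕ) : QQ (2 * M) * (PP 1 (2 * M) * PP 4 M) = PP 2 M ^ 2 * PP 2 (2 * M) := by
  induction M with
  | zero => simp [PP, QQ]
  | succ M ih =>
      have e1 : 2 * (M + 1) = (2 * M + 1) + 1 := by ring
      rw [e1, QQ_succ, QQ_succ, PP_succ 1, PP_succ 1, PP_succ 4, PP_succ 2 M,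
        PP_succ 2 (2 * M + 1), PP_succ 2 (2 * M)]
      have hodd : (-(PowerSeries.X : PowerSeries ℤ)) ^ (2 * M + 1) =
          -((PowerSeries.X : PowerSeries ℤ) ^ (2 * M + 1)) :=
        Odd.neg_pow ⟨M, by ring⟩ _
      have heven : (-(PowerSeries.X : PowerSeries ℤ)) ^ (2 * M + 1 + 1) =
          (PowerSeries.X : PowerSeries ℤ) ^ (2 * M + 1 + 1) :=
        Even.neg_pow ⟨M + 1, by ring⟩ _
      rw [hodd, heven]
      linear_combination ((1 - (PowerSeries.X : PowerSeries ℤ) ^ (2 * M + 1 + 1)) ^ 2 *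
        (1 - ((PowerSeries.X : PowerSeries ℤ) ^ (2 * M + 1)) ^ 2) *
        (1 - (PowerSeries.X : PowerSeries ℤ) ^ (4 * (M + 1)))) * ih

lemma constantCoeff_fZ {m : ℕ} (hm : 0 < m) : PowerSeries.constantCoeff (R := ℤ) (fZ m) = 1 := by
  · rw [← PowerSeries.coeff_zero_eq_constantCoeff_apply, ← coeff_PP_fZ hm (Nat.zero_lt_one),
      PP]
    have : Req 0 (∏ k ∈ Finset.range 1, (1 - (PowerSeries.X : PowerSeries ℤ) ^ (m * (k + 1)))) 1 := by
      refine Req_prod_one fun k _ => Req_one_sub_X_pow ?_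
      nlinarith
    rw [this 0 le_rfl]
    simp

lemma main_identity : negq * (fZ 1 * fZ 4) = fZ 2 ^ 3 := by
  ext n
  set M := n + 1 with hM
  have h1 : Req n negq (QQ (2 * M)) := fun i hi => (coeff_QQ_negq (by omega)).symm
  have h2 : Req n (fZ 1) (PP 1 (2 * M)) := fun i hi => (coeff_PP_fZ (by omega) (by omega)).symm
  have h3 : Req n (fZ 4) (PP 4 M) := fun i hi => (coeff_PP_fZ (by omega) (by omega)).symm
  have hL := (h1.mul (h2.mul h3)) n le_rfl
  rw [hL, key_s14 M]
  have h4 : Req n (PP 2 M) (fZ 2) := fun i hi => coeff_PP_fZ (by omega) (by omega)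
  have e1 : PP 2 M ^ 2 * PP 2 (2 * M) = PP 2 M * PP 2 M * PP 2 (2 * M) := by ring
  have e2 : fZ 2 ^ 3 = fZ 2 * fZ 2 * fZ 2 := by ring
  have h5 : Req n (PP 2 (2 * M)) (fZ 2) := fun i hi => coeff_PP_fZ (by omega) (by omega)
  rw [e1, e2]
  exact ((h4.mul h4).mul h5) n le_rfl

/-- \$(-q;-q)_\infty = f_2^3/(f_1 f_4)\$ over ℤ; since `f_1 f_4` has constant
term 1 it is a unit and `Ring.inverse` gives its genuine inverse. -/
theorem negq_eta_quotient :
    negq = (fZ 2) ^ 3 * Ring.inverse (fZ 1 * fZ 4) := by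
  have hu : IsUnit (fZ 1 * fZ 4) := by
    rw [PowerSeries.isUnit_iff_constantCoeff, map_mul, constantCoeff_fZ one_pos, constantCoeff_fZ (by omega),
      mul_one]
    exact isUnit_one
  calc negq = negq * ((fZ 1 * fZ 4) * Ring.inverse (fZ 1 * fZ 4)) := by
        rw [Ring.mul_inverse_cancel _ hu, mul_one]
    _ = (negq * (fZ 1 * fZ 4)) * Ring.inverse (fZ 1 * fZ 4) := by ring
    _ = (fZ 2) ^ 3 * Ring.inverse (fZ 1 * fZ 4) := by rw [main_identity]
end
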